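/- arXiv:2103.11605 — 5 statements merged into one kernel-verified Lean document; each statement's English description precedes it below -/
import Mathlib

section
/- Let p ≥ 2, c ≥ 1 be integers and b = pc − 1. Let 0 = s_0 < s_1 < ⋯ < s_k < n and set s_{k+1} := n. Then the probability that the set of d′-descents of the (b,n,p)-shuffle equals {s_1,…,s_k} is P′(s_1,…,s_k) = b^{−n} · det( f′(i,j) )_{i,j = 0,…,k}, where f′(i,j) = binom(s_{j+1} − s_i + b − 1, b − 1) for 0 ≤ i ≤ k and 0 ≤ j ≤ k−1, and f′(i,k) = binom(n − s_i + b − c, b − c) for 0 ≤ i ≤ k. -/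
open scoped Classical

noncomputable section

/-- Binomial coefficient with integer top, taken to be `0` when the top is negative
(so in particular `zchoose a r = 0` whenever `a < r`). -/
def zchoose (a : ℤ) (r : ℕ) : ℕ := if 0 ≤ a then a.toNat.choose r else 0

/-- Rank of a color `r ∈ Z_p` in the order `0, p-1, p-2, …, 1` used to define
the linear order on `Σ = {1,…,n} × Z_p`. -/
def rho (p : ℕ) (r : ZMod p) : ℕ := if r = 0 then 0 else p - r.val

/-- The linear order on `Σ`: `(i,r) < (j,s)` iff the color of `r` comes strictly earlier
(in the order `0, p-1, …, 1`), or the colors agree and `i < j`. -/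
def sigmaLt (p : ℕ) (x y : ℕ × ZMod p) : Prop :=
  rho p x.2 < rho p y.2 ∨ (rho p x.2 = rho p y.2 ∧ x.1 < y.1)

/-- The position part of the `(b,n,p)`-shuffle determined by labels `A`:
`σ(i) = #{j : A j < A i, or A j = A i and j ≤ i}`. -/
def shufflePos {n b : ℕ} (A : Fin n → Fin b) (i : Fin n) : ℕ :=
  (Finset.univ.filter fun j : Fin n => A j < A i ∨ (A j = A i ∧ j ≤ i)).card

/-- The color part of the `(b,n,p)`-shuffle determined by labels `A`: `σ_c(i) = A i mod p`. -/
def shuffleCol (p : ℕ) {n b : ℕ} (A : Fin n → Fin b) (i : Fin n) : ZMod p :=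
  ((A i : ℕ) : ZMod p)

/-- The pair `(σ(i), σ_c(i))` of the `(b,n,p)`-shuffle determined by labels `A`. -/
def shufflePair (p : ℕ) {n b : ℕ} (A : Fin n → Fin b) (i : Fin n) : ℕ × ZMod p :=
  (shufflePos A i, shuffleCol p A i)

/-- The shuffle `π[A]` has a d-descent at position `i+1` (positions are `1,…,n`):
for positions `< n` this means `(σ(i),σ_c(i)) > (σ(i+1),σ_c(i+1))`,
and at position `n` it means `σ_c(n) ≠ 0`. -/
def shuffleHasDDescentAt (p : ℕ) {n b : ℕ} (A : Fin n → Fin b) (i : Fin n) : Prop :=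
  if h : (i : ℕ) + 1 < n then
    sigmaLt p (shufflePair p A ⟨(i : ℕ) + 1, h⟩) (shufflePair p A i)
  else shuffleCol p A i ≠ 0

/-- The set of d-descent positions (a subset of `{1,…,n}`) of the shuffle `π[A]`. -/
def shuffleDDescentSet (p : ℕ) {n b : ℕ} (A : Fin n → Fin b) : Finset ℕ :=
  (Finset.univ.filter fun i : Fin n => shuffleHasDDescentAt p A i).image fun i => (i : ℕ) + 1


/-- The dash order on `Σ`: `(i,r) <′ (j,s)` iff `r < s` (colors in the order `0,1,…,p-1`),
or `r = s` and `i < j`. -/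
def sigmaLt' {p : ℕ} (x y : ℕ × ZMod p) : Prop :=
  x.2.val < y.2.val ∨ (x.2 = y.2 ∧ x.1 < y.1)

/-- The shuffle `π[A]` has a d′-descent at position `i+1` (positions are `1,…,n`):
for positions `< n` this means `(σ(i),σ_c(i)) >′ (σ(i+1),σ_c(i+1))`,
and at position `n` it means `σ_c(n) = p - 1`. -/
def shuffleHasD'DescentAt (p : ℕ) {n b : ℕ} (A : Fin n → Fin b) (i : Fin n) : Prop :=
  if h : (i : ℕ) + 1 < n then
    sigmaLt' (shufflePair p A ⟨(i : ℕ) + 1, h⟩) (shufflePair p A i)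
  else shuffleCol p A i = ((p - 1 : ℕ) : ZMod p)

/-- The set of d′-descent positions (a subset of `{1,…,n}`) of the shuffle `π[A]`. -/
def shuffleD'DescentSet (p : ℕ) {n b : ℕ} (A : Fin n → Fin b) : Finset ℕ :=
  (Finset.univ.filter fun i : Fin n => shuffleHasD'DescentAt p A i).image fun i => (i : ℕ) + 1


namespace S2
open Finset

lemma zchoose_natCast (x r : ℕ) : zchoose (x : ℤ) r = x.choose r := by
  simp [zchoose]

lemma zchoose_eq_zero {a : ℤ} {r : ℕ} (h : a < (r : ℤ)) : zchoose a r = 0 := by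
  unfold zchoose
  split
  · exact Nat.choose_eq_zero_of_lt (by omega)
  · rfl

lemma strictMono_gap {ℓ M : ℕ} {h : Fin ℓ → Fin M} (hh : StrictMono h) :
    ∀ (d : ℕ) (i j : Fin ℓ), (j : ℕ) = (i : ℕ) + d → (h i : ℕ) + d ≤ (h j : ℕ) := by
  intro d
  induction d with
  | zero =>
    intro i j hij
    have : i = j := Fin.ext (by omega)
    simp [this]
  | succ d ih =>
    intro i j hij
    have hd : (i : ℕ) + d < ℓ := by have := j.isLt; omega
    have h1 := ih i ⟨(i : ℕ) + d, hd⟩ rfl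
    have h2 : h ⟨(i : ℕ) + d, hd⟩ < h j := hh (by simp [Fin.lt_def]; omega)
    have h3 := Fin.lt_def.mp h2
    omega

lemma card_monotone (ℓ m₀ : ℕ) :
    (univ.filter fun f : Fin ℓ → Fin (m₀ + 1) => Monotone f).card = (m₀ + ℓ).choose ℓ := by
  have hcard : (univ : Finset (Fin (m₀ + ℓ))).card = m₀ + ℓ := by simp
  rw [← hcard, ← Finset.card_powersetCard ℓ (univ : Finset (Fin (m₀ + ℓ)))]
  have hbound : ∀ (f : Fin ℓ → Fin (m₀ + 1)) (i : Fin ℓ), (f i : ℕ) + (i : ℕ) < m₀ + ℓ := by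
    intro f i; have := (f i).isLt; have := i.isLt; omega
  set g : (Fin ℓ → Fin (m₀ + 1)) → (Fin ℓ → Fin (m₀ + ℓ)) :=
    fun f i => ⟨(f i : ℕ) + (i : ℕ), hbound f i⟩ with hg
  have hgsm : ∀ f : Fin ℓ → Fin (m₀ + 1), Monotone f → StrictMono (g f) := by
    intro f hf i j hij
    have h1 : f i ≤ f j := hf (le_of_lt hij)
    have h2 := Fin.le_def.mp h1
    have h3 := Fin.lt_def.mp hij
    exact Fin.lt_def.mpr (by simp [hg]; omega)
  apply Finset.card_bij (fun f _ => Finset.image (g f) univ)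
  · intro f hf
    simp only [mem_filter] at hf
    rw [Finset.mem_powersetCard_univ]
    rw [Finset.card_image_of_injective _ (hgsm f hf.2).injective]
    simp
  · intro f₁ hf₁ f₂ hf₂ heq
    simp only [mem_filter] at hf₁ hf₂
    have hc : (Finset.image (g f₁) univ).card = ℓ := by
      rw [Finset.card_image_of_injective _ (hgsm f₁ hf₁.2).injective]; simp
    have e₁ : g f₁ = (Finset.image (g f₁) univ).orderEmbOfFin hc := by
      apply orderEmbOfFin_unique hc (fun x => Finset.mem_image_of_mem _ (mem_univ x)) (hgsm f₁ hf₁.2)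
    have e₂ : g f₂ = (Finset.image (g f₁) univ).orderEmbOfFin hc := by
      apply orderEmbOfFin_unique hc (fun x => by rw [heq]; exact Finset.mem_image_of_mem _ (mem_univ x)) (hgsm f₂ hf₂.2)
    funext i
    have : g f₁ i = g f₂ i := by rw [e₁, e₂]
    have := Fin.val_eq_val .. |>.mpr this
    simp only [hg] at this
    exact Fin.ext (by omega)
  · intro t ht
    rw [Finset.mem_powersetCard_univ] at ht
    set e := t.orderEmbOfFin ht with he
    have hesm : StrictMono e := (OrderEmbedding.strictMono _)
    have hgap := strictMono_gap hesm
    have hlow : ∀ i : Fin ℓ, (i : ℕ) ≤ (e i : ℕ) := by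
      intro i
      have h0 : (0 : ℕ) < ℓ := i.pos
      have := hgap (i : ℕ) ⟨0, h0⟩ i (by simp)
      omega
    have hup : ∀ i : Fin ℓ, (e i : ℕ) ≤ m₀ + (i : ℕ) := by
      intro i
      have h0 : ℓ - 1 < ℓ := by have := i.pos; omega
      have := hgap (ℓ - 1 - (i : ℕ)) i ⟨ℓ - 1, h0⟩ (by have := i.isLt; simp; omega)
      have := (e ⟨ℓ - 1, h0⟩).isLt
      omega
    refine ⟨fun i => ⟨(e i : ℕ) - (i : ℕ), by have := hup i; omega⟩, ?_, ?_⟩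
    · simp only [mem_filter, mem_univ, true_and]
      intro i j hij
      have hij' := Fin.le_def.mp hij
      have := hgap ((j : ℕ) - (i : ℕ)) i j (by omega)
      exact Fin.le_def.mpr (by simp; omega)
    · have hge : g (fun i => ⟨(e i : ℕ) - (i : ℕ), by have := hup i; omega⟩) = fun i => e i := by
        funext i
        exact Fin.ext (by simp [hg]; have := hlow i; omega)
      rw [hge]
      apply Finset.coe_injective
      push_cast
      rw [Set.image_univ]
      exact Finset.range_orderEmbOfFin t ht


/-! ### Descent counting for ordinary sequences -/

/-- `B` has a descent at position `i+1` (i.e. `B (i+1) < B i`, positions `1,…,n-1`). -/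
def dAt {b n : ℕ} (B : Fin n → Fin b) (i : ℕ) : Prop :=
  ∃ h : i + 1 < n, B ⟨i + 1, h⟩ < B ⟨i, Nat.lt_of_succ_lt h⟩

lemma dAt_iff {b n : ℕ} (B : Fin n → Fin b) (i : ℕ) (h : i + 1 < n) :
    dAt B i ↔ B ⟨i + 1, h⟩ < B ⟨i, Nat.lt_of_succ_lt h⟩ :=
  ⟨fun ⟨_, hx⟩ => hx, fun hx => ⟨h, hx⟩⟩

/-- interior descent set of `B` is exactly `S`. -/
def ED {b : ℕ} (n : ℕ) (S : Finset ℕ) (B : Fin n → Fin b) : Prop :=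
  ∀ i : ℕ, i + 1 < n → (dAt B i ↔ (i + 1) ∈ S)

/-- tail condition `Q` on the last value of `B`. -/
def lastQ {b : ℕ} (n : ℕ) (Q : Fin b → Prop) (B : Fin n → Fin b) : Prop :=
  ∀ i : Fin n, (i : ℕ) = n - 1 → Q (B i)

def cnt (b n : ℕ) (S : Finset ℕ) (Q : Fin b → Prop) : ℕ :=
  (Finset.univ.filter fun B : Fin n → Fin b => ED n S B ∧ lastQ n Q B).card

lemma ED_empty_iff_monotone {b n : ℕ} (B : Fin n → Fin b) :
    ED n (∅ : Finset ℕ) B ↔ Monotone B := by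
  constructor
  · intro h
    cases n with
    | zero => intro i; exact absurd i.isLt (by omega)
    | succ n =>
      rw [Fin.monotone_iff_le_succ]
      intro i
      have h2 := h (i : ℕ) (by simpa using i.isLt)
      simp only [Finset.notMem_empty, iff_false] at h2
      rw [dAt_iff B (i : ℕ) (by simpa using i.isLt)] at h2
      rw [not_lt] at h2
      convert h2 using 2 <;> exact Fin.ext (by simp)
  · intro h i hi
    simp only [Finset.notMem_empty, iff_false]
    rw [dAt_iff B i hi, not_lt]
    exact h (Fin.le_def.mpr (by simp))

lemma cnt_zero (b : ℕ) (Q : Fin b → Prop) : cnt b 0 ∅ Q = 1 := by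
  rw [cnt]
  rw [Finset.filter_true_of_mem]
  · simp
  · intro B _
    constructor
    · intro i h; exact absurd h (by omega)
    · intro i; exact absurd i.isLt (by omega)

/-- count with trivial tail condition: monotone functions -/
lemma cnt_empty_true (b₀ n : ℕ) :
    cnt (b₀ + 1) n ∅ (fun _ => True) = (b₀ + n).choose n := by
  rw [cnt, ← card_monotone n b₀]
  congr 1
  ext B
  simp [ED_empty_iff_monotone, lastQ]

/-- count with tail bound `< m+1`, `m + 1 ≤ b` : monotone functions into the first `m+1` values -/
lemma cnt_empty_bdd (b m n : ℕ) (hm : m + 1 ≤ b) (hn : 1 ≤ n) :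
    cnt b n ∅ (fun x => (x : ℕ) < m + 1) = (m + n).choose n := by
  rw [cnt, ← card_monotone n m]
  apply Finset.card_bij (fun (B : Fin n → Fin b) hB =>
    fun i : Fin n => (⟨min (B i : ℕ) m, by omega⟩ : Fin (m + 1)))
  · intro B hB
    simp only [Finset.mem_filter, Finset.mem_univ, true_and] at hB ⊢
    obtain ⟨hB1, hB2⟩ := hB
    have hmono : Monotone B := (ED_empty_iff_monotone B).mp hB1
    intro i j hij
    have := Fin.le_def.mp (hmono hij)
    exact Fin.le_def.mpr (by simp; omega)
  · intro B₁ hB₁ B₂ hB₂ heq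
    simp only [Finset.mem_filter, Finset.mem_univ, true_and] at hB₁ hB₂
    have hbd : ∀ (B : Fin n → Fin b), ED n ∅ B → lastQ n (fun x => (x : ℕ) < m + 1) B →
        ∀ i, (B i : ℕ) ≤ m := by
      intro B h1 h2 i
      have hmono := (ED_empty_iff_monotone B).mp h1
      have h3 := h2 ⟨n - 1, by omega⟩ rfl
      have h4 := Fin.le_def.mp (hmono (show i ≤ ⟨n - 1, by omega⟩ from Fin.le_def.mpr (by simp; omega)))
      omega
    funext i
    have heqi := congrFun heq i
    have h1 := hbd B₁ hB₁.1 hB₁.2 i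
    have h2 := hbd B₂ hB₂.1 hB₂.2 i
    have := Fin.val_eq_val .. |>.mpr heqi
    simp only at this
    exact Fin.ext (by omega)
  · intro f hf
    simp only [Finset.mem_filter, Finset.mem_univ, true_and] at hf
    refine ⟨fun i => ⟨(f i : ℕ), by have := (f i).isLt; omega⟩, ?_, ?_⟩
    · simp only [Finset.mem_filter, Finset.mem_univ, true_and]
      constructor
      · rw [ED_empty_iff_monotone]
        intro i j hij
        exact Fin.le_def.mpr (by simpa using Fin.le_def.mp (hf hij))
      · intro i _; have := (f i).isLt; simpa using this
    · funext i
      exact Fin.ext (by have := (f i).isLt; simp; omega)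

/-! ### The splitting lemma -/

lemma dAt_append_left {b a d : ℕ} (B₁ : Fin a → Fin b) (B₂ : Fin d → Fin b)
    (i : ℕ) (h : i + 1 < a) :
    dAt (Fin.append B₁ B₂) i ↔ dAt B₁ i := by
  rw [dAt_iff _ i (show i + 1 < a + d by omega), dAt_iff _ i h]
  have e1 : (⟨i + 1, show i + 1 < a + d by omega⟩ : Fin (a + d))
      = Fin.castAdd d ⟨i + 1, h⟩ := Fin.ext rfl
  have e2 : (⟨i, Nat.lt_of_succ_lt (show i + 1 < a + d by omega)⟩ : Fin (a + d))
      = Fin.castAdd d ⟨i, Nat.lt_of_succ_lt h⟩ := Fin.ext rfl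
  rw [e1, e2, Fin.append_left, Fin.append_left]

lemma dAt_append_right {b a d : ℕ} (B₁ : Fin a → Fin b) (B₂ : Fin d → Fin b)
    (i : ℕ) (hai : a ≤ i) (h : i + 1 < a + d) :
    dAt (Fin.append B₁ B₂) i ↔ dAt B₂ (i - a) := by
  rw [dAt_iff _ i h, dAt_iff _ (i - a) (show i - a + 1 < d by omega)]
  have e1 : (⟨i + 1, h⟩ : Fin (a + d))
      = Fin.natAdd a ⟨i - a + 1, show i - a + 1 < d by omega⟩ := Fin.ext (by simp; omega)
  have e2 : (⟨i, Nat.lt_of_succ_lt h⟩ : Fin (a + d))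
      = Fin.natAdd a ⟨i - a, by omega⟩ := Fin.ext (by simp; omega)
  rw [e1, e2, Fin.append_right, Fin.append_right]

lemma lastQ_append {b a d : ℕ} (hd : 1 ≤ d) (Q : Fin b → Prop)
    (B₁ : Fin a → Fin b) (B₂ : Fin d → Fin b) :
    lastQ (a + d) Q (Fin.append B₁ B₂) ↔ lastQ d Q B₂ := by
  have e : (⟨a + d - 1, by omega⟩ : Fin (a + d)) = Fin.natAdd a ⟨d - 1, by omega⟩ :=
    Fin.ext (by simp; omega)
  constructor
  · intro h j hj
    have h2 := h ⟨a + d - 1, by omega⟩ rfl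
    rw [e, Fin.append_right] at h2
    have : j = ⟨d - 1, by omega⟩ := Fin.ext hj
    rw [this]
    exact h2
  · intro h i hi
    have hieq : i = ⟨a + d - 1, by omega⟩ := Fin.ext hi
    rw [hieq, e, Fin.append_right]
    exact h _ rfl

lemma split (b a d : ℕ) (ha : 1 ≤ a) (hd : 1 ≤ d) (S : Finset ℕ)
    (hS : ∀ x ∈ S, x < a) (Q : Fin b → Prop) :
    cnt b a S (fun _ => True) * cnt b d ∅ Q
      = cnt b (a + d) S Q + cnt b (a + d) (insert a S) Q := by
  classical
  have haS : a ∉ S := fun hx => absurd (hS a hx) (by omega)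
  have ha1 : a - 1 + 1 = a := by omega
  set CC : (Fin (a + d) → Fin b) → Prop := fun B =>
    (∀ i : ℕ, i + 1 < a + d → i + 1 ≠ a → (dAt B i ↔ (i + 1) ∈ S)) ∧
      lastQ (a + d) Q B with hCC
  -- Step 1 : the combined count splits according to whether there is a descent at `a`
  have step1 : (Finset.univ.filter CC).card
      = cnt b (a + d) S Q + cnt b (a + d) (insert a S) Q := by
    rw [← Finset.card_filter_add_card_filter_not
      (s := Finset.univ.filter CC) (fun B => dAt B (a - 1)), add_comm]
    congr 1
    · -- no descent at `a` : exact descent set `S`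
      rw [cnt, Finset.filter_filter]
      congr 1
      ext B
      simp only [Finset.mem_filter, Finset.mem_univ, true_and]
      simp only [hCC, ED]
      constructor
      · rintro ⟨h1, h2⟩
        refine ⟨?_, h1.2⟩
        intro i hi
        by_cases hia : i + 1 = a
        · have hieq : i = a - 1 := by omega
          subst hieq
          rw [ha1]
          exact iff_of_false h2 haS
        · exact h1.1 i hi hia
      · rintro ⟨h1, h2⟩
        refine ⟨⟨?_, h2⟩, ?_⟩
        · intro i hi hne
          exact h1 i hi
        · intro hdd
          have h4 := (h1 (a - 1) (by omega)).mp hdd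
          rw [ha1] at h4
          exact haS h4
    · -- descent at `a` : exact descent set `insert a S`
      rw [cnt, Finset.filter_filter]
      congr 1
      ext B
      simp only [Finset.mem_filter, Finset.mem_univ, true_and]
      simp only [hCC, ED]
      constructor
      · rintro ⟨h1, h2⟩
        refine ⟨?_, h1.2⟩
        intro i hi
        by_cases hia : i + 1 = a
        · have hieq : i = a - 1 := by omega
          subst hieq
          rw [ha1]
          exact iff_of_true h2 (Finset.mem_insert_self a S)
        · rw [h1.1 i hi hia, Finset.mem_insert]
          exact ⟨fun hx => Or.inr hx, fun hor => hor.resolve_left hia⟩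
      · rintro ⟨h1, h2⟩
        refine ⟨⟨?_, h2⟩, ?_⟩
        · intro i hi hne
          rw [h1 i hi, Finset.mem_insert]
          exact ⟨fun hor => hor.resolve_left hne, Or.inr⟩
        · have h4 := h1 (a - 1) (by omega)
          rw [ha1] at h4
          rw [h4]
          exact Finset.mem_insert_self a S
  -- Step 2 : the combined count is a product
  rw [← step1]
  set E : ((Fin a → Fin b) × (Fin d → Fin b)) ≃ (Fin (a + d) → Fin b) :=
    { toFun := fun x => Fin.append x.1 x.2
      invFun := fun B => (fun i => B (Fin.castAdd d i), fun i => B (Fin.natAdd a i))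
      left_inv := by
        intro x
        refine Prod.ext ?_ ?_ <;> funext i
        · exact Fin.append_left _ _ i
        · exact Fin.append_right _ _ i
      right_inv := fun B => Fin.append_castAdd_natAdd } with hE
  have key : ∀ (x : (Fin a → Fin b) × (Fin d → Fin b)),
      ((ED a S x.1 ∧ lastQ a (fun _ => True) x.1) ∧ (ED d ∅ x.2 ∧ lastQ d Q x.2))
        ↔ CC (E x) := by
    rintro ⟨B₁, B₂⟩
    simp only [hCC, hE, Equiv.coe_fn_mk]
    constructor
    · rintro ⟨⟨hE1, _⟩, hE2, hL2⟩
      constructor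
      · intro i hi hne
        rcases Nat.lt_or_ge (i + 1) a with hlt | hge
        · rw [dAt_append_left _ _ i hlt]
          exact hE1 i hlt
        · have hgt : a ≤ i := by omega
          rw [dAt_append_right _ _ i hgt hi]
          have hnd : ¬ dAt B₂ (i - a) := by
            have := hE2 (i - a) (by omega)
            simpa using this
          have hns : (i + 1) ∉ S := fun hx => by have := hS _ hx; omega
          exact iff_of_false hnd hns
      · rw [lastQ_append hd]
        exact hL2
    · rintro ⟨h1, h2⟩
      refine ⟨⟨?_, fun _ _ => trivial⟩, ?_, ?_⟩
      · intro i hi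
        rw [← dAt_append_left B₁ B₂ i hi]
        exact h1 i (by omega) (by omega)
      · intro j hj
        have h3 := h1 (a + j) (by omega) (by omega)
        rw [dAt_append_right _ _ (a + j) (by omega) (by omega)] at h3
        rw [show a + j - a = j from by omega] at h3
        have hns : (a + j + 1) ∉ S := fun hx => by have := hS _ hx; omega
        simp only [Finset.notMem_empty, iff_false]
        intro hdd
        exact hns (h3.mp hdd)
      · rw [← lastQ_append hd]
        exact h2
  rw [cnt, cnt, ← Finset.card_product]
  have hprodeq : (Finset.univ.filter fun B₁ : Fin a → Fin b =>
        ED a S B₁ ∧ lastQ a (fun _ => True) B₁) ×ˢ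
      (Finset.univ.filter fun B₂ : Fin d → Fin b => ED d ∅ B₂ ∧ lastQ d Q B₂)
      = Finset.univ.filter (fun x : (Fin a → Fin b) × (Fin d → Fin b) =>
          ((ED a S x.1 ∧ lastQ a (fun _ => True) x.1) ∧ (ED d ∅ x.2 ∧ lastQ d Q x.2))) := by
    ext x
    simp only [Finset.mem_product, Finset.mem_filter, Finset.mem_univ, true_and]
  rw [hprodeq]
  apply Finset.card_equiv E
  intro x
  simp only [Finset.mem_filter, Finset.mem_univ, true_and]
  exact key x



/-! ### Chains and determinants -/

lemma chain_lt {K : ℕ} {u : ℕ → ℕ} (h : ∀ i, i + 1 ≤ K → u i < u (i + 1)) :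
    ∀ i j, i < j → j ≤ K → u i < u j := by
  intro i j hij hjK
  induction j with
  | zero => omega
  | succ j ih =>
    rcases Nat.lt_or_ge i j with hlt | hge
    · exact lt_trans (ih hlt (by omega)) (h j (by omega))
    · have hieq : i = j := by omega
      subst hieq
      exact h i (by omega)

def Gmat (b : ℕ) (u : ℕ → ℕ) (m : ℕ) : Matrix (Fin m) (Fin m) ℝ :=
  Matrix.of fun i j => (zchoose ((u ((j : ℕ) + 1) : ℤ) - u (i : ℕ) + b - 1) (b - 1) : ℝ)

def Dmat (b c n : ℕ) (s : ℕ → ℕ) (k : ℕ) : Matrix (Fin (k + 1)) (Fin (k + 1)) ℝ :=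
  Matrix.of fun i j =>
    if (j : ℕ) = k then (zchoose ((n : ℤ) - s (i : ℕ) + (b - c : ℕ)) (b - c) : ℝ)
    else (zchoose ((s ((j : ℕ) + 1) : ℤ) - s (i : ℕ) + b - 1) (b - 1) : ℝ)

lemma zc_pos (b x y : ℕ) (hb : 1 ≤ b) (hxy : y ≤ x) :
    zchoose ((x : ℤ) - y + b - 1) (b - 1) = ((x - y) + (b - 1)).choose (b - 1) := by
  have h : ((x : ℤ) - y + b - 1) = (((x - y) + (b - 1) : ℕ) : ℤ) := by push_cast; omega
  rw [h, zchoose_natCast]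

lemma zc_zero (b x y : ℕ) (hxy : x < y) :
    zchoose ((x : ℤ) - y + b - 1) (b - 1) = 0 := by
  have h : ((x : ℤ) - y + b - 1) < ((b - 1 : ℕ) : ℤ) := by omega
  exact zchoose_eq_zero h

lemma zc_one (b x : ℕ) (hb : 1 ≤ b) :
    zchoose ((x : ℤ) - x + b - 1) (b - 1) = 1 := by
  rw [zc_pos b x x hb le_rfl]
  simp

lemma zc'_pos (b c n y : ℕ) (hxy : y ≤ n) :
    zchoose ((n : ℤ) - y + (b - c : ℕ)) (b - c) = ((n - y) + (b - c)).choose (b - c) := by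
  have h : ((n : ℤ) - y + (b - c : ℕ)) = (((n - y) + (b - c) : ℕ) : ℤ) := by push_cast; omega
  rw [h, zchoose_natCast]

lemma succAbove_val {m : ℕ} (t : Fin (m + 1)) (l : Fin m) :
    ((t.succAbove l : Fin (m + 1)) : ℕ)
      = if (l : ℕ) < (t : ℕ) then (l : ℕ) else (l : ℕ) + 1 := by
  rw [Fin.succAbove, apply_ite (Fin.val)]
  by_cases h : (l : ℕ) < (t : ℕ)
  · rw [if_pos h, if_pos (show l.castSucc < t from by
      rw [Fin.lt_def, Fin.coe_castSucc]; exact h), Fin.coe_castSucc]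
  · rw [if_neg h, if_neg (show ¬ l.castSucc < t from by
      rw [Fin.lt_def, Fin.coe_castSucc]; omega), Fin.val_succ]

/-- choose symmetry helper -/
lemma choose_swap (x y : ℕ) : (x + y).choose y = (y + x).choose x := by
  have h := Nat.choose_symm (n := y + x) (k := x) (by omega)
  rw [show y + x - x = y from by omega] at h
  rw [add_comm x y, h]

lemma cnt_empty_true' (b n : ℕ) (hb : 1 ≤ b) :
    cnt b n ∅ (fun _ => True) = (b - 1 + n).choose n := by
  obtain ⟨b₀, rfl⟩ : ∃ b₀, b = b₀ + 1 := ⟨b - 1, by omega⟩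
  rw [cnt_empty_true]
  norm_num

/-- Count of sequences with exact descent set a chain equals the `G` determinant. -/
lemma CG (b : ℕ) (hb : 1 ≤ b) :
    ∀ (m : ℕ) (u : ℕ → ℕ), u 0 = 0 → (∀ i, i + 1 ≤ m → u i < u (i + 1)) →
      ((cnt b (u m) (Finset.image u (Finset.Icc 1 (m - 1))) (fun _ => True) : ℝ)
        = (Gmat b u m).det) := by
  intro m
  induction m with
  | zero =>
    intro u h0 _
    have h1 : Finset.Icc 1 (0 - 1) = (∅ : Finset ℕ) := by decide
    rw [h1, Finset.image_empty, h0, cnt_zero, Matrix.det_fin_zero, Nat.cast_one]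
  | succ m ih =>
    cases m with
    | zero =>
      intro u h0 _
      have h1 : Finset.Icc 1 (1 - 1) = (∅ : Finset ℕ) := by decide
      rw [h1, Finset.image_empty, cnt_empty_true' b _ hb]
      rw [Matrix.det_fin_one]
      simp only [Gmat, Matrix.of_apply, Fin.val_zero, zero_add]
      rw [h0, zc_pos b (u 1) 0 hb (by omega)]
      rw [Nat.sub_zero, ← choose_swap (b - 1) (u 1)]
    | succ m' =>
      intro u h0 hst
      have hchain := chain_lt (K := m' + 1 + 1) hst
      have ha : 1 ≤ u (m' + 1) := by
        have := hchain 0 (m' + 1) (by omega) (by omega); omega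
      have hd : 1 ≤ u (m' + 1 + 1) - u (m' + 1) := by
        have := hst (m' + 1) (by omega); omega
      set S : Finset ℕ := Finset.image u (Finset.Icc 1 m') with hSdef
      have hS : ∀ x ∈ S, x < u (m' + 1) := by
        intro x hx
        simp only [hSdef, Finset.mem_image, Finset.mem_Icc] at hx
        obtain ⟨j, ⟨hj1, hj2⟩, rfl⟩ := hx
        exact hchain j (m' + 1) (by omega) (by omega)
      have key := split b (u (m' + 1)) (u (m' + 1 + 1) - u (m' + 1)) ha hd S hS (fun _ => True)
      have had : u (m' + 1) + (u (m' + 1 + 1) - u (m' + 1)) = u (m' + 1 + 1) := by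
        have := hst (m' + 1) (by omega); omega
      rw [had] at key
      have hins : insert (u (m' + 1)) S = Finset.image u (Finset.Icc 1 (m' + 1)) := by
        rw [hSdef, show Finset.Icc 1 (m' + 1) = insert (m' + 1) (Finset.Icc 1 m') from by
          ext x; simp [Finset.mem_Icc]; omega, Finset.image_insert]
      rw [hins] at key
      -- the dropped chain
      set u' : ℕ → ℕ := fun i => if i ≤ m' then u i else u (i + 1) with hu'
      have hu'0 : u' 0 = 0 := by simp [hu', h0]
      have hu'st : ∀ i, i + 1 ≤ m' + 1 → u' i < u' (i + 1) := by
        intro i hi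
        simp only [hu']
        rcases Nat.lt_or_ge (i + 1) (m' + 1) with hlt | hge
        · rw [if_pos (by omega), if_pos (by omega)]
          exact hst i (by omega)
        · rw [if_pos (by omega), if_neg (by omega)]
          exact hchain i (i + 1 + 1) (by omega) (by omega)
      have hu'top : u' (m' + 1) = u (m' + 1 + 1) := by simp [hu']
      have hu'img : Finset.image u' (Finset.Icc 1 m') = S := by
        rw [hSdef]
        apply Finset.image_congr
        intro x hx
        simp only [Finset.coe_Icc, Set.mem_Icc] at hx
        simp [hu', hx.2]
      -- induction hypotheses
      have ih1 := ih u h0 (fun i hi => hst i (by omega))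
      have ih2 := ih u' hu'0 hu'st
      have hmid : Finset.Icc 1 (m' + 1 - 1) = Finset.Icc 1 m' := by norm_num
      rw [hmid] at ih1 ih2
      rw [hu'top, hu'img] at ih2
      -- determinant recursion
      have hWdet : (Gmat b u (m' + 1 + 1)).det
          = (Gmat b u (m' + 1)).det
              * ((u (m' + 1 + 1) - u (m' + 1) + (b - 1)).choose (b - 1) : ℝ)
            - (Gmat b u' (m' + 1)).det := by
        rw [Matrix.det_succ_row (Gmat b u (m' + 1 + 1)) (Fin.last (m' + 1))]
        rw [Fin.sum_univ_castSucc, Fin.sum_univ_castSucc]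
        have hzero : ∀ jj : Fin m',
            (-1 : ℝ) ^ ((Fin.last (m' + 1) : ℕ) + ((jj.castSucc.castSucc : Fin (m' + 1 + 1)) : ℕ))
              * Gmat b u (m' + 1 + 1) (Fin.last (m' + 1)) jj.castSucc.castSucc
              * ((Gmat b u (m' + 1 + 1)).submatrix (Fin.last (m' + 1)).succAbove
                  (jj.castSucc.castSucc).succAbove).det = 0 := by
          intro jj
          have hentry : Gmat b u (m' + 1 + 1) (Fin.last (m' + 1)) jj.castSucc.castSucc
              = ((zchoose ((u ((jj : ℕ) + 1) : ℤ) - u (m' + 1) + b - 1) (b - 1) : ℕ) : ℝ) := by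
            simp [Gmat]
          rw [hentry,
            zc_zero b _ _ (hchain ((jj : ℕ) + 1) (m' + 1) (by have := jj.isLt; omega) (by omega))]
          simp
        rw [Finset.sum_eq_zero (fun jj _ => hzero jj), zero_add]
        have hsign1 : (-1 : ℝ)
            ^ ((Fin.last (m' + 1) : ℕ) + (((Fin.last m').castSucc : Fin (m' + 1 + 1)) : ℕ))
            = -1 := by
          simp only [Fin.val_last, Fin.coe_castSucc]
          rw [show (m' + 1) + m' = 2 * m' + 1 from by omega, pow_succ, pow_mul]
          norm_num
        have hsign2 : (-1 : ℝ)
            ^ ((Fin.last (m' + 1) : ℕ) + ((Fin.last (m' + 1) : Fin (m' + 1 + 1)) : ℕ)) = 1 := by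
          simp only [Fin.val_last]
          rw [show (m' + 1) + (m' + 1) = 2 * (m' + 1) from by omega, pow_mul]
          norm_num
        have hent1 : Gmat b u (m' + 1 + 1) (Fin.last (m' + 1)) (Fin.last m').castSucc
            = (1 : ℝ) := by
          have h2 : Gmat b u (m' + 1 + 1) (Fin.last (m' + 1)) (Fin.last m').castSucc
              = ((zchoose ((u (m' + 1) : ℤ) - u (m' + 1) + b - 1) (b - 1) : ℕ) : ℝ) := by
            simp [Gmat]
          rw [h2, zc_one b _ hb, Nat.cast_one]
        have hent2 : Gmat b u (m' + 1 + 1) (Fin.last (m' + 1)) (Fin.last (m' + 1))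
            = ((u (m' + 1 + 1) - u (m' + 1) + (b - 1)).choose (b - 1) : ℝ) := by
          have h2 : Gmat b u (m' + 1 + 1) (Fin.last (m' + 1)) (Fin.last (m' + 1))
              = ((zchoose ((u (m' + 1 + 1) : ℤ) - u (m' + 1) + b - 1) (b - 1) : ℕ) : ℝ) := by
            simp [Gmat]
          rw [h2, zc_pos b _ _ hb (le_of_lt (hst (m' + 1) (by omega)))]
        have hsub2 : (Gmat b u (m' + 1 + 1)).submatrix (Fin.last (m' + 1)).succAbove
            (Fin.last (m' + 1)).succAbove = Gmat b u (m' + 1) := by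
          ext i l
          simp [Gmat, Matrix.submatrix_apply, Fin.succAbove_last]
        have hsub1 : (Gmat b u (m' + 1 + 1)).submatrix (Fin.last (m' + 1)).succAbove
            ((Fin.last m').castSucc).succAbove = Gmat b u' (m' + 1) := by
          ext i l
          simp only [Matrix.submatrix_apply, Fin.succAbove_last, Gmat, Matrix.of_apply,
            Fin.coe_castSucc]
          have hrow : u' (i : ℕ) = u (i : ℕ) := by
            simp [hu', Nat.lt_succ_iff.mp i.isLt]
          have hcol : u ((((Fin.last m').castSucc).succAbove l : ℕ) + 1) = u' ((l : ℕ) + 1) := by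
            rw [succAbove_val]
            simp only [Fin.coe_castSucc, Fin.val_last, hu']
            split
            · rw [if_pos (by omega)]
            · rw [if_neg (by omega)]
          rw [hrow, hcol]
        rw [hsub1, hsub2, hsign1, hsign2, hent1, hent2]
        ring
      -- put everything together
      rw [show m' + 1 + 1 - 1 = m' + 1 from rfl]
      rw [hWdet, ← ih1, ← ih2]
      have hWcnt : cnt b (u (m' + 1 + 1) - u (m' + 1)) ∅ (fun _ => True)
          = (u (m' + 1 + 1) - u (m' + 1) + (b - 1)).choose (b - 1) := by
        rw [cnt_empty_true' b _ hb, choose_swap (b - 1) (u (m' + 1 + 1) - u (m' + 1))]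
      rw [← hWcnt]
      have hcast := congrArg (Nat.cast : ℕ → ℝ) key
      push_cast at hcast ⊢
      linarith

/-- Count with tail condition equals the `D` determinant. -/
lemma CD (b c : ℕ) (hb : 1 ≤ b) (hc : 1 ≤ c) (hcb : c ≤ b) :
    ∀ (k : ℕ) (s : ℕ → ℕ) (n : ℕ), s 0 = 0 → (∀ i, i + 1 ≤ k → s i < s (i + 1)) → s k < n →
      ((cnt b n (Finset.image s (Finset.Icc 1 k)) (fun x => (x : ℕ) < b - c + 1) : ℝ)
        = (Dmat b c n s k).det) := by
  intro k
  induction k with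
  | zero =>
    intro s n h0 _ hkn
    have h1 : Finset.Icc 1 0 = (∅ : Finset ℕ) := by decide
    rw [h1, Finset.image_empty]
    rw [cnt_empty_bdd b (b - c) n (by omega) (by omega)]
    rw [Matrix.det_fin_one]
    simp only [Dmat, Matrix.of_apply, Fin.val_zero]
    rw [if_true, h0, zc'_pos b c n 0 (by omega), Nat.sub_zero]
    rw [← choose_swap (b - c) n]
  | succ k' ih =>
    intro s n h0 hst hkn
    have hchain := chain_lt (K := k' + 1) hst
    have ha : 1 ≤ s (k' + 1) := by
      have := hchain 0 (k' + 1) (by omega) (by omega); omega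
    have hd : 1 ≤ n - s (k' + 1) := by omega
    set S : Finset ℕ := Finset.image s (Finset.Icc 1 k') with hSdef
    have hS : ∀ x ∈ S, x < s (k' + 1) := by
      intro x hx
      simp only [hSdef, Finset.mem_image, Finset.mem_Icc] at hx
      obtain ⟨j, ⟨hj1, hj2⟩, rfl⟩ := hx
      exact hchain j (k' + 1) (by omega) (by omega)
    have key := split b (s (k' + 1)) (n - s (k' + 1)) ha hd S hS
      (fun x => (x : ℕ) < b - c + 1)
    have had : s (k' + 1) + (n - s (k' + 1)) = n := by omega
    rw [had] at key
    have hins : insert (s (k' + 1)) S = Finset.image s (Finset.Icc 1 (k' + 1)) := by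
      rw [hSdef, show Finset.Icc 1 (k' + 1) = insert (k' + 1) (Finset.Icc 1 k') from by
        ext x; simp [Finset.mem_Icc]; omega, Finset.image_insert]
    rw [hins] at key
    have ih' := ih s n h0 (fun i hi => hst i (by omega))
      (lt_trans (hst k' (by omega)) hkn)
    have CGh := CG b hb (k' + 1) s h0 hst
    have hmid : Finset.Icc 1 (k' + 1 - 1) = Finset.Icc 1 k' := by norm_num
    rw [hmid] at CGh
    have hWcnt : cnt b (n - s (k' + 1)) ∅ (fun x => (x : ℕ) < b - c + 1)
        = ((n - s (k' + 1)) + (b - c)).choose (b - c) := by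
      rw [cnt_empty_bdd b (b - c) (n - s (k' + 1)) (by omega) hd]
      rw [← choose_swap (b - c) (n - s (k' + 1))]
    -- determinant recursion
    have hWdet : (Dmat b c n s (k' + 1)).det
        = (Gmat b s (k' + 1)).det
            * (((n - s (k' + 1)) + (b - c)).choose (b - c) : ℝ)
          - (Dmat b c n s k').det := by
      rw [Matrix.det_succ_row (Dmat b c n s (k' + 1)) (Fin.last (k' + 1))]
      rw [Fin.sum_univ_castSucc, Fin.sum_univ_castSucc]
      have hzero : ∀ jj : Fin k',
          (-1 : ℝ) ^ ((Fin.last (k' + 1) : ℕ) + ((jj.castSucc.castSucc : Fin (k' + 1 + 1)) : ℕ))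
            * Dmat b c n s (k' + 1) (Fin.last (k' + 1)) jj.castSucc.castSucc
            * ((Dmat b c n s (k' + 1)).submatrix (Fin.last (k' + 1)).succAbove
                (jj.castSucc.castSucc).succAbove).det = 0 := by
        intro jj
        have hentry : Dmat b c n s (k' + 1) (Fin.last (k' + 1)) jj.castSucc.castSucc
            = ((zchoose ((s ((jj : ℕ) + 1) : ℤ) - s (k' + 1) + b - 1) (b - 1) : ℕ) : ℝ) := by
          simp only [Dmat, Matrix.of_apply, Fin.coe_castSucc, Fin.val_last]
          rw [if_neg (by have := jj.isLt; omega)]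
        rw [hentry,
          zc_zero b _ _ (hchain ((jj : ℕ) + 1) (k' + 1) (by have := jj.isLt; omega) (by omega))]
        simp
      rw [Finset.sum_eq_zero (fun jj _ => hzero jj), zero_add]
      have hsign1 : (-1 : ℝ)
          ^ ((Fin.last (k' + 1) : ℕ) + (((Fin.last k').castSucc : Fin (k' + 1 + 1)) : ℕ))
          = -1 := by
        simp only [Fin.val_last, Fin.coe_castSucc]
        rw [show (k' + 1) + k' = 2 * k' + 1 from by omega, pow_succ, pow_mul]
        norm_num
      have hsign2 : (-1 : ℝ)
          ^ ((Fin.last (k' + 1) : ℕ) + ((Fin.last (k' + 1) : Fin (k' + 1 + 1)) : ℕ)) = 1 := by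
        simp only [Fin.val_last]
        rw [show (k' + 1) + (k' + 1) = 2 * (k' + 1) from by omega, pow_mul]
        norm_num
      have hent1 : Dmat b c n s (k' + 1) (Fin.last (k' + 1)) (Fin.last k').castSucc = (1 : ℝ) := by
        have h2 : Dmat b c n s (k' + 1) (Fin.last (k' + 1)) (Fin.last k').castSucc
            = ((zchoose ((s (k' + 1) : ℤ) - s (k' + 1) + b - 1) (b - 1) : ℕ) : ℝ) := by
          simp only [Dmat, Matrix.of_apply, Fin.coe_castSucc, Fin.val_last]
          rw [if_neg (by omega)]
        rw [h2, zc_one b _ hb, Nat.cast_one]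
      have hent2 : Dmat b c n s (k' + 1) (Fin.last (k' + 1)) (Fin.last (k' + 1))
          = (((n - s (k' + 1)) + (b - c)).choose (b - c) : ℝ) := by
        have h2 : Dmat b c n s (k' + 1) (Fin.last (k' + 1)) (Fin.last (k' + 1))
            = ((zchoose ((n : ℤ) - s (k' + 1) + (b - c : ℕ)) (b - c) : ℕ) : ℝ) := by
          simp only [Dmat, Matrix.of_apply, Fin.val_last]
          rw [if_true]
        rw [h2, zc'_pos b c n _ (by omega)]
      have hsub2 : (Dmat b c n s (k' + 1)).submatrix (Fin.last (k' + 1)).succAbove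
          (Fin.last (k' + 1)).succAbove = Gmat b s (k' + 1) := by
        ext i l
        simp only [Matrix.submatrix_apply, Fin.succAbove_last, Dmat, Gmat, Matrix.of_apply,
          Fin.coe_castSucc]
        rw [if_neg (by have := l.isLt; omega)]
      have hsub1 : (Dmat b c n s (k' + 1)).submatrix (Fin.last (k' + 1)).succAbove
          ((Fin.last k').castSucc).succAbove = Dmat b c n s k' := by
        ext i l
        have hcolval : ((((Fin.last k').castSucc).succAbove l : Fin (k' + 1 + 1)) : ℕ)
            = if (l : ℕ) < k' then (l : ℕ) else (l : ℕ) + 1 := by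
          rw [succAbove_val]
          simp
        simp only [Matrix.submatrix_apply, Fin.succAbove_last, Dmat, Matrix.of_apply,
          Fin.coe_castSucc]
        rw [hcolval]
        rcases Nat.lt_or_ge (l : ℕ) k' with hl | hl
        · rw [if_pos hl, if_neg (show ¬ (l : ℕ) = k' + 1 from by omega),
            if_neg (show ¬ (l : ℕ) = k' from by omega)]
        · have hleq : (l : ℕ) = k' := by have := l.isLt; omega
          rw [if_neg (show ¬ (l : ℕ) < k' from by omega),
            if_pos (show (l : ℕ) + 1 = k' + 1 from by omega),
            if_pos hleq]
      rw [hsub1, hsub2, hsign1, hsign2, hent1, hent2]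
      ring
    rw [hWdet, ← CGh, ← ih', ← hWcnt]
    have hcast := congrArg (Nat.cast : ℕ → ℝ) key
    push_cast at hcast ⊢
    linarith

/-! ### The color-rank bijection κ -/

lemma lex_lt {c q q' r r' : ℕ} (hq : q < c) (hq' : q' < c) :
    r * c + q < r' * c + q' ↔ (r < r' ∨ (r = r' ∧ q < q')) := by
  constructor
  · intro h
    rcases Nat.lt_trichotomy r r' with h1 | h1 | h1
    · exact Or.inl h1
    · subst h1
      exact Or.inr ⟨rfl, by omega⟩
    · exfalso
      have h2 : (r' + 1) * c ≤ r * c := Nat.mul_le_mul_right c (by omega)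
      have h3 : (r' + 1) * c = r' * c + c := by rw [Nat.succ_mul]
      omega
  · intro h
    rcases h with h1 | ⟨h1, h2⟩
    · have h2 : (r + 1) * c ≤ r' * c := Nat.mul_le_mul_right c (by omega)
      have h3 : (r + 1) * c = r * c + c := by rw [Nat.succ_mul]
      omega
    · subst h1
      omega

lemma succ_mul_eq (p c : ℕ) (hp : 1 ≤ p) : (p - 1) * c + c = p * c := by
  have hpp : p - 1 + 1 = p := by omega
  conv_rhs => rw [← hpp]
  rw [Nat.succ_mul]

lemma kappa_core (p c b r q : ℕ) (hp : 2 ≤ p) (hc : 1 ≤ c) (hb : b + 1 = p * c)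
    (hr : r < p) (hq : q < c) (ha : p * q + r < b) : r * c + q < b := by
  have h4 := succ_mul_eq p c (by omega)
  have hb2 : (p - 1) * c + c = b + 1 := h4.trans hb.symm
  rcases Nat.lt_or_ge r (p - 1) with h1 | h1
  · have h2 : r * c ≤ (p - 2) * c := Nat.mul_le_mul_right c (by omega)
    have h3 : (p - 2) * c + c = (p - 1) * c := by
      rw [show p - 1 = (p - 2) + 1 from by omega, Nat.succ_mul]
    omega
  · have hr1 : r = p - 1 := by omega
    have hq2 : q + 2 ≤ c := by
      by_contra h
      push_neg at h
      have hceq : c = q + 1 := by omega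
      subst hceq
      have h3 : p * (q + 1) = p * q + p := by rw [Nat.mul_succ]
      omega
    have h3 : r * c + c = b + 1 := by rw [hr1]; exact hb2
    omega

lemma div_lt_c' (p c b : ℕ) (hp : 2 ≤ p) (hb : b + 1 = p * c) (a : ℕ) (ha : a < b) :
    a / p < c := by
  have hqr : p * (a / p) + a % p = a := Nat.div_add_mod a p
  by_contra h
  push_neg at h
  have : p * c ≤ p * (a / p) := Nat.mul_le_mul_left p h
  omega

lemma kappa_lt (p c b : ℕ) (hp : 2 ≤ p) (hc : 1 ≤ c) (hb : b + 1 = p * c)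
    (a : ℕ) (ha : a < b) : (a % p) * c + a / p < b := by
  refine kappa_core p c b (a % p) (a / p) hp hc hb (Nat.mod_lt _ (by omega))
    (div_lt_c' p c b hp hb a ha) ?_
  rw [Nat.div_add_mod]
  exact ha

def kfun (p c b : ℕ) (hp : 2 ≤ p) (hc : 1 ≤ c) (hb : b + 1 = p * c) (a : Fin b) : Fin b :=
  ⟨((a : ℕ) % p) * c + (a : ℕ) / p, kappa_lt p c b hp hc hb _ a.isLt⟩

lemma div_lt_c (p c b : ℕ) (hp : 2 ≤ p) (hb : b + 1 = p * c) (a : Fin b) : (a : ℕ) / p < c := by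
  have hqr : p * ((a : ℕ) / p) + (a : ℕ) % p = (a : ℕ) := Nat.div_add_mod _ p
  have ha := a.isLt
  by_contra h
  push_neg at h
  have : p * c ≤ p * ((a : ℕ) / p) := Nat.mul_le_mul_left p h
  omega

lemma lexeq_core {c q q' r r' : ℕ} (hq : q < c) (hq' : q' < c)
    (h : r * c + q = r' * c + q') : r = r' ∧ q = q' := by
  have h1 : ¬ (r * c + q < r' * c + q') := by omega
  have h2 : ¬ (r' * c + q' < r * c + q) := by omega
  rw [lex_lt hq hq'] at h1
  rw [lex_lt hq' hq] at h2
  constructor <;> omega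

lemma kfun_inj (p c b : ℕ) (hp : 2 ≤ p) (hc : 1 ≤ c) (hb : b + 1 = p * c) :
    Function.Injective (kfun p c b hp hc hb) := by
  intro x y hxy
  have hv : ((x : ℕ) % p) * c + (x : ℕ) / p = ((y : ℕ) % p) * c + (y : ℕ) / p := by
    have := congrArg (Fin.val) hxy
    simpa [kfun] using this
  obtain ⟨hr, hq⟩ := lexeq_core (div_lt_c p c b hp hb x) (div_lt_c p c b hp hb y) hv
  have hx : p * ((x : ℕ) / p) + (x : ℕ) % p = (x : ℕ) := Nat.div_add_mod _ p
  have hy : p * ((y : ℕ) / p) + (y : ℕ) % p = (y : ℕ) := Nat.div_add_mod _ p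
  apply Fin.ext
  rw [← hx, ← hy, hr, hq]

lemma kfun_lt_iff (p c b : ℕ) (hp : 2 ≤ p) (hc : 1 ≤ c) (hb : b + 1 = p * c) (x y : Fin b) :
    kfun p c b hp hc hb x < kfun p c b hp hc hb y
      ↔ ((x : ℕ) % p < (y : ℕ) % p ∨ ((x : ℕ) % p = (y : ℕ) % p ∧ x < y)) := by
  have hqx := div_lt_c p c b hp hb x
  have hqy := div_lt_c p c b hp hb y
  have hx := Nat.div_add_mod (x : ℕ) p
  have hy := Nat.div_add_mod (y : ℕ) p
  rw [Fin.lt_def, Fin.lt_def]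
  show ((x : ℕ) % p) * c + (x : ℕ) / p < ((y : ℕ) % p) * c + (y : ℕ) / p ↔ _
  rw [lex_lt hqx hqy]
  constructor
  · rintro (h1 | ⟨h1, h2⟩)
    · exact Or.inl h1
    · refine Or.inr ⟨h1, ?_⟩
      have h3 : p * ((x : ℕ) / p + 1) ≤ p * ((y : ℕ) / p) := Nat.mul_le_mul_left p (by omega)
      have h4 : p * ((x : ℕ) / p + 1) = p * ((x : ℕ) / p) + p := by rw [Nat.mul_succ]
      omega
  · rintro (h1 | ⟨h1, h2⟩)
    · exact Or.inl h1
    · refine Or.inr ⟨h1, ?_⟩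
      by_contra h
      push_neg at h
      have h3 : p * ((y : ℕ) / p) ≤ p * ((x : ℕ) / p) := Nat.mul_le_mul_left p h
      have h4 := Fin.lt_def.mp h2
      omega

lemma ktop_core (p c b r q : ℕ) (hp : 2 ≤ p) (hc : 1 ≤ c) (hb : b + 1 = p * c)
    (hr : r < p) (hq : q < c) : (b - c < r * c + q ↔ r = p - 1) := by
  have h4 := succ_mul_eq p c (by omega)
  have hb2 : (p - 1) * c + c = b + 1 := h4.trans hb.symm
  have h6 : 2 * c ≤ p * c := Nat.mul_le_mul_right c hp
  have h7 : 2 * c ≤ b + 1 := by rw [hb]; exact h6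
  constructor
  · intro h
    by_contra hne
    have h2 : r * c ≤ (p - 2) * c := Nat.mul_le_mul_right c (by omega)
    have h3 : (p - 2) * c + c = (p - 1) * c := by
      rw [show p - 1 = (p - 2) + 1 from by omega, Nat.succ_mul]
    omega
  · intro h
    have h3 : r * c + c = b + 1 := by rw [h]; exact hb2
    omega

lemma kfun_top (p c b : ℕ) (hp : 2 ≤ p) (hc : 1 ≤ c) (hb : b + 1 = p * c) (x : Fin b) :
    b - c < (kfun p c b hp hc hb x : ℕ) ↔ (x : ℕ) % p = p - 1 := by
  show b - c < ((x : ℕ) % p) * c + (x : ℕ) / p ↔ _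
  exact ktop_core p c b _ _ hp hc hb (Nat.mod_lt _ (by omega)) (div_lt_c p c b hp hb x)

/-! ### Reduction of the colored shuffle to plain descents -/

lemma pos_lt {n b : ℕ} (A : Fin n → Fin b) {i j : Fin n} (hij : i < j) :
    shufflePos A j < shufflePos A i ↔ A j < A i := by
  classical
  have mono : ∀ x y : Fin n, (A x < A y ∨ (A x = A y ∧ x ≤ y)) →
      (Finset.univ.filter fun l => A l < A x ∨ (A l = A x ∧ l ≤ x))
        ⊆ (Finset.univ.filter fun l => A l < A y ∨ (A l = A y ∧ l ≤ y)) := by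
    intro x y hxy l hl
    simp only [Finset.mem_filter, Finset.mem_univ, true_and] at hl ⊢
    rcases hxy with h1 | ⟨h1, h2⟩
    · rcases hl with h3 | ⟨h3, h4⟩
      · exact Or.inl (lt_trans h3 h1)
      · exact Or.inl (h3 ▸ h1)
    · rcases hl with h3 | ⟨h3, h4⟩
      · exact Or.inl (h1 ▸ h3)
      · exact Or.inr ⟨h1 ▸ h3, le_trans h4 h2⟩
  have strict : ∀ x y : Fin n, x < y → A x ≤ A y → shufflePos A x < shufflePos A y := by
    intro x y hxy hA
    apply Finset.card_lt_card
    rw [Finset.ssubset_iff_of_subset (mono x y (by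
      rcases lt_or_eq_of_le hA with h | h
      · exact Or.inl h
      · exact Or.inr ⟨h, le_of_lt hxy⟩))]
    refine ⟨y, ?_, ?_⟩
    · simp
    · simp only [Finset.mem_filter, Finset.mem_univ, true_and]
      push_neg
      exact ⟨hA, fun _ => hxy⟩
  constructor
  · intro h
    by_contra hA
    push_neg at hA
    have := strict i j hij hA
    omega
  · intro h
    apply Finset.card_lt_card
    rw [Finset.ssubset_iff_of_subset (mono j i (Or.inl h))]
    refine ⟨i, ?_, ?_⟩
    · simp
    · simp only [Finset.mem_filter, Finset.mem_univ, true_and]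
      push_neg
      refine ⟨le_of_lt h, fun he => ?_⟩
      rw [he] at h
      exact absurd h (lt_irrefl _)

lemma descent_interior (p c b : ℕ) (hp : 2 ≤ p) (hc : 1 ≤ c) (hb : b + 1 = p * c)
    {n : ℕ} (A : Fin n → Fin b) (i : Fin n) (h : (i : ℕ) + 1 < n) :
    shuffleHasD'DescentAt p A i ↔ dAt (fun j => kfun p c b hp hc hb (A j)) (i : ℕ) := by
  haveI : NeZero p := ⟨by omega⟩
  rw [shuffleHasD'DescentAt, dif_pos h, dAt_iff _ _ h]
  have hidx : (⟨(i : ℕ), Nat.lt_of_succ_lt h⟩ : Fin n) = i := Fin.ext rfl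
  rw [hidx]
  simp only [sigmaLt', shufflePair, shuffleCol]
  rw [ZMod.val_natCast, ZMod.val_natCast]
  rw [ZMod.natCast_eq_natCast_iff]
  have hpos : shufflePos A ⟨(i : ℕ) + 1, h⟩ < shufflePos A i
      ↔ A ⟨(i : ℕ) + 1, h⟩ < A i := pos_lt A (by rw [Fin.lt_def]; simp)
  rw [hpos]
  rw [Fin.lt_def, kfun_lt_iff p c b hp hc hb, Fin.lt_def]
  show _ ∨ (Nat.ModEq p _ _ ∧ _) ↔ _
  unfold Nat.ModEq
  rfl

lemma descent_last (p c b : ℕ) (hp : 2 ≤ p) (hc : 1 ≤ c) (hb : b + 1 = p * c)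
    {n : ℕ} (A : Fin n → Fin b) (i : Fin n) (h : ¬ ((i : ℕ) + 1 < n)) :
    shuffleHasD'DescentAt p A i ↔ b - c < (kfun p c b hp hc hb (A i) : ℕ) := by
  haveI : NeZero p := ⟨by omega⟩
  rw [shuffleHasD'DescentAt, dif_neg h, kfun_top p c b hp hc hb]
  show ((A i : ℕ) : ZMod p) = _ ↔ _
  rw [ZMod.natCast_eq_natCast_iff]
  unfold Nat.ModEq
  rw [Nat.mod_eq_of_lt (show p - 1 < p from by omega)]

lemma setEq (p c b : ℕ) (hp : 2 ≤ p) (hc : 1 ≤ c) (hb : b + 1 = p * c)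
    {n k : ℕ} (s : ℕ → ℕ) (hn : 1 ≤ n)
    (hfull : ∀ q ∈ Finset.image s (Finset.Icc 1 k), 1 ≤ q ∧ q + 1 ≤ n)
    (A : Fin n → Fin b) :
    shuffleD'DescentSet p A = Finset.image s (Finset.Icc 1 k)
      ↔ (ED n (Finset.image s (Finset.Icc 1 k)) (fun j => kfun p c b hp hc hb (A j))
          ∧ lastQ n (fun x => (x : ℕ) < b - c + 1) (fun j => kfun p c b hp hc hb (A j))) := by
  classical
  have hmem : ∀ q : ℕ, q ∈ shuffleD'DescentSet p A
      ↔ ∃ i : Fin n, shuffleHasD'DescentAt p A i ∧ (i : ℕ) + 1 = q := by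
    intro q
    simp [shuffleD'DescentSet]
  constructor
  · intro hset
    constructor
    · intro i hi
      rw [← descent_interior p c b hp hc hb A ⟨i, by omega⟩ hi]
      rw [← hset, hmem]
      constructor
      · intro hd
        exact ⟨⟨i, by omega⟩, hd, rfl⟩
      · rintro ⟨i', hd', he⟩
        have hieq : i' = ⟨i, by omega⟩ := Fin.ext (show (i' : ℕ) = i from by omega)
        rw [hieq] at hd'
        exact hd'
    · intro i hi
      by_contra hQ
      push_neg at hQ
      have hQ' : b - c + 1 ≤ (kfun p c b hp hc hb (A i) : ℕ) := hQ
      have hd : shuffleHasD'DescentAt p A i :=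
        (descent_last p c b hp hc hb A i (by omega)).mpr (by omega)
      have hq : (i : ℕ) + 1 ∈ Finset.image s (Finset.Icc 1 k) := by
        rw [← hset, hmem]
        exact ⟨i, hd, rfl⟩
      have := (hfull _ hq).2
      omega
  · rintro ⟨hED, hlast⟩
    ext q
    rw [hmem]
    constructor
    · rintro ⟨i, hd, rfl⟩
      by_cases hi : (i : ℕ) + 1 < n
      · have h1 := (descent_interior p c b hp hc hb A i hi).mp hd
        exact (hED (i : ℕ) hi).mp h1
      · exfalso
        have h1 := (descent_last p c b hp hc hb A i hi).mp hd
        have h2 := hlast i (by have := i.isLt; omega)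
        have h2' : (kfun p c b hp hc hb (A i) : ℕ) < b - c + 1 := h2
        omega
    · intro hq
      obtain ⟨h1, h2⟩ := hfull q hq
      refine ⟨⟨q - 1, by omega⟩, ?_, by simp; omega⟩
      have hlt : (q - 1) + 1 < n := by omega
      rw [descent_interior p c b hp hc hb A ⟨q - 1, by omega⟩ hlt]
      have h3 := hED (q - 1) hlt
      rw [show q - 1 + 1 = q from by omega] at h3
      exact h3.mpr hq

end S2

/-- **Theorem (determinantal formula for the `(b,n,p)`-shuffle, `b = pc - 1`, case `s_k < n`).**
For `b = pc - 1` and `0 = s_0 < s_1 < ⋯ < s_k < n`, `s_{k+1} := n`, the probability that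
the d′-descent set of the `(b,n,p)`-shuffle equals `{s_1,…,s_k}` is
`b⁻ⁿ · det(f′(i,j))` with `f′(i,j) = binom(s_{j+1} - s_i + b - 1, b-1)` for `j < k` and
`f′(i,k) = binom(n - s_i + b - c, b - c)`. -/
theorem statement2 (p c n k : ℕ) (hp : 2 ≤ p) (hc : 1 ≤ c) (hn : 1 ≤ n)
    (b : ℕ) (hb : b + 1 = p * c)
    (s : ℕ → ℕ) (hs0 : s 0 = 0) (hmono : ∀ i, i ≤ k → s i < s (i + 1))
    (hlast : s (k + 1) = n) :
    ((Finset.univ.filter fun A : Fin n → Fin b =>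
        shuffleD'DescentSet p A = (Finset.Icc 1 k).image s).card : ℝ) / (b : ℝ) ^ n
      = ((b : ℝ) ^ n)⁻¹ *
        (Matrix.of fun i j : Fin (k + 1) =>
          if (j : ℕ) = k then (zchoose ((n : ℤ) - s (i : ℕ) + (b - c : ℕ)) (b - c) : ℝ)
          else (zchoose ((s ((j : ℕ) + 1) : ℤ) - s (i : ℕ) + b - 1) (b - 1) : ℝ)).det := by
  classical
  have hb1 : 1 ≤ b := by
    have h2 : 2 * 1 ≤ p * c := Nat.mul_le_mul hp hc
    rw [← hb] at h2
    omega
  have hcb : c ≤ b := by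
    have h2 : 2 * c ≤ p * c := Nat.mul_le_mul_right c hp
    rw [← hb] at h2
    omega
  have hstep : ∀ i, i + 1 ≤ k → s i < s (i + 1) := fun i hi => hmono i (by omega)
  have hkn : s k < n := by
    have := hmono k le_rfl
    omega
  have hfull : ∀ q ∈ Finset.image s (Finset.Icc 1 k), 1 ≤ q ∧ q + 1 ≤ n := by
    intro q hq
    simp only [Finset.mem_image, Finset.mem_Icc] at hq
    obtain ⟨j, ⟨hj1, hj2⟩, rfl⟩ := hq
    have hchain := S2.chain_lt (K := k) hstep
    constructor
    · have := hs0 ▸ hchain 0 j (by omega) (by omega)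
      omega
    · rcases Nat.lt_or_ge j k with hjk | hjk
      · have := hchain j k hjk le_rfl
        omega
      · have : j = k := by omega
        subst this
        omega
  have hbij : Function.Bijective (S2.kfun p c b hp hc hb) :=
    Finite.injective_iff_bijective.mp (S2.kfun_inj p c b hp hc hb)
  set e : (Fin n → Fin b) ≃ (Fin n → Fin b) :=
    Equiv.arrowCongr (Equiv.refl (Fin n)) (Equiv.ofBijective _ hbij) with he
  have hcard : (Finset.univ.filter fun A : Fin n → Fin b =>
      shuffleD'DescentSet p A = (Finset.Icc 1 k).image s).card
      = S2.cnt b n ((Finset.Icc 1 k).image s) (fun x => (x : ℕ) < b - c + 1) := by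
    rw [S2.cnt]
    apply Finset.card_equiv e
    intro A
    simp only [Finset.mem_filter, Finset.mem_univ, true_and]
    have heA : e A = fun j => S2.kfun p c b hp hc hb (A j) := rfl
    rw [heA]
    exact S2.setEq p c b hp hc hb s hn hfull A
  have hCD := S2.CD b c hb1 hc hcb k s n hs0 hstep hkn
  rw [hcard, div_eq_inv_mul, hCD]
  rfl
end
end

section
/- Let p ≥ 1 and let σ be chosen uniformly at random from G_{p,n}. Let 0 = s_0 < s_1 < ⋯ < s_k < n and set s_{k+1} := n. Then the probability that the set of d-descents of σ equals {s_1,…,s_k} is det( g(i,j) )_{i,j = 0,…,k}, where g(i,j) = 1/(s_{j+1} − s_i)! for 0 ≤ i ≤ k and 0 ≤ j ≤ k−1, and g(i,k) = (1/p)^{n − s_i} / (n − s_i)! for 0 ≤ i ≤ k. -/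
open scoped Classical

noncomputable section

/-- `1/m!` for an integer `m`, taken to be `0` for negative `m`. -/
def invFact (m : ℤ) : ℝ := if 0 ≤ m then ((m.toNat).factorial : ℝ)⁻¹ else 0

/-- An element of `G_{p,n}`, given by its permutation part and its colors;
`σ` is determined by the pairs `(σ(i), σ_c(i))`. -/
abbrev ColoredPerm (p n : ℕ) := Equiv.Perm (Fin n) × (Fin n → ZMod p)

/-- The pair `(σ(i), σ_c(i)) ∈ {1,…,n} × Z_p`. -/
def cpPair {p n : ℕ} (σ : ColoredPerm p n) (i : Fin n) : ℕ × ZMod p :=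
  ((σ.1 i : ℕ) + 1, σ.2 i)

/-- `σ ∈ G_{p,n}` has a d-descent at position `i+1` (positions are `1,…,n`):
for positions `< n` this means `(σ(i),σ_c(i)) > (σ(i+1),σ_c(i+1))`,
and at position `n` it means `σ_c(n) ≠ 0`. -/
def cpHasDDescentAt {p n : ℕ} (σ : ColoredPerm p n) (i : Fin n) : Prop :=
  if h : (i : ℕ) + 1 < n then
    sigmaLt p (cpPair σ ⟨(i : ℕ) + 1, h⟩) (cpPair σ i)
  else σ.2 i ≠ 0

/-- The set of d-descent positions (a subset of `{1,…,n}`) of `σ ∈ G_{p,n}`. -/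
def cpDDescentSet {p n : ℕ} (σ : ColoredPerm p n) : Finset ℕ :=
  (Finset.univ.filter fun i : Fin n => cpHasDDescentAt σ i).image fun i => (i : ℕ) + 1

/-- `σ ∈ G_{p,n}` has a d′-descent at position `i+1` (positions are `1,…,n`):
for positions `< n` this means `(σ(i),σ_c(i)) >′ (σ(i+1),σ_c(i+1))`,
and at position `n` it means `σ_c(n) = p - 1`. -/
def cpHasD'DescentAt {p n : ℕ} (σ : ColoredPerm p n) (i : Fin n) : Prop :=
  if h : (i : ℕ) + 1 < n then
    sigmaLt' (cpPair σ ⟨(i : ℕ) + 1, h⟩) (cpPair σ i)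
  else σ.2 i = ((p - 1 : ℕ) : ZMod p)

/-- The set of d′-descent positions (a subset of `{1,…,n}`) of `σ ∈ G_{p,n}`. -/
def cpD'DescentSet {p n : ℕ} (σ : ColoredPerm p n) : Finset ℕ :=
  (Finset.univ.filter fun i : Fin n => cpHasD'DescentAt σ i).image fun i => (i : ℕ) + 1

namespace CPaux

lemma invFact_ofNat (d : ℕ) : invFact (d : ℤ) = ((d.factorial : ℝ))⁻¹ := by
  simp [invFact]

lemma invFact_neg {m : ℤ} (h : m < 0) : invFact m = 0 := by
  simp [invFact, not_le.mpr h]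

lemma invFact_zero : invFact 0 = 1 := by simp [invFact]

lemma rho_eq_zero_iff {p : ℕ} [NeZero p] (r : ZMod p) : rho p r = 0 ↔ r = 0 := by
  constructor
  · intro h
    by_contra hr
    have h1 : r.val < p := ZMod.val_lt r
    have h2 : r.val ≠ 0 := fun hv => hr ((ZMod.val_eq_zero r).mp hv)
    simp only [rho, if_neg hr] at h
    omega
  · intro h; simp [rho, h]

lemma sigmaLt_irrefl {p : ℕ} (x : ℕ × ZMod p) : ¬ sigmaLt p x x := by
  simp [sigmaLt]

lemma sigmaLt_asymm {p : ℕ} {x y : ℕ × ZMod p} (h : sigmaLt p x y) : ¬ sigmaLt p y x := by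
  rcases h with h | ⟨h1, h2⟩
  · rintro (h' | ⟨h1', h2'⟩) <;> omega
  · rintro (h' | ⟨h1', h2'⟩) <;> omega

lemma sigmaLt_total {p : ℕ} {x y : ℕ × ZMod p} (h : x.1 ≠ y.1) :
    sigmaLt p x y ∨ sigmaLt p y x := by
  rcases lt_trichotomy (rho p x.2) (rho p y.2) with h' | h' | h'
  · exact Or.inl (Or.inl h')
  · rcases lt_or_gt_of_ne h with hv | hv
    · exact Or.inl (Or.inr ⟨h', hv⟩)
    · exact Or.inr (Or.inr ⟨h'.symm, hv⟩)
  · exact Or.inr (Or.inl h')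

lemma mem_cpDDescentSet {p n : ℕ} {σ : ColoredPerm p n} {q : ℕ} :
    q ∈ cpDDescentSet σ ↔ ∃ i : Fin n, cpHasDDescentAt σ i ∧ (i : ℕ) + 1 = q := by
  simp [cpDDescentSet, Finset.mem_image, Finset.mem_filter]

lemma pair_first_ne {p n : ℕ} (σ : ColoredPerm p n) {i j : Fin n} (hij : i ≠ j) :
    (cpPair σ i).1 ≠ (cpPair σ j).1 := by
  simp only [cpPair]
  intro h
  exact hij (σ.1.injective (Fin.ext (by omega)))

/-- If there is no descent at an internal position, then the pairs increase there. -/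
lemma pair_lt_of_not_descent {p n : ℕ} {σ : ColoredPerm p n} {i : Fin n}
    (hi : (i : ℕ) + 1 < n) (h : ¬ cpHasDDescentAt σ i) :
    sigmaLt p (cpPair σ i) (cpPair σ ⟨(i : ℕ) + 1, hi⟩) := by
  rw [cpHasDDescentAt, dif_pos hi] at h
  have hne : i ≠ ⟨(i : ℕ) + 1, hi⟩ := by
    intro h'
    have := congrArg Fin.val h'
    simp at this
  rcases sigmaLt_total (pair_first_ne σ hne) with h' | h'
  · exact h'
  · exact absurd h' h

/-- Colors are zero from position `t` on when there are no descents at positions `> t`. -/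
lemma tail_color {p n : ℕ} [NeZero p] {σ : ColoredPerm p n} {t : ℕ}
    (hnd : ∀ i : Fin n, t ≤ (i : ℕ) → ¬ cpHasDDescentAt σ i) :
    ∀ i : Fin n, t ≤ (i : ℕ) → σ.2 i = 0 := by
  suffices H : ∀ d : ℕ, ∀ i : Fin n, t ≤ (i : ℕ) → n - 1 - (i : ℕ) = d → σ.2 i = 0 by
    intro i hi; exact H (n - 1 - (i : ℕ)) i hi rfl
  intro d
  induction d with
  | zero =>
    intro i hi hd
    have hin : (i : ℕ) < n := i.isLt
    have h1 : ¬ ((i : ℕ) + 1 < n) := by omega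
    have := hnd i hi
    rw [cpHasDDescentAt, dif_neg h1] at this
    simpa using this
  | succ d ih =>
    intro i hi hd
    have hin : (i : ℕ) < n := i.isLt
    have hi1 : (i : ℕ) + 1 < n := by omega
    have hnext : σ.2 ⟨(i : ℕ) + 1, hi1⟩ = 0 := by
      apply ih ⟨(i : ℕ) + 1, hi1⟩ (show t ≤ (i : ℕ) + 1 by omega)
        (show n - 1 - ((i : ℕ) + 1) = d by omega)
    have hlt := pair_lt_of_not_descent hi1 (hnd i hi)
    have : rho p (σ.2 i) = 0 := by
      rcases hlt with h' | ⟨h', _⟩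
      · exfalso
        simp only [cpPair] at h'
        rw [hnext] at h'
        simp [rho] at h'
      · simp only [cpPair] at h'
        rw [h', hnext]
        simp [rho]
    exact (rho_eq_zero_iff _).mp this

/-- Values increase from position `t` on when there are no descents at positions `> t`. -/
lemma tail_mono {p n : ℕ} [NeZero p] {σ : ColoredPerm p n} {t : ℕ}
    (hnd : ∀ i : Fin n, t ≤ (i : ℕ) → ¬ cpHasDDescentAt σ i) :
    ∀ i j : Fin n, t ≤ (i : ℕ) → (i : ℕ) < (j : ℕ) → (σ.1 i : ℕ) < (σ.1 j : ℕ) := by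
  have adj : ∀ i : Fin n, t ≤ (i : ℕ) → ∀ hi1 : (i : ℕ) + 1 < n,
      (σ.1 i : ℕ) < (σ.1 ⟨(i : ℕ) + 1, hi1⟩ : ℕ) := by
    intro i hi hi1
    have hlt := pair_lt_of_not_descent hi1 (hnd i hi)
    have hc0 : σ.2 i = 0 := tail_color hnd i hi
    have hc1 : σ.2 ⟨(i : ℕ) + 1, hi1⟩ = 0 := tail_color hnd ⟨(i : ℕ) + 1, hi1⟩
      (show t ≤ (i : ℕ) + 1 by omega)
    rcases hlt with h' | ⟨_, h'⟩
    · exfalso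
      simp only [cpPair] at h'
      rw [hc0, hc1] at h'
      simp at h'
    · simp only [cpPair] at h'
      omega
  suffices H : ∀ m : ℕ, ∀ i j : Fin n, t ≤ (i : ℕ) → (j : ℕ) = (i : ℕ) + 1 + m →
      (σ.1 i : ℕ) < (σ.1 j : ℕ) by
    intro i j hi hij
    exact H ((j : ℕ) - (i : ℕ) - 1) i j hi (by omega)
  intro m
  induction m with
  | zero =>
    intro i j hi hj
    have hi1 : (i : ℕ) + 1 < n := by have := j.isLt; omega
    have : j = ⟨(i : ℕ) + 1, hi1⟩ := Fin.ext (show (j : ℕ) = (i : ℕ) + 1 by omega)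
    rw [this]; exact adj i hi hi1
  | succ m ih =>
    intro i j hi hj
    have hjn : (j : ℕ) < n := j.isLt
    have hj1 : (j : ℕ) - 1 < n := by omega
    have hval : ((⟨(j : ℕ) - 1, hj1⟩ : Fin n) : ℕ) = (j : ℕ) - 1 := rfl
    have h1 : (σ.1 i : ℕ) < (σ.1 ⟨(j : ℕ) - 1, hj1⟩ : ℕ) :=
      ih i ⟨(j : ℕ) - 1, hj1⟩ hi (by rw [hval]; omega)
    have hi1 : ((⟨(j : ℕ) - 1, hj1⟩ : Fin n) : ℕ) + 1 < n := by rw [hval]; omega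
    have h2 := adj ⟨(j : ℕ) - 1, hj1⟩ (by rw [hval]; omega) hi1
    have hje : j = ⟨((⟨(j : ℕ) - 1, hj1⟩ : Fin n) : ℕ) + 1, hi1⟩ :=
      Fin.ext (show (j : ℕ) = ((j : ℕ) - 1) + 1 by omega)
    rw [hje]; omega

end CPaux

namespace CPaux

section Split

variable (p n t : ℕ) [NeZero p]

/-- Sorting key. -/
def phiF (h : Fin t → ZMod p) (a : Fin t → Fin n) : Fin t → ℕ :=
  fun j => rho p (h j) * n + (a j : ℕ)

lemma phiF_lt_of_rho_lt (h : Fin t → ZMod p) (a : Fin t → Fin n) {v v' : Fin t}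
    (hr : rho p (h v) < rho p (h v')) : phiF p n t h a v < phiF p n t h a v' := by
  have h1 : (a v : ℕ) < n := (a v).isLt
  have h2 : (rho p (h v) + 1) * n ≤ rho p (h v') * n :=
    Nat.mul_le_mul_right n (Nat.succ_le_of_lt hr)
  simp only [phiF]
  rw [add_mul, one_mul] at h2
  omega

lemma phiF_inj (h : Fin t → ZMod p) (a : Fin t → Fin n) (ha : Function.Injective a) :
    Function.Injective (phiF p n t h a) := by
  intro v v' he
  rcases lt_trichotomy (rho p (h v)) (rho p (h v')) with hr | hr | hr
  · exact absurd he (Nat.ne_of_lt (phiF_lt_of_rho_lt p n t h a hr))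
  · have : (a v : ℕ) = (a v' : ℕ) := by
      simp only [phiF] at he; rw [hr] at he; omega
    exact ha (Fin.ext this)
  · exact absurd he.symm (Nat.ne_of_lt (phiF_lt_of_rho_lt p n t h a hr))

lemma sigmaLt_of_phiF_lt (h : Fin t → ZMod p) (a : Fin t → Fin n) {v v' : Fin t}
    (hlt : phiF p n t h a v < phiF p n t h a v') :
    sigmaLt p ((a v : ℕ) + 1, h v) ((a v' : ℕ) + 1, h v') := by
  rcases lt_trichotomy (rho p (h v)) (rho p (h v')) with hr | hr | hr
  · exact Or.inl hr
  · refine Or.inr ⟨hr, ?_⟩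
    simp only [phiF] at hlt
    rw [hr] at hlt
    omega
  · exact absurd (phiF_lt_of_rho_lt p n t h a hr) (by omega)

variable (V : Finset (Fin n)) (hV : V.card = t) (h : Fin t → ZMod p)
  (ρ : Equiv.Perm (Fin t))

/-- increasing enumeration of `V`. -/
def aEmb : Fin t ↪o Fin n := V.orderEmbOfFin hV

include hV in
lemma hVc : Vᶜ.card = n - t := by
  rw [Finset.card_compl, hV, Fintype.card_fin]

/-- increasing enumeration of `Vᶜ`. -/
def bEmb : Fin (n - t) ↪o Fin n := Vᶜ.orderEmbOfFin (hVc n t V hV)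

/-- the sorting permutation for the colored values. -/
def uPerm : Equiv.Perm (Fin t) := Tuple.sort (phiF p n t h (aEmb n t V hV))

/-- the `j`-th smallest colored value. -/
def keyP : Fin t → ℕ × ZMod p :=
  fun j => ((aEmb n t V hV (uPerm p n t V hV h j) : ℕ) + 1, h (uPerm p n t V hV h j))

lemma keyP_strict {j j' : Fin t} (hjj : j < j') :
    sigmaLt p (keyP p n t V hV h j) (keyP p n t V hV h j') := by
  have hmono : StrictMono (phiF p n t h (aEmb n t V hV) ∘ (uPerm p n t V hV h)) :=
    (Tuple.monotone_sort _).strictMono_of_injective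
      ((phiF_inj p n t h _ (aEmb n t V hV).injective).comp (Equiv.injective _))
  exact sigmaLt_of_phiF_lt p n t h (aEmb n t V hV) (hmono hjj)

/-- the permutation part of the built colored permutation. -/
def mkF : Fin n → Fin n := fun i =>
  if hi : (i : ℕ) < t then aEmb n t V hV (uPerm p n t V hV h (ρ ⟨(i : ℕ), hi⟩))
  else bEmb n t V hV ⟨(i : ℕ) - t, by have := i.isLt; omega⟩

lemma mkF_inj : Function.Injective (mkF p n t V hV h ρ) := by
  intro i i' he
  simp only [mkF] at he
  by_cases hi : (i : ℕ) < t <;> by_cases hi' : (i' : ℕ) < t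
  · rw [dif_pos hi, dif_pos hi'] at he
    have := (Equiv.injective _) ((Equiv.injective _)
      ((aEmb n t V hV).injective he))
    exact Fin.ext (congrArg Fin.val this : ((⟨(i : ℕ), hi⟩ : Fin t) : ℕ) = _)
  · rw [dif_pos hi, dif_neg hi'] at he
    exfalso
    have h1 := Finset.orderEmbOfFin_mem V hV (uPerm p n t V hV h (ρ ⟨(i : ℕ), hi⟩))
    have h2 := Finset.orderEmbOfFin_mem Vᶜ (hVc n t V hV) ⟨(i' : ℕ) - t, by have := i'.isLt; omega⟩
    rw [Finset.mem_compl] at h2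
    simp only [aEmb, bEmb] at he
    rw [← he] at h2
    exact h2 h1
  · rw [dif_neg hi, dif_pos hi'] at he
    exfalso
    have h1 := Finset.orderEmbOfFin_mem V hV (uPerm p n t V hV h (ρ ⟨(i' : ℕ), hi'⟩))
    have h2 := Finset.orderEmbOfFin_mem Vᶜ (hVc n t V hV) ⟨(i : ℕ) - t, by have := i.isLt; omega⟩
    rw [Finset.mem_compl] at h2
    simp only [aEmb, bEmb] at he
    rw [he] at h2
    exact h2 h1
  · rw [dif_neg hi, dif_neg hi'] at he
    have := (bEmb n t V hV).injective he
    have hval : (i : ℕ) - t = (i' : ℕ) - t := congrArg Fin.val this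
    exact Fin.ext (by omega)

/-- the permutation part as an `Equiv.Perm`. -/
def mkPerm : Equiv.Perm (Fin n) :=
  Equiv.ofBijective (mkF p n t V hV h ρ)
    (Finite.injective_iff_bijective.mp (mkF_inj p n t V hV h ρ))

lemma mkPerm_apply (i : Fin n) : mkPerm p n t V hV h ρ i = mkF p n t V hV h ρ i := rfl

/-- the colors of the built colored permutation. -/
def mkC : Fin n → ZMod p := fun i =>
  if hi : (i : ℕ) < t then h (uPerm p n t V hV h (ρ ⟨(i : ℕ), hi⟩)) else 0

/-- the built colored permutation. -/
def mkCP : ColoredPerm p n := (mkPerm p n t V hV h ρ, mkC p n t V hV h ρ)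

lemma cpPair_mkCP_lt (i : Fin n) (hi : (i : ℕ) < t) :
    cpPair (mkCP p n t V hV h ρ) i = keyP p n t V hV h (ρ ⟨(i : ℕ), hi⟩) := by
  simp only [cpPair, mkCP, mkPerm_apply, mkF, mkC, dif_pos hi, keyP]

lemma cpPair_mkCP_ge (i : Fin n) (hi : ¬ ((i : ℕ) < t)) :
    cpPair (mkCP p n t V hV h ρ) i =
      ((bEmb n t V hV ⟨(i : ℕ) - t, by have := i.isLt; omega⟩ : ℕ) + 1, 0) := by
  simp only [cpPair, mkCP, mkPerm_apply, mkF, mkC, dif_neg hi]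

lemma mkCP_descent_lt (i : Fin n) (hi : (i : ℕ) + 1 < t) (hin : (i : ℕ) + 1 < n)
    (hit : (i : ℕ) < t) :
    cpHasDDescentAt (mkCP p n t V hV h ρ) i ↔
      ρ ⟨(i : ℕ) + 1, hi⟩ < ρ ⟨(i : ℕ), hit⟩ := by
  rw [cpHasDDescentAt, dif_pos hin]
  rw [cpPair_mkCP_lt p n t V hV h ρ ⟨(i : ℕ) + 1, hin⟩ hi]
  rw [cpPair_mkCP_lt p n t V hV h ρ i hit]
  constructor
  · intro hs
    rcases lt_trichotomy (ρ ⟨(i : ℕ) + 1, hi⟩) (ρ ⟨(i : ℕ), hit⟩) with hlt | heq | hgt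
    · exact hlt
    · exfalso
      rw [heq] at hs
      exact sigmaLt_irrefl _ hs
    · exact absurd hs (sigmaLt_asymm (keyP_strict p n t V hV h hgt))
  · intro hlt
    exact keyP_strict p n t V hV h hlt

lemma mkCP_descent_tail (i : Fin n) (hge : t ≤ (i : ℕ)) :
    ¬ cpHasDDescentAt (mkCP p n t V hV h ρ) i := by
  rw [cpHasDDescentAt]
  split_ifs with hin
  · rw [cpPair_mkCP_ge p n t V hV h ρ ⟨(i : ℕ) + 1, hin⟩ (show ¬ ((i : ℕ) + 1 < t) by omega)]
    rw [cpPair_mkCP_ge p n t V hV h ρ i (by omega)]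
    rintro (hlt | ⟨-, hlt⟩)
    · exact absurd hlt (by simp)
    · have hmm : ((⟨(i : ℕ) - t, by have := i.isLt; omega⟩ : Fin (n - t))) <
          (⟨((⟨(i : ℕ) + 1, hin⟩ : Fin n) : ℕ) - t, by have := i.isLt; omega⟩ : Fin (n - t)) :=
        (show (i : ℕ) - t < (i : ℕ) + 1 - t by omega)
      have h2 := (bEmb n t V hV).strictMono hmm
      rw [Fin.lt_def] at h2
      omega
  · simp only [mkCP, mkC, dif_neg (show ¬ ((i : ℕ) < t) by omega)]
    simp

end Split

end CPaux

namespace CPaux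

lemma zmod1_eq_zero (r : ZMod 1) : r = 0 := Subsingleton.elim r 0

lemma rho_one (r : ZMod 1) : rho 1 r = 0 := by
  rw [zmod1_eq_zero r]; simp [rho]

lemma cp1_descent {t : ℕ} (τ : ColoredPerm 1 t) (j : Fin t) (hj : (j : ℕ) + 1 < t) :
    cpHasDDescentAt τ j ↔ (τ.1 ⟨(j : ℕ) + 1, hj⟩ : ℕ) < (τ.1 j : ℕ) := by
  rw [cpHasDDescentAt, dif_pos hj]
  simp [sigmaLt, cpPair, rho_one]

lemma cp1_no_descent_last {t : ℕ} (τ : ColoredPerm 1 t) (j : Fin t) (hj : ¬ ((j : ℕ) + 1 < t)) :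
    ¬ cpHasDDescentAt τ j := by
  rw [cpHasDDescentAt, dif_neg hj]
  simp [zmod1_eq_zero (τ.2 j)]

lemma cp1_descentSet_lt {t : ℕ} (τ : ColoredPerm 1 t) : ∀ q ∈ cpDDescentSet τ, q < t := by
  intro q hq
  obtain ⟨j, hd, rfl⟩ := mem_cpDDescentSet.mp hq
  by_contra hq'
  exact cp1_no_descent_last τ j (by omega) hd

lemma cp1_eta {t : ℕ} (τ : ColoredPerm 1 t) : τ = (τ.1, fun _ => 0) :=
  Prod.ext rfl (funext fun j => zmod1_eq_zero _)

section Split2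

variable (p n t : ℕ) [NeZero p] (V : Finset (Fin n)) (hV : V.card = t) (h : Fin t → ZMod p)
  (ρ : Equiv.Perm (Fin t))

lemma mkF_apply_lt (j : Fin t) (i : Fin n) (hij : (i : ℕ) = (j : ℕ)) :
    mkF p n t V hV h ρ i = aEmb n t V hV (uPerm p n t V hV h (ρ j)) := by
  simp only [mkF]
  rw [dif_pos (show (i : ℕ) < t by rw [hij]; exact j.isLt)]
  exact congrArg _ (congrArg _ (congrArg _ (Fin.ext hij)))

lemma mkC_apply_lt (j : Fin t) (i : Fin n) (hij : (i : ℕ) = (j : ℕ)) :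
    mkC p n t V hV h ρ i = h (uPerm p n t V hV h (ρ j)) := by
  simp only [mkC]
  rw [dif_pos (show (i : ℕ) < t by rw [hij]; exact j.isLt)]
  exact congrArg _ (congrArg _ (congrArg _ (Fin.ext hij)))

lemma descent_heq (ht : t < n) (q : ℕ) (hq : q ≠ t) :
    q ∈ cpDDescentSet (mkCP p n t V hV h ρ) ↔
      q ∈ cpDDescentSet ((ρ, fun _ => 0) : ColoredPerm 1 t) := by
  rw [mem_cpDDescentSet, mem_cpDDescentSet]
  constructor
  · rintro ⟨i, hd, rfl⟩
    rcases lt_trichotomy ((i : ℕ) + 1) t with hi | hi | hi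
    · have hit : (i : ℕ) < t := by omega
      refine ⟨⟨(i : ℕ), hit⟩, ?_, rfl⟩
      rw [cp1_descent _ _ (show ((⟨(i : ℕ), hit⟩ : Fin t) : ℕ) + 1 < t from hi)]
      have hlt := (mkCP_descent_lt p n t V hV h ρ i hi (by omega) hit).mp hd
      exact hlt
    · exact absurd hi hq
    · exact absurd hd (mkCP_descent_tail p n t V hV h ρ i (by omega))
  · rintro ⟨j, hd, rfl⟩
    have hj : (j : ℕ) + 1 < t := by
      by_contra hj'
      exact cp1_no_descent_last _ j hj' hd
    refine ⟨⟨(j : ℕ), lt_trans j.isLt ht⟩, ?_, rfl⟩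
    rw [mkCP_descent_lt p n t V hV h ρ ⟨(j : ℕ), lt_trans j.isLt ht⟩
      (show ((⟨(j : ℕ), lt_trans j.isLt ht⟩ : Fin n) : ℕ) + 1 < t from hj)
      (show (j : ℕ) + 1 < n by omega)
      (show (j : ℕ) < t by omega)]
    have hlt := (cp1_descent _ j hj).mp hd
    exact hlt

lemma mkCP_descentSet (ht : t < n) :
    cpDDescentSet (mkCP p n t V hV h ρ) = cpDDescentSet ((ρ, fun _ => 0) : ColoredPerm 1 t) ∨
    cpDDescentSet (mkCP p n t V hV h ρ) =
      insert t (cpDDescentSet ((ρ, fun _ => 0) : ColoredPerm 1 t)) := by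
  by_cases hb : t ∈ cpDDescentSet (mkCP p n t V hV h ρ)
  · right
    ext q
    by_cases hq : q = t
    · subst hq; simp [hb]
    · rw [Finset.mem_insert, descent_heq p n t V hV h ρ ht q hq]
      simp [hq]
  · left
    ext q
    by_cases hq : q = t
    · subst hq
      simp only [hb, false_iff]
      intro hc
      exact absurd (cp1_descentSet_lt _ _ hc) (lt_irrefl q)
    · exact descent_heq p n t V hV h ρ ht q hq

/-- positions `0,…,t-1` of `Fin n`. -/
def embT (ht : t < n) : Fin t → Fin n := fun j => ⟨(j : ℕ), lt_trans j.isLt ht⟩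

lemma mkF_image (ht : t < n) :
    Finset.univ.image (fun j : Fin t => (mkCP p n t V hV h ρ).1 (embT n t ht j)) = V := by
  ext y
  simp only [Finset.mem_image, Finset.mem_univ, true_and]
  constructor
  · rintro ⟨j, rfl⟩
    rw [show (mkCP p n t V hV h ρ).1 (embT n t ht j) = mkF p n t V hV h ρ (embT n t ht j) from rfl]
    rw [mkF_apply_lt p n t V hV h ρ j (embT n t ht j) rfl]
    exact Finset.orderEmbOfFin_mem V hV _
  · intro hy
    have hy' : y ∈ Set.range (V.orderEmbOfFin hV) := by
      rw [Finset.range_orderEmbOfFin]; exact hy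
    obtain ⟨j0, hj0⟩ := hy'
    refine ⟨ρ.symm ((uPerm p n t V hV h).symm j0), ?_⟩
    rw [show (mkCP p n t V hV h ρ).1 (embT n t ht (ρ.symm ((uPerm p n t V hV h).symm j0)))
        = mkF p n t V hV h ρ (embT n t ht (ρ.symm ((uPerm p n t V hV h).symm j0))) from rfl]
    rw [mkF_apply_lt p n t V hV h ρ (ρ.symm ((uPerm p n t V hV h).symm j0)) _ rfl]
    rw [Equiv.apply_symm_apply, Equiv.apply_symm_apply]
    exact hj0

lemma mk_symm (ht : t < n) (jj : Fin t) :
    (mkCP p n t V hV h ρ).1.symm (aEmb n t V hV jj)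
      = embT n t ht (ρ.symm ((uPerm p n t V hV h).symm jj)) := by
  rw [Equiv.symm_apply_eq]
  rw [show (mkCP p n t V hV h ρ).1 (embT n t ht (ρ.symm ((uPerm p n t V hV h).symm jj)))
      = mkF p n t V hV h ρ (embT n t ht (ρ.symm ((uPerm p n t V hV h).symm jj))) from rfl]
  rw [mkF_apply_lt p n t V hV h ρ (ρ.symm ((uPerm p n t V hV h).symm jj)) _ rfl]
  rw [Equiv.apply_symm_apply, Equiv.apply_symm_apply]

lemma mk_color_recover (ht : t < n) (jj : Fin t) :
    (mkCP p n t V hV h ρ).2 ((mkCP p n t V hV h ρ).1.symm (aEmb n t V hV jj)) = h jj := by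
  rw [mk_symm p n t V hV h ρ ht jj]
  rw [show (mkCP p n t V hV h ρ).2 = mkC p n t V hV h ρ from rfl]
  rw [mkC_apply_lt p n t V hV h ρ (ρ.symm ((uPerm p n t V hV h).symm jj)) _ rfl]
  rw [Equiv.apply_symm_apply, Equiv.apply_symm_apply]

end Split2

end CPaux

namespace CPaux

section SplitMain

variable (p n t : ℕ) [NeZero p]

/-- The assembly map of the split bijection. -/
def XiMap (x : Finset (Fin n) × (Fin t → ZMod p) × ColoredPerm 1 t) : ColoredPerm p n :=
  if hV : x.1.card = t then mkCP p n t x.1 hV x.2.1 x.2.2.1 else (1, fun _ => 0)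

lemma surj_aux (ht : t < n) (σ : ColoredPerm p n)
    (hnd : ∀ i : Fin n, t ≤ (i : ℕ) → ¬ cpHasDDescentAt σ i) :
    ∃ (V : Finset (Fin n)) (hV : V.card = t) (h : Fin t → ZMod p) (ρ : Equiv.Perm (Fin t)),
      mkCP p n t V hV h ρ = σ := by
  have hcol := tail_color hnd
  have hmon := tail_mono hnd
  have hinj1 : Function.Injective (fun j : Fin t => σ.1 (embT n t ht j)) := by
    intro j j' hjj
    have h2 := congrArg Fin.val (σ.1.injective hjj)
    exact Fin.ext h2
  set V : Finset (Fin n) := Finset.univ.image (fun j : Fin t => σ.1 (embT n t ht j)) with hVdef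
  have hV : V.card = t := by
    rw [hVdef, Finset.card_image_of_injective _ hinj1, Finset.card_univ, Fintype.card_fin]
  set h : Fin t → ZMod p := fun jj => σ.2 (σ.1.symm (V.orderEmbOfFin hV jj)) with hhdef
  have hmemV : ∀ j : Fin t, σ.1 (embT n t ht j) ∈ V := by
    intro j; exact Finset.mem_image_of_mem _ (Finset.mem_univ j)
  have hrinj : Function.Injective (fun j : Fin t =>
      (uPerm p n t V hV h).symm ((V.orderIsoOfFin hV).symm ⟨σ.1 (embT n t ht j), hmemV j⟩)) := by
    intro j j' hjj
    have h1 := (uPerm p n t V hV h).symm.injective hjj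
    have h2 := (V.orderIsoOfFin hV).symm.injective h1
    have h3 := congrArg Subtype.val h2
    exact hinj1 h3
  set ρ : Equiv.Perm (Fin t) :=
    Equiv.ofBijective _ (Finite.injective_iff_bijective.mp hrinj) with hρdef
  have hρ : ∀ j : Fin t, ρ j =
      (uPerm p n t V hV h).symm ((V.orderIsoOfFin hV).symm ⟨σ.1 (embT n t ht j), hmemV j⟩) :=
    fun j => rfl
  have hkey : ∀ j : Fin t,
      (V.orderEmbOfFin hV) ((uPerm p n t V hV h) (ρ j)) = σ.1 (embT n t ht j) := by
    intro j
    rw [hρ j, Equiv.apply_symm_apply]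
    have hco := Finset.coe_orderIsoOfFin_apply V hV
      ((V.orderIsoOfFin hV).symm ⟨σ.1 (embT n t ht j), hmemV j⟩)
    rw [← hco, OrderIso.apply_symm_apply]
  have hperm : (mkCP p n t V hV h ρ).1 = σ.1 := by
    apply Equiv.ext
    intro i
    by_cases hi : (i : ℕ) < t
    · have e0 := mkF_apply_lt p n t V hV h ρ ⟨(i : ℕ), hi⟩ i rfl
      rw [show (mkCP p n t V hV h ρ).1 i = mkF p n t V hV h ρ i from rfl, e0]
      simp only [aEmb]
      rw [hkey ⟨(i : ℕ), hi⟩]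
      exact congrArg σ.1 (Fin.ext rfl)
    · have hFmem : ∀ m : Fin (n - t),
          σ.1 ⟨t + (m : ℕ), by have := m.isLt; omega⟩ ∈ Vᶜ := by
        intro m
        rw [Finset.mem_compl]
        intro hc
        obtain ⟨j, -, hj⟩ := Finset.mem_image.mp hc
        have h2 := congrArg Fin.val (σ.1.injective hj)
        have h3 : (j : ℕ) = t + (m : ℕ) := h2
        have := j.isLt
        omega
      have hFmono : StrictMono
          (fun m : Fin (n - t) => σ.1 ⟨t + (m : ℕ), by have := m.isLt; omega⟩) := by
        intro m m' hmm
        have hmm' : (m : ℕ) < (m' : ℕ) := hmm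
        rw [Fin.lt_def]
        exact hmon ⟨t + (m : ℕ), by have := m.isLt; omega⟩ ⟨t + (m' : ℕ), by have := m'.isLt; omega⟩
          (show t ≤ t + (m : ℕ) by omega) (show t + (m : ℕ) < t + (m' : ℕ) by omega)
      have hFeq := Finset.orderEmbOfFin_unique (hVc n t V hV) hFmem hFmono
      have e1 : (mkCP p n t V hV h ρ).1 i
          = bEmb n t V hV ⟨(i : ℕ) - t, by have := i.isLt; omega⟩ := by
        rw [show (mkCP p n t V hV h ρ).1 i = mkF p n t V hV h ρ i from rfl]
        simp only [mkF]
        rw [dif_neg hi]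
      rw [e1]
      simp only [bEmb]
      have e2 := congrFun hFeq ⟨(i : ℕ) - t, by have := i.isLt; omega⟩
      rw [← e2]
      exact congrArg σ.1 (Fin.ext (show t + ((i : ℕ) - t) = (i : ℕ) by omega))
  have hcolors : (mkCP p n t V hV h ρ).2 = σ.2 := by
    funext i
    by_cases hi : (i : ℕ) < t
    · have e0 := mkC_apply_lt p n t V hV h ρ ⟨(i : ℕ), hi⟩ i rfl
      rw [show (mkCP p n t V hV h ρ).2 i = mkC p n t V hV h ρ i from rfl, e0]
      rw [hhdef]
      simp only
      rw [hkey ⟨(i : ℕ), hi⟩, Equiv.symm_apply_apply]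
      exact congrArg σ.2 (Fin.ext rfl)
    · rw [show (mkCP p n t V hV h ρ).2 i = mkC p n t V hV h ρ i from rfl]
      simp only [mkC]
      rw [dif_neg hi]
      exact (hcol i (by omega)).symm
  exact ⟨V, hV, h, ρ, Prod.ext hperm hcolors⟩

theorem split_general (ht : t < n) (T' : Finset ℕ) (hT' : ∀ q ∈ T', q < t) :
    (Finset.univ.filter fun σ : ColoredPerm p n => cpDDescentSet σ = insert t T').card
    + (Finset.univ.filter fun σ : ColoredPerm p n => cpDDescentSet σ = T').card
    = n.choose t * (p ^ t *
      (Finset.univ.filter fun τ : ColoredPerm 1 t => cpDDescentSet τ = T').card) := by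
  classical
  have hLcard :
      (Finset.univ.filter fun σ : ColoredPerm p n =>
        cpDDescentSet σ = insert t T' ∨ cpDDescentSet σ = T').card
      = (Finset.univ.filter fun σ : ColoredPerm p n => cpDDescentSet σ = insert t T').card
        + (Finset.univ.filter fun σ : ColoredPerm p n => cpDDescentSet σ = T').card := by
    rw [Finset.filter_or]
    apply Finset.card_union_of_disjoint
    rw [Finset.disjoint_left]
    intro σ h1 h2
    have e1 := (Finset.mem_filter.mp h1).2
    have e2 := (Finset.mem_filter.mp h2).2
    have e3 : insert t T' = T' := e1.symm.trans e2
    have ht' : t ∈ T' := by rw [← e3]; exact Finset.mem_insert_self _ _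
    exact absurd (hT' t ht') (lt_irrefl t)
  rw [← hLcard]
  have hmain : ((Finset.powersetCard t (Finset.univ : Finset (Fin n))) ×ˢ
      ((Finset.univ : Finset (Fin t → ZMod p)) ×ˢ
        (Finset.univ.filter fun τ : ColoredPerm 1 t => cpDDescentSet τ = T'))).card
      = (Finset.univ.filter fun σ : ColoredPerm p n =>
          cpDDescentSet σ = insert t T' ∨ cpDDescentSet σ = T').card := by
    apply Finset.card_nbij (XiMap p n t)
    · -- maps to
      intro x hx
      obtain ⟨V, h, τ⟩ := x
      rw [Finset.mem_coe, Finset.mem_product] at hx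
      obtain ⟨hx1, hx2⟩ := hx
      rw [Finset.mem_product] at hx2
      obtain ⟨-, hx3⟩ := hx2
      have hV : V.card = t := Finset.mem_powersetCard_univ.mp hx1
      have hτ : cpDDescentSet τ = T' := (Finset.mem_filter.mp hx3).2
      rw [Finset.mem_coe, Finset.mem_filter]
      refine ⟨Finset.mem_univ _, ?_⟩
      have hXi : XiMap p n t (V, h, τ) = mkCP p n t V hV h τ.1 := dif_pos hV
      rw [hXi]
      have hDS := mkCP_descentSet p n t V hV h τ.1 ht
      rw [← cp1_eta τ, hτ] at hDS
      exact hDS.symm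
    · -- injective
      rintro ⟨V, h, τ⟩ hx ⟨V', h', τ'⟩ hy hxy
      have hx' := Finset.mem_coe.mp hx
      have hy' := Finset.mem_coe.mp hy
      rw [Finset.mem_product] at hx' hy'
      have hV : V.card = t := Finset.mem_powersetCard_univ.mp hx'.1
      have hV' : V'.card = t := Finset.mem_powersetCard_univ.mp hy'.1
      have e1 : XiMap p n t (V, h, τ) = mkCP p n t V hV h τ.1 := dif_pos hV
      have e2 : XiMap p n t (V', h', τ') = mkCP p n t V' hV' h' τ'.1 := dif_pos hV'
      rw [e1, e2] at hxy
      have hVV : V = V' := by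
        rw [← mkF_image p n t V hV h τ.1 ht, ← mkF_image p n t V' hV' h' τ'.1 ht, hxy]
      subst hVV
      have hh : h = h' := by
        funext jj
        have r1 := mk_color_recover p n t V hV h τ.1 ht jj
        have r2 := mk_color_recover p n t V hV' h' τ'.1 ht jj
        rw [hxy] at r1
        exact r1.symm.trans r2
      subst hh
      have hτ1 : τ.1 = τ'.1 := by
        apply Equiv.ext
        intro j
        have a1 : (mkCP p n t V hV h τ.1).1 (embT n t ht j)
            = aEmb n t V hV (uPerm p n t V hV h (τ.1 j)) :=
          mkF_apply_lt p n t V hV h τ.1 j _ rfl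
        have a2 : (mkCP p n t V hV' h τ'.1).1 (embT n t ht j)
            = aEmb n t V hV' (uPerm p n t V hV' h (τ'.1 j)) :=
          mkF_apply_lt p n t V hV' h τ'.1 j _ rfl
        rw [hxy] at a1
        have a3 := a1.symm.trans a2
        have a4 := (aEmb n t V hV).injective a3
        exact (uPerm p n t V hV h).injective a4
      have hττ : τ = τ' := by
        rw [cp1_eta τ, cp1_eta τ', hτ1]
      rw [hττ]
    · -- surjective
      intro σ hσ
      have hσ' := Finset.mem_coe.mp hσ
      have hD := (Finset.mem_filter.mp hσ').2
      have hnd : ∀ i : Fin n, t ≤ (i : ℕ) → ¬ cpHasDDescentAt σ i := by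
        intro i hi hdesc
        have hmem : (i : ℕ) + 1 ∈ cpDDescentSet σ := mem_cpDDescentSet.mpr ⟨i, hdesc, rfl⟩
        rcases hD with hD | hD <;> rw [hD] at hmem
        · rcases Finset.mem_insert.mp hmem with hc | hc
          · omega
          · have := hT' _ hc; omega
        · have := hT' _ hmem; omega
      obtain ⟨V, hV, h, ρ, hmk⟩ := surj_aux p n t ht σ hnd
      set τ : ColoredPerm 1 t := (ρ, fun _ => 0) with hτdef
      have hXi : XiMap p n t (V, h, τ) = σ := by
        rw [show XiMap p n t (V, h, τ) = mkCP p n t V hV h τ.1 from dif_pos hV]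
        exact hmk
      have hDτ : cpDDescentSet τ = T' := by
        ext q
        by_cases hq : q = t
        · subst hq
          constructor
          · intro hc
            exact absurd (cp1_descentSet_lt _ _ hc) (lt_irrefl q)
          · intro hc
            exact absurd (hT' _ hc) (lt_irrefl q)
        · have hiff := descent_heq p n t V hV h ρ ht q hq
          rw [hmk] at hiff
          rw [← hiff]
          rcases hD with hD | hD
          · rw [hD, Finset.mem_insert]
            constructor
            · rintro (hc | hc)
              · exact absurd hc hq
              · exact hc
            · exact Or.inr
          · rw [hD]
      rw [Set.mem_image]
      refine ⟨(V, h, τ), ?_, hXi⟩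
      rw [Finset.mem_coe, Finset.mem_product]
      refine ⟨Finset.mem_powersetCard_univ.mpr hV, ?_⟩
      rw [Finset.mem_product]
      exact ⟨Finset.mem_univ _, Finset.mem_filter.mpr ⟨Finset.mem_univ _, hDτ⟩⟩
  rw [← hmain]
  rw [Finset.card_product, Finset.card_product, Finset.card_powersetCard,
    Finset.card_univ, Finset.card_univ, Fintype.card_fin, Fintype.card_fun,
    ZMod.card, Fintype.card_fin]

end SplitMain

end CPaux

namespace CPaux

lemma base_count (p n : ℕ) [NeZero p] :
    (Finset.univ.filter fun σ : ColoredPerm p n => cpDDescentSet σ = ∅).card = 1 := by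
  have hset : (Finset.univ.filter fun σ : ColoredPerm p n => cpDDescentSet σ = ∅)
      = {((1 : Equiv.Perm (Fin n)), fun _ => (0 : ZMod p))} := by
    ext σ
    rw [Finset.mem_filter, Finset.mem_singleton]
    constructor
    · rintro ⟨-, hD⟩
      have hnd : ∀ i : Fin n, 0 ≤ (i : ℕ) → ¬ cpHasDDescentAt σ i := by
        intro i _ hdesc
        have hmem : (i : ℕ) + 1 ∈ cpDDescentSet σ := mem_cpDDescentSet.mpr ⟨i, hdesc, rfl⟩
        rw [hD] at hmem
        exact absurd hmem (Finset.notMem_empty _)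
      have hcol := tail_color hnd
      have hmon := tail_mono hnd
      have hperm : σ.1 = 1 := by
        have hsm : StrictMono (⇑σ.1) := by
          intro a b hab
          rw [Fin.lt_def]
          exact hmon a b (Nat.zero_le _) hab
        have hcu : (Finset.univ : Finset (Fin n)).card = n := by
          rw [Finset.card_univ, Fintype.card_fin]
        have h1 := Finset.orderEmbOfFin_unique hcu (fun x => Finset.mem_univ (σ.1 x)) hsm
        have h2 := Finset.orderEmbOfFin_unique hcu (fun x : Fin n => Finset.mem_univ x)
          (strictMono_id)
        apply Equiv.ext
        intro i
        have h3 := congrFun (h1.trans h2.symm) i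
        simpa using h3
      have hcolall : σ.2 = fun _ => 0 := funext fun i => hcol i (Nat.zero_le _)
      exact Prod.ext hperm hcolall
    · rintro rfl
      refine ⟨Finset.mem_univ _, ?_⟩
      rw [Finset.eq_empty_iff_forall_notMem]
      intro q hq
      obtain ⟨i, hdesc, rfl⟩ := mem_cpDDescentSet.mp hq
      rw [cpHasDDescentAt] at hdesc
      by_cases hin : (i : ℕ) + 1 < n
      · rw [dif_pos hin] at hdesc
        rcases hdesc with hlt | ⟨-, hlt⟩
        · have h0 : rho p (0 : ZMod p) = 0 := by simp [rho]
          have hlt' : rho p (0 : ZMod p) < rho p (0 : ZMod p) := hlt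
          omega
        · have hlt' : (i : ℕ) + 1 + 1 < (i : ℕ) + 1 := hlt
          omega
      · rw [dif_neg hin] at hdesc
        exact hdesc rfl
  rw [hset, Finset.card_singleton]

lemma chain_lt {k : ℕ} {s : ℕ → ℕ} (hmono : ∀ i ≤ k, s i < s (i + 1)) :
    ∀ a b, a < b → b ≤ k + 1 → s a < s b := by
  intro a b
  induction b with
  | zero => omega
  | succ m ih =>
    intro hab hbk
    rcases Nat.lt_succ_iff_lt_or_eq.mp hab with hc | hc
    · exact lt_trans (ih hc (by omega)) (hmono m (by omega))
    · subst hc; exact hmono a (by omega)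

/-- The matrix of the statement. -/
def theMat (p n k : ℕ) (s : ℕ → ℕ) : Matrix (Fin (k + 1)) (Fin (k + 1)) ℝ :=
  Matrix.of fun i j : Fin (k + 1) =>
    if (j : ℕ) = k then ((p : ℝ)⁻¹) ^ (n - s (i : ℕ)) * invFact ((n : ℤ) - s (i : ℕ))
    else invFact ((s ((j : ℕ) + 1) : ℤ) - s ((i : ℕ)))

lemma det_step (p n k : ℕ) (s : ℕ → ℕ) (hmono : ∀ i ≤ k, s i < s (i + 1)) :
    (theMat p n (k + 1) s).det
      = ((p : ℝ)⁻¹) ^ (n - s (k + 1)) * invFact ((n : ℤ) - s (k + 1))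
          * (theMat 1 (s (k + 1)) k s).det
        - (theMat p n k s).det := by
  have hsub1 : (theMat p n (k+1) s).submatrix (Fin.last (k+1)).succAbove
      (Fin.last (k+1)).succAbove = theMat 1 (s (k+1)) k s := by
    rw [Fin.succAbove_last]
    ext i j
    simp only [Matrix.submatrix_apply, theMat, Matrix.of_apply, Fin.coe_castSucc]
    by_cases hjk : (j : ℕ) = k
    · rw [if_neg (by omega), if_pos hjk, hjk]
      norm_num
    · rw [if_neg (by omega), if_neg hjk]
  have hsub2 : (theMat p n (k+1) s).submatrix (Fin.last (k+1)).succAbove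
      (Fin.castSucc (Fin.last k)).succAbove = theMat p n k s := by
    rw [Fin.succAbove_last]
    ext i j
    simp only [Matrix.submatrix_apply, theMat, Matrix.of_apply, Fin.coe_castSucc]
    by_cases hjk : (j : ℕ) = k
    · have hcol : (((Fin.castSucc (Fin.last k)).succAbove j : Fin (k+2)) : ℕ) = k + 1 := by
        simp [Fin.succAbove, Fin.lt_def, hjk]
      simp only [hcol]
      rw [if_pos trivial, if_pos hjk]
    · have hcol : (((Fin.castSucc (Fin.last k)).succAbove j : Fin (k+2)) : ℕ) = (j : ℕ) := by
        simp only [Fin.succAbove, Fin.lt_def, Fin.coe_castSucc, Fin.val_last]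
        split_ifs with hc
        · rfl
        · omega
      simp only [hcol]
      rw [if_neg (by omega), if_neg hjk]
  have hzero : ∀ j : Fin (k+2), (j : ℕ) < k → theMat p n (k+1) s (Fin.last (k+1)) j = 0 := by
    intro j hj
    simp only [theMat, Matrix.of_apply, Fin.val_last]
    rw [if_neg (by omega)]
    apply invFact_neg
    have hc := chain_lt hmono ((j : ℕ) + 1) (k + 1) (by omega) (by omega)
    omega
  have hentry1 : theMat p n (k+1) s (Fin.last (k+1)) (Fin.castSucc (Fin.last k)) = 1 := by
    simp only [theMat, Matrix.of_apply, Fin.val_last, Fin.coe_castSucc]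
    rw [if_neg (by omega), sub_self, invFact_zero]
  have hentry2 : theMat p n (k+1) s (Fin.last (k+1)) (Fin.last (k+1))
      = ((p : ℝ)⁻¹) ^ (n - s (k + 1)) * invFact ((n : ℤ) - s (k + 1)) := by
    simp only [theMat, Matrix.of_apply, Fin.val_last]
    rw [if_pos trivial]
  rw [Matrix.det_succ_row (theMat p n (k+1) s) (Fin.last (k+1))]
  rw [Fin.sum_univ_castSucc]
  rw [Fin.sum_univ_castSucc]
  rw [Finset.sum_eq_zero (fun j _ => by
    rw [hzero (Fin.castSucc (Fin.castSucc j)) j.isLt]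
    ring)]
  rw [hsub1, hsub2, hentry1, hentry2]
  have hsign1 : ((Fin.last (k+1) : Fin (k+2)) : ℕ) + ((Fin.castSucc (Fin.last k) : Fin (k+2)) : ℕ) = 2*k+1 := by
    simp [Fin.val_last, Fin.coe_castSucc]; ring
  have hsign2 : ((Fin.last (k+1) : Fin (k+2)) : ℕ) + ((Fin.last (k+1) : Fin (k+2)) : ℕ) = 2*(k+1) := by
    simp [Fin.val_last]; ring
  rw [hsign1, hsign2]
  rw [Odd.neg_one_pow ⟨k, by ring⟩, Even.neg_one_pow ⟨k+1, by ring⟩]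
  ring

end CPaux

namespace CPaux

theorem aux_count : ∀ (k p n : ℕ) [NeZero p] (s : ℕ → ℕ), s 0 = 0 →
    (∀ i ≤ k, s i < s (i + 1)) → s (k + 1) = n →
    ((Finset.univ.filter fun σ : ColoredPerm p n =>
        cpDDescentSet σ = (Finset.Icc 1 k).image s).card : ℝ)
      = (theMat p n k s).det * ((p : ℝ) ^ n * (n.factorial : ℝ)) := by
  intro k
  induction k with
  | zero =>
    intro p n _ s hs0 hmono hlast
    have himg : (Finset.Icc 1 0).image s = (∅ : Finset ℕ) := by
      rw [show (Finset.Icc 1 0) = (∅ : Finset ℕ) from Finset.Icc_eq_empty (by omega)]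
      exact Finset.image_empty s
    rw [himg, base_count]
    rw [show (theMat p n 0 s).det = theMat p n 0 s 0 0 from Matrix.det_fin_one _]
    have hv0 : ((0 : Fin 1) : ℕ) = 0 := rfl
    have h00 : theMat p n 0 s 0 0 = ((p : ℝ)⁻¹) ^ n * ((n.factorial : ℝ))⁻¹ := by
      simp only [theMat, Matrix.of_apply, hv0]
      rw [if_pos trivial, hs0, Nat.sub_zero]
      rw [show ((n : ℤ) - ((0 : ℕ) : ℤ)) = ((n : ℕ) : ℤ) by simp]
      rw [invFact_ofNat]
    rw [h00, Nat.cast_one, inv_pow]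
    have hp : (p : ℝ) ≠ 0 := Nat.cast_ne_zero.mpr (NeZero.ne p)
    have hf : ((n.factorial : ℕ) : ℝ) ≠ 0 := Nat.cast_ne_zero.mpr (Nat.factorial_ne_zero n)
    field_simp
  | succ k IH =>
    intro p n _ s hs0 hmono hlast
    have htn : s (k + 1) < n := by
      rw [← hlast]; exact hmono (k + 1) le_rfl
    have hT' : ∀ q ∈ (Finset.Icc 1 k).image s, q < s (k + 1) := by
      intro q hq
      obtain ⟨j, hj, rfl⟩ := Finset.mem_image.mp hq
      rw [Finset.mem_Icc] at hj
      exact chain_lt hmono j (k + 1) (by omega) (by omega)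
    have himg : (Finset.Icc 1 (k + 1)).image s
        = insert (s (k + 1)) ((Finset.Icc 1 k).image s) := by
      rw [← Finset.insert_Icc_right_eq_Icc_add_one (by omega : 1 ≤ k + 1), Finset.image_insert]
    have hsplit := split_general p n (s (k + 1)) htn ((Finset.Icc 1 k).image s) hT'
    -- IH applied with the truncated sequence
    have hmono' : ∀ i ≤ k, (fun i => if i ≤ k then s i else n) i
        < (fun i => if i ≤ k then s i else n) (i + 1) := by
      intro i hi
      by_cases hik : i < k
      · simp only
        rw [if_pos hi, if_pos (by omega)]
        exact hmono i (by omega)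
      · have hik' : i = k := by omega
        subst hik'
        simp only
        rw [if_pos le_rfl, if_neg (by omega)]
        calc s i < s (i + 1) := hmono i (by omega)
          _ < s (i + 2) := hmono (i + 1) le_rfl
          _ = n := by rw [← hlast]
    have hIH1 := IH p n (fun i => if i ≤ k then s i else n)
      (by rw [if_pos (Nat.zero_le k)]; exact hs0) hmono'
      (by rw [if_neg (by omega)])
    have himg1 : (Finset.Icc 1 k).image (fun i => if i ≤ k then s i else n)
        = (Finset.Icc 1 k).image s := by
      apply Finset.image_congr
      intro j hj
      rw [Finset.mem_coe, Finset.mem_Icc] at hj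
      simp only
      rw [if_pos hj.2]
    have hmat1 : theMat p n k (fun i => if i ≤ k then s i else n) = theMat p n k s := by
      ext i j
      simp only [theMat, Matrix.of_apply]
      have hi' : (if (i : ℕ) ≤ k then s (i : ℕ) else n) = s (i : ℕ) := by
        rw [if_pos (by omega : (i : ℕ) ≤ k)]
      by_cases hjk : (j : ℕ) = k
      · rw [if_pos hjk, if_pos hjk, hi']
      · rw [if_neg hjk, if_neg hjk, hi']
        have hj2 : (j : ℕ) + 1 ≤ k := by have := j.isLt; omega
        rw [if_pos hj2]
    rw [himg1, hmat1] at hIH1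
    have hIH2 := IH 1 (s (k + 1)) s hs0 (fun i hi => hmono i (by omega)) rfl
    norm_num at hIH2
    have hdet := det_step p n k s (fun i hi => hmono i (by omega))
    -- arithmetic assembly
    have hcast : ((Finset.univ.filter fun σ : ColoredPerm p n =>
        cpDDescentSet σ = insert (s (k+1)) ((Finset.Icc 1 k).image s)).card : ℝ)
        + ((Finset.univ.filter fun σ : ColoredPerm p n =>
            cpDDescentSet σ = (Finset.Icc 1 k).image s).card : ℝ)
        = (n.choose (s (k+1)) : ℝ) * ((p : ℝ) ^ (s (k+1)) *
            ((Finset.univ.filter fun τ : ColoredPerm 1 (s (k+1)) =>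
              cpDDescentSet τ = (Finset.Icc 1 k).image s).card : ℝ)) := by
      exact_mod_cast hsplit
    rw [himg]
    rw [hIH1] at hcast
    rw [hIH2] at hcast
    rw [hdet]
    -- scalar identity
    have hp : (p : ℝ) ≠ 0 := Nat.cast_ne_zero.mpr (NeZero.ne p)
    have hfact : ((n.choose (s (k+1)) : ℕ) : ℝ) * ((s (k+1)).factorial : ℝ)
        * ((n - s (k+1)).factorial : ℝ) = (n.factorial : ℝ) := by
      exact_mod_cast congrArg (Nat.cast (R := ℝ))
        (Nat.choose_mul_factorial_mul_factorial (le_of_lt htn))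
    have hinv : invFact ((n : ℤ) - (s (k+1) : ℕ)) = (((n - s (k+1)).factorial : ℝ))⁻¹ := by
      rw [show ((n : ℤ) - (s (k+1) : ℕ)) = ((n - s (k+1) : ℕ) : ℤ) by omega, invFact_ofNat]
    have hpow : ((p : ℝ)) ^ n = (p : ℝ) ^ (s (k+1)) * (p : ℝ) ^ (n - s (k+1)) := by
      rw [← pow_add]
      congr 1
      omega
    have hscal : (n.choose (s (k+1)) : ℝ) * ((p : ℝ) ^ (s (k+1)) *
          ((s (k+1)).factorial : ℝ))
        = ((p : ℝ)⁻¹) ^ (n - s (k+1)) * invFact ((n : ℤ) - (s (k+1) : ℕ))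
          * ((p : ℝ) ^ n * (n.factorial : ℝ)) := by
      rw [hinv, hpow, inv_pow]
      have hftn : (((n - s (k+1)).factorial : ℕ) : ℝ) ≠ 0 :=
        Nat.cast_ne_zero.mpr (Nat.factorial_ne_zero _)
      have hpn : (p : ℝ) ^ (n - s (k+1)) ≠ 0 := pow_ne_zero _ hp
      field_simp
      linear_combination hfact
    -- combine
    linear_combination hcast + (theMat 1 (s (k+1)) k s).det * hscal

end CPaux

/-- **Corollary (uniform distribution on `G_{p,n}`, d-descents, case `s_k < n`).**
For `0 = s_0 < s_1 < ⋯ < s_k < n`, `s_{k+1} := n`, the probability that the d-descent set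
of a uniformly random `σ ∈ G_{p,n}` equals `{s_1,…,s_k}` is `det(g(i,j))_{i,j=0,…,k}`, with
`g(i,j) = 1/(s_{j+1}-s_i)!` for `j < k` and `g(i,k) = (1/p)^{n-s_i}/(n-s_i)!`. -/
theorem statement4 (p n k : ℕ) [NeZero p] (hn : 1 ≤ n)
    (s : ℕ → ℕ) (hs0 : s 0 = 0) (hmono : ∀ i, i ≤ k → s i < s (i + 1))
    (hlast : s (k + 1) = n) :
    ((Finset.univ.filter fun σ : ColoredPerm p n =>
        cpDDescentSet σ = (Finset.Icc 1 k).image s).card : ℝ)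
        / (Fintype.card (ColoredPerm p n) : ℝ)
      = (Matrix.of fun i j : Fin (k + 1) =>
          if (j : ℕ) = k then ((p : ℝ)⁻¹) ^ (n - s (i : ℕ)) * invFact ((n : ℤ) - s (i : ℕ))
          else invFact ((s ((j : ℕ) + 1) : ℤ) - s (i : ℕ))).det := by
  have hcard : Fintype.card (ColoredPerm p n) = n.factorial * p ^ n := by
    rw [Fintype.card_prod, Fintype.card_perm, Fintype.card_fun, ZMod.card,
      Fintype.card_fin]
  have hp : (p : ℝ) ≠ 0 := Nat.cast_ne_zero.mpr (NeZero.ne p)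
  have hf : ((n.factorial : ℕ) : ℝ) ≠ 0 := Nat.cast_ne_zero.mpr (Nat.factorial_ne_zero n)
  have hne : (Fintype.card (ColoredPerm p n) : ℝ) ≠ 0 := by
    rw [hcard]
    push_cast
    exact mul_ne_zero hf (pow_ne_zero _ hp)
  have haux2 : ((Finset.univ.filter fun σ : ColoredPerm p n =>
        cpDDescentSet σ = (Finset.Icc 1 k).image s).card : ℝ)
      = (Matrix.of fun i j : Fin (k + 1) =>
          if (j : ℕ) = k then ((p : ℝ)⁻¹) ^ (n - s (i : ℕ)) * invFact ((n : ℤ) - s (i : ℕ))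
          else invFact ((s ((j : ℕ) + 1) : ℤ) - s (i : ℕ))).det
        * ((p : ℝ) ^ n * (n.factorial : ℝ)) :=
    CPaux.aux_count k p n s hs0 (fun i hi => hmono i hi) hlast
  rw [div_eq_iff hne, haux2, hcard]
  push_cast
  ring

end
end

section
/- Let p ≥ 1, c ≥ 1 be integers and b = pc + 1, and define f : {0,…,b−1} → {0,…,b−1} by f(x) := px mod b. Then (i) f is a bijection of {0,…,b−1}; (ii) for all x, y ∈ {0,…,b−1}, x < y if and only if f(x) ≺ f(y); and (iii) for x ∈ {0,…,b−1}, x > c if and only if f(x) ≢ 0 (mod p). -/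
noncomputable section

/-- Rank of a residue `r ∈ {0,…,p-1}` in the order `0, p-1, p-2, …, 1`. -/
def rhoNat (p r : ℕ) : ℕ := if r = 0 then 0 else p - r

/-- The tilde order `≺` on `{0,…,b-1}` (for `b = pc+1`): writing `x = jp + r`,
`x ≺ y` iff the residue of `x` comes strictly earlier in the order `0, p-1, …, 1`,
or the residues agree and `⌊x/p⌋ < ⌊y/p⌋`. -/
def tildeLt (p x y : ℕ) : Prop :=
  rhoNat p (x % p) < rhoNat p (y % p) ∨ (rhoNat p (x % p) = rhoNat p (y % p) ∧ x / p < y / p)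

lemma tildeLt_irrefl (p a : ℕ) : ¬ tildeLt p a a := by simp [tildeLt]

lemma rho_eval (p q : ℕ) (h : q < p) : rhoNat p (if q = 0 then 0 else p - q) = q := by
  rcases eq_or_ne q 0 with h0 | h0
  · simp [h0, rhoNat]
  · simp only [if_neg h0, rhoNat]
    rw [if_neg (by omega)]
    omega

lemma key (p c x : ℕ) (hp : 1 ≤ p) (hx : x < p * c + 1) :
    p * x / (p * c + 1) < p ∧
    (p * x % (p * c + 1)) % p = (if p * x / (p * c + 1) = 0 then 0 else p - p * x / (p * c + 1)) ∧
    (p * x % (p * c + 1)) / p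
      = (if p * x / (p * c + 1) = 0 then x else x - c * (p * x / (p * c + 1)) - 1) ∧
    (p * x / (p * c + 1) = 0 ↔ x ≤ c) ∧
    (p * x / (p * c + 1) ≠ 0 → c * (p * x / (p * c + 1)) < x) := by
  obtain ⟨q, hqdef⟩ : ∃ q, p * x / (p * c + 1) = q := ⟨_, rfl⟩
  obtain ⟨r, hrdef⟩ : ∃ r, p * x % (p * c + 1) = r := ⟨_, rfl⟩
  rw [hqdef, hrdef]
  obtain ⟨k, hkdef⟩ : ∃ k, r / p = k := ⟨_, rfl⟩
  obtain ⟨m, hmdef⟩ : ∃ m, r % p = m := ⟨_, rfl⟩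
  rw [hkdef, hmdef]
  have hdm : (p * c + 1) * q + r = p * x := by
    rw [← hqdef, ← hrdef]; exact Nat.div_add_mod _ _
  have hrb : r < p * c + 1 := by
    rw [← hrdef]; exact Nat.mod_lt _ (by positivity)
  have hqp : q < p := by
    rw [← hqdef]
    apply Nat.div_lt_of_lt_mul
    calc p * x < p * (p * c + 1) := by nlinarith
    _ = (p * c + 1) * p := mul_comm _ _
  have hdm2 : p * k + m = r := by rw [← hkdef, ← hmdef]; exact Nat.div_add_mod _ _
  have hm : m < p := by rw [← hmdef]; exact Nat.mod_lt _ hp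
  obtain ⟨u, hu⟩ : ∃ u, c * q = u := ⟨_, rfl⟩
  rw [hu]
  have hexp : (p * c + 1) * q = p * u + q := by rw [← hu]; ring
  have hEq : p * u + p * k + (q + m) = p * x := by linarith
  have hux : u + k ≤ x := by
    refine Nat.le_of_mul_le_mul_left ?_ hp
    have : p * (u + k) = p * u + p * k := by ring
    linarith
  obtain ⟨t, hwt⟩ : ∃ t, (u + k) + t = x := ⟨x - (u + k), by omega⟩
  have hpt : q + m = p * t := by
    have h4 : p * u + p * k + p * t = p * x := by rw [← hwt]; ring
    linarith
  have ht2 : t < 2 := by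
    by_contra hcon
    push_neg at hcon
    have : p * 2 ≤ p * t := Nat.mul_le_mul_left p hcon
    linarith
  rcases (show t = 0 ∨ t = 1 by omega) with h0 | h1
  · rw [h0, mul_zero] at hpt
    have hq0 : q = 0 := by omega
    have hu0 : u = 0 := by rw [← hu, hq0, mul_zero]
    have hxc : x ≤ c := by
      rw [hq0, mul_zero, zero_add] at hdm
      have hpx : p * x < p * c + 1 := by omega
      by_contra hcc
      push_neg at hcc
      have h5 : p * (c + 1) ≤ p * x := Nat.mul_le_mul_left p hcc
      rw [Nat.mul_add, mul_one] at h5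
      omega
    refine ⟨hqp, by simp [hq0]; omega, by simp [hq0]; omega, by simp [hq0, hxc], by simp [hq0]⟩
  · rw [h1, mul_one] at hpt
    have hqne : q ≠ 0 := by omega
    refine ⟨hqp, ?_, ?_, ?_, ?_⟩
    · rw [if_neg hqne]; omega
    · rw [if_neg hqne]; omega
    · constructor
      · intro h; exact absurd h hqne
      · intro hxc
        exfalso
        have h1 : p * c + 1 ≤ p * x := by
          rcases Nat.lt_or_ge (p * x) (p * c + 1) with h | h
          · exact absurd ((Nat.div_eq_of_lt h).symm.trans hqdef) (by omega)
          · exact h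
        have h2 : p * x ≤ p * c := Nat.mul_le_mul_left p hxc
        omega
    · intro _; omega

/-- **Lemma.** For `b = pc + 1`, the map `f(x) = px mod b` is a bijection of `{0,…,b-1}`;
it is order preserving from the usual order `<` to the tilde order `≺`; and `x > c` iff
`f(x) ≢ 0 (mod p)`. -/
theorem statement9 (p c : ℕ) (hp : 1 ≤ p) (hc : 1 ≤ c)
    (b : ℕ) (hb : b = p * c + 1)
    (f : Fin b → Fin b) (hf : ∀ x : Fin b, (f x : ℕ) = p * (x : ℕ) % b) :
    Function.Bijective f
      ∧ (∀ x y : Fin b, x < y ↔ tildeLt p (f x : ℕ) (f y : ℕ))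
      ∧ (∀ x : Fin b, c < (x : ℕ) ↔ ¬((f x : ℕ) % p = 0)) := by
  subst hb
  have horder : ∀ x y : Fin (p * c + 1), x < y ↔ tildeLt p (f x : ℕ) (f y : ℕ) := by
    intro x y
    obtain ⟨hq1, hm1, hk1, hqc1, hlt1⟩ := key p c x hp x.isLt
    obtain ⟨hq2, hm2, hk2, hqc2, hlt2⟩ := key p c y hp y.isLt
    rw [Fin.lt_def, tildeLt, hf x, hf y, hm1, hm2, rho_eval p _ hq1, rho_eval p _ hq2, hk1, hk2]
    constructor
    · intro hxy
      have hmono : p * (x : ℕ) / (p * c + 1) ≤ p * (y : ℕ) / (p * c + 1) :=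
        Nat.div_le_div_right (Nat.mul_le_mul_left p hxy.le)
      rcases eq_or_lt_of_le hmono with heq | hlt
      · right
        refine ⟨heq, ?_⟩
        rcases eq_or_ne (p * (x : ℕ) / (p * c + 1)) 0 with h0 | h0
        · rw [if_pos h0, if_pos (heq ▸ h0)]
          exact hxy
        · have h0' : p * (y : ℕ) / (p * c + 1) ≠ 0 := heq ▸ h0
          rw [if_neg h0, if_neg h0', ← heq]
          have h1 := hlt1 h0
          have h2 := hlt2 h0'
          rw [← heq] at h2
          omega
      · left; exact hlt
    · rintro (hlt | ⟨heq, hdiv⟩)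
      · rcases Nat.lt_or_ge (x : ℕ) (y : ℕ) with h | h
        · exact h
        · have h3 : p * (y : ℕ) / (p * c + 1) ≤ p * (x : ℕ) / (p * c + 1) :=
            Nat.div_le_div_right (Nat.mul_le_mul_left p h)
          omega
      · rcases eq_or_ne (p * (x : ℕ) / (p * c + 1)) 0 with h0 | h0
        · rwa [if_pos h0, if_pos (heq ▸ h0)] at hdiv
        · have h0' : p * (y : ℕ) / (p * c + 1) ≠ 0 := heq ▸ h0
          rw [if_neg h0, if_neg h0', ← heq] at hdiv
          have h1 := hlt1 h0
          have h2 := hlt2 h0'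
          rw [← heq] at h2
          omega
  have hinj : Function.Injective f := by
    intro x y hxy
    by_contra hne
    rcases Ne.lt_or_gt hne with h | h
    · have := (horder x y).mp h
      rw [hxy] at this
      exact tildeLt_irrefl p _ this
    · have := (horder y x).mp h
      rw [hxy] at this
      exact tildeLt_irrefl p _ this
  refine ⟨Finite.injective_iff_bijective.mp hinj, horder, ?_⟩
  intro x
  obtain ⟨hq1, hm1, hk1, hqc1, hlt1⟩ := key p c x hp x.isLt
  rw [hf x, hm1]
  rcases eq_or_ne (p * (x : ℕ) / (p * c + 1)) 0 with h0 | h0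
  · rw [if_pos h0]
    simp only [not_true_eq_false, iff_false, not_lt]
    exact hqc1.mp h0
  · rw [if_neg h0]
    have h1 : ¬ ((x : ℕ) ≤ c) := fun h => h0 (hqc1.mpr h)
    constructor
    · intro _; omega
    · intro _; omega

end
end

section
/- Let p ≥ 1, c ≥ 1 be integers with b = pc − 1 ≥ 1, and let P_c^− be the transition matrix of the (−b,n,p)-carries process on {0,…,ℓ}. Then for every integer N ≥ 0 and all i,j ∈ {0,…,ℓ}, ((P_c^−)^N)_{ij} = Σ_{k=0}^{ℓ} (−b)^{−kN} u_{ik} v_{kj}. In particular P_c^− is diagonalizable with eigenvalues (−b)^{−k}, k = 0,…,ℓ, the right eigenvector for (−b)^{−k} being the k-th column of U and the left eigenvector the k-th row of V. -/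
open scoped Classical

noncomputable section

/-- `u_{ij} := [x^{n-j}] binom(n + (x-1)/p - i, n)`, the coefficient of `x^{n-j}` in the
degree-`n` polynomial `(1/n!) ∏_{m=0}^{n-1} (n + (x-1)/p - i - m)`. -/
def uEnt (p n : ℕ) (i j : ℕ) : ℝ :=
  (Polynomial.C ((n.factorial : ℝ))⁻¹ *
    ∏ m ∈ Finset.range n,
      ((Polynomial.X - 1) * Polynomial.C ((p : ℝ))⁻¹ +
        Polynomial.C ((n : ℝ) - (i : ℝ) - (m : ℝ)))).coeff (n - j)

/-- `v_{ij} := [x^j]((1-x)^{n+1} A_{n-i}(x))`, where `A_m(x) = Σ_{k≥0} (pk+1)^m x^k`. -/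
def vEnt (p n : ℕ) (i j : ℕ) : ℝ :=
  PowerSeries.coeff j
    ((1 - PowerSeries.X) ^ (n + 1) * PowerSeries.mk fun a => ((p * a + 1 : ℕ) : ℝ) ^ (n - i))

open Finset Polynomial

lemma carryInner (b : ℕ) (hb : 0 < b) (s : ℕ) (g : ℕ → ℕ) :
    (∑ t : Fin b, if (s + 1 + (t : ℕ)) % b = 0 then g ((s + (t : ℕ)) / b) else 0)
      = g (s / b) := by
  have hlt : b - 1 - s % b < b := lt_of_le_of_lt (Nat.sub_le _ _) (Nat.sub_lt hb one_pos)
  set t0 : Fin b := ⟨b - 1 - s % b, hlt⟩ with ht0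
  have hsmod : s % b < b := Nat.mod_lt _ hb
  have hdm : b * (s / b) + s % b = s := Nat.div_add_mod s b
  have hmul : b * (s / b + 1) = b * (s / b) + b := by ring
  have key : s + (t0 : ℕ) = b * (s / b) + (b - 1) := by
    simp only [ht0]
    omega
  have h1 : s + 1 + (t0 : ℕ) = b * (s / b + 1) := by omega
  have h0 : (s + 1 + (t0 : ℕ)) % b = 0 := by rw [h1]; exact Nat.mul_mod_right b _
  rw [Finset.sum_eq_single t0]
  · rw [if_pos h0]
    congr 1
    rw [key, Nat.mul_add_div hb, Nat.div_eq_of_lt (show b - 1 < b by omega), add_zero]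
  · intro t _ hne
    rw [if_neg]
    intro h
    apply hne
    have hmeq : (t : ℕ) % b = (t0 : ℕ) % b :=
      Nat.ModEq.add_left_cancel' (s + 1) (h.trans h0.symm)
    exact Fin.ext (by rwa [Nat.mod_eq_of_lt t.isLt, Nat.mod_eq_of_lt t0.isLt] at hmeq)
  · simp

lemma peel (b n : ℕ) (g : ℕ → ℕ) :
    (∑ X : Fin (n+1) → Fin b, g (∑ t, (X t : ℕ)))
      = ∑ t : Fin b, ∑ X : Fin n → Fin b, g ((t : ℕ) + ∑ t', (X t' : ℕ)) := by
  calc (∑ X : Fin (n+1) → Fin b, g (∑ t, (X t : ℕ)))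
      = ∑ q : Fin b × (Fin n → Fin b), g ((q.1 : ℕ) + ∑ t', (q.2 t' : ℕ)) := by
        apply Fintype.sum_equiv (Fin.consEquiv fun _ : Fin (n+1) => Fin b).symm
        intro X
        simp [Fin.consEquiv, Fin.sum_univ_succ, Fin.tail]
    _ = _ := Fintype.sum_prod_type _

lemma pascalDiv (b : ℕ) (hb : 0 < b) (n e : ℕ) :
    Nat.choose ((e + 1) / b) (n + 1)
      = Nat.choose (e / b) (n + 1)
        + (if (e + 1) % b = 0 then Nat.choose (e / b) n else 0) := by
  have hdm : b * (e / b) + e % b = e := Nat.div_add_mod e b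
  have hrb : e % b < b := Nat.mod_lt _ hb
  by_cases hc : e % b = b - 1
  · have hmul : b * (e / b + 1) = b * (e / b) + b := by ring
    have h1 : e + 1 = b * (e / b + 1) := by omega
    have hdiv : (e + 1) / b = e / b + 1 := by rw [h1, Nat.mul_div_cancel_left _ hb]
    have hmod : (e + 1) % b = 0 := by rw [h1]; exact Nat.mul_mod_right b _
    rw [if_pos hmod, hdiv, Nat.choose_succ_succ']
    omega
  · have h1 : e + 1 = b * (e / b) + (e % b + 1) := by omega
    have hmod : (e + 1) % b = e % b + 1 := by
      rw [h1, Nat.mul_add_mod, Nat.mod_eq_of_lt (by omega)]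
    have hdiv : (e + 1) / b = e / b := by
      rw [h1, Nat.mul_add_div hb, Nat.div_eq_of_lt (show e % b + 1 < b by omega), add_zero]
    rw [if_neg (by omega), hdiv, add_zero]

lemma lemA (b : ℕ) (hb : 0 < b) :
    ∀ n A : ℕ, (∑ X : Fin n → Fin b, Nat.choose ((A + ∑ t, (X t : ℕ)) / b) n)
      = Nat.choose A n := by
  intro n
  induction n with
  | zero => intro A; simp
  | succ n ih =>
    intro A
    induction A with
    | zero =>
      obtain ⟨b', rfl⟩ : ∃ b', b = b' + 1 := ⟨b - 1, by omega⟩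
      rw [Nat.choose_eq_zero_of_lt (Nat.succ_pos n)]
      refine Finset.sum_eq_zero fun X _ => ?_
      apply Nat.choose_eq_zero_of_lt
      have hsum : (∑ t, (X t : ℕ)) ≤ (n+1) * b' := by
        calc (∑ t, (X t : ℕ)) ≤ ∑ _t : Fin (n+1), b' :=
          Finset.sum_le_sum fun t _ => by omega
        _ = (n+1) * b' := by simp [mul_comm]
      have hlt : (∑ t, (X t : ℕ)) < (b' + 1) * (n+1) := by
        have h1 : (b' + 1) * (n+1) = (n+1) * b' + (n + 1) := by ring
        omega
      simpa using Nat.div_lt_of_lt_mul hlt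
    | succ A ihA =>
      have step : ∀ X : Fin (n+1) → Fin b,
          Nat.choose ((A + 1 + ∑ t, (X t : ℕ)) / b) (n+1)
            = Nat.choose ((A + ∑ t, (X t : ℕ)) / b) (n+1)
              + (if (A + 1 + ∑ t, (X t : ℕ)) % b = 0
                  then Nat.choose ((A + ∑ t, (X t : ℕ)) / b) n else 0) := by
        intro X
        have hre : A + 1 + ∑ t, (X t : ℕ) = (A + ∑ t, (X t : ℕ)) + 1 := by ring
        rw [hre]
        exact pascalDiv b hb n _
      rw [Finset.sum_congr rfl fun X _ => step X, Finset.sum_add_distrib, ihA]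
      have h2 : (∑ X : Fin (n+1) → Fin b,
          if (A + 1 + ∑ t, (X t : ℕ)) % b = 0
            then Nat.choose ((A + ∑ t, (X t : ℕ)) / b) n else 0) = Nat.choose A n := by
        have hpeel := peel b n
          (fun s => if (A + 1 + s) % b = 0 then Nat.choose ((A + s) / b) n else 0)
        simp only [← add_assoc] at hpeel
        rw [hpeel, Finset.sum_comm]
        have inner : ∀ X : Fin n → Fin b,
            (∑ t : Fin b, if (A + 1 + (t:ℕ) + ∑ t', (X t' : ℕ)) % b = 0
              then Nat.choose ((A + (t:ℕ) + ∑ t', (X t' : ℕ)) / b) n else 0)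
            = Nat.choose ((A + ∑ t', (X t' : ℕ)) / b) n := by
          intro X
          have hci := carryInner b hb (A + ∑ t', (X t' : ℕ)) (fun d => Nat.choose d n)
          rw [← hci]
          apply Finset.sum_congr rfl
          intro t _
          have e1 : A + 1 + (t:ℕ) + ∑ t', (X t' : ℕ)
              = A + ∑ t', (X t' : ℕ) + 1 + (t:ℕ) := by ring
          have e2 : A + (t:ℕ) + ∑ t', (X t' : ℕ)
              = A + ∑ t', (X t' : ℕ) + (t:ℕ) := by ring
          rw [e1, e2]
        rw [Finset.sum_congr rfl fun X _ => inner X, ih]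
      rw [h2, Nat.choose_succ_succ' A n]
      exact Nat.add_comm _ _

lemma hockey (n' M : ℕ) : ∀ s : ℕ,
    Nat.choose M (n'+1) + ∑ t ∈ Finset.range s, Nat.choose (M + t) n'
      = Nat.choose (M + s) (n'+1) := by
  intro s
  induction s with
  | zero => simp
  | succ s ihs =>
    rw [Finset.sum_range_succ, ← add_assoc, ihs, ← add_assoc,
      Nat.choose_succ_succ' (M + s) n']
    exact Nat.add_comm _ _

lemma lemB (b : ℕ) (hb : 0 < b) :
    ∀ n m A : ℕ, (∑ X : Fin n → Fin b, Nat.choose (m + (A + ∑ t, (X t : ℕ)) / b) n)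
      = Nat.choose (b * m + A) n := by
  intro n
  induction n with
  | zero => intro m A; simp
  | succ n ih =>
    intro m
    induction m with
    | zero =>
      intro A
      simpa using lemA b hb (n+1) A
    | succ m ihm =>
      intro A
      have step : ∀ X : Fin (n+1) → Fin b,
          Nat.choose (m + 1 + (A + ∑ t, (X t : ℕ)) / b) (n+1)
            = Nat.choose (m + (A + ∑ t, (X t : ℕ)) / b) n
              + Nat.choose (m + (A + ∑ t, (X t : ℕ)) / b) (n+1) := by
        intro X
        have hre : m + 1 + (A + ∑ t, (X t : ℕ)) / b
            = (m + (A + ∑ t, (X t : ℕ)) / b) + 1 := by ring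
        rw [hre, Nat.choose_succ_succ']
      rw [Finset.sum_congr rfl fun X _ => step X, Finset.sum_add_distrib, ihm A]
      have hpeel := peel b n (fun s => Nat.choose (m + (A + s) / b) n)
      have h3 : (∑ X : Fin (n+1) → Fin b,
          Nat.choose (m + (A + ∑ t, (X t : ℕ)) / b) n)
          = ∑ t : Fin b, Nat.choose (b * m + (A + (t:ℕ))) n := by
        rw [hpeel]
        apply Finset.sum_congr rfl
        intro t _
        have harg : ∀ X : Fin n → Fin b,
            Nat.choose (m + (A + ((t:ℕ) + ∑ t', (X t' : ℕ))) / b) n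
              = Nat.choose (m + ((A + (t:ℕ)) + ∑ t', (X t' : ℕ)) / b) n := by
          intro X
          congr 3
          ring
        rw [Finset.sum_congr rfl fun X _ => harg X, ih m (A + (t:ℕ))]
      rw [h3]
      have h4 : (∑ t : Fin b, Nat.choose (b * m + (A + (t:ℕ))) n)
          = ∑ t ∈ Finset.range b, Nat.choose ((b * m + A) + t) n := by
        rw [Finset.sum_range fun t => Nat.choose ((b * m + A) + t) n]
        apply Finset.sum_congr rfl
        intro t _
        congr 1
        ring
      rw [h4, Nat.add_comm, hockey n (b * m + A) b]
      congr 1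
      ring

noncomputable def Fq (p n : ℕ) (t : ℝ) : Polynomial ℝ :=
  Polynomial.C ((n.factorial : ℝ))⁻¹ *
    ∏ m ∈ Finset.range n,
      ((Polynomial.X - 1) * Polynomial.C ((p : ℝ))⁻¹ + Polynomial.C (t - (m : ℝ)))

lemma prodCast (n : ℕ) : ∀ M : ℕ,
    (∏ m ∈ Finset.range n, ((M : ℝ) - (m : ℝ))) = n.factorial * (Nat.choose M n : ℝ) := by
  induction n with
  | zero => intro M; simp
  | succ n ih =>
    intro M
    rw [Finset.prod_range_succ, ih M]
    by_cases h : M ≤ n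
    · rw [Nat.choose_eq_zero_of_lt (by omega : M < n + 1)]
      rcases eq_or_lt_of_le h with h' | h'
      · subst h'; simp
      · rw [Nat.choose_eq_zero_of_lt h']
        simp
    · push_neg at h
      have hcast : ((M - n : ℕ) : ℝ) = (M : ℝ) - n := by
        rw [Nat.cast_sub h.le]
      have key : (Nat.choose M n : ℝ) * ((M : ℝ) - n)
          = (Nat.choose M (n + 1) : ℝ) * (n + 1) := by
        rw [← hcast]
        exact_mod_cast congrArg (Nat.cast (R := ℝ)) (Nat.choose_succ_right_eq M n).symm
      have hfac : ((n + 1).factorial : ℝ) = (n + 1) * n.factorial := by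
        rw [Nat.factorial_succ]; push_cast; ring
      rw [mul_assoc, key, hfac]; ring

lemma FqNatDegree (p n : ℕ) (t : ℝ) : (Fq p n t).natDegree ≤ n := by
  refine le_trans (Polynomial.natDegree_mul_le) ?_
  rw [Polynomial.natDegree_C, zero_add]
  refine le_trans (Polynomial.natDegree_prod_le _ _) ?_
  refine le_trans (Finset.sum_le_sum (fun m _ => ?_)) (by simp : ∑ _m ∈ range n, 1 ≤ n)
  refine le_trans (Polynomial.natDegree_add_le _ _) ?_
  simp only [Polynomial.natDegree_C, max_le_iff]
  constructor
  · refine le_trans (Polynomial.natDegree_mul_le) ?_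
    rw [Polynomial.natDegree_C, add_zero]
    exact le_trans (Polynomial.natDegree_sub_le _ _) (by simp)
  · omega

lemma FqEval (p n : ℕ) (t y : ℝ) :
    (Fq p n t).eval y
      = ((n.factorial : ℝ))⁻¹ * ∏ m ∈ Finset.range n, ((y - 1) * ((p:ℝ))⁻¹ + (t - m)) := by
  simp [Fq, Polynomial.eval_prod]

lemma FqEvalNat (p n : ℕ) (hp : 0 < p) (q m : ℕ) :
    (Fq p n (q : ℝ)).eval (((p * m + 1 : ℕ) : ℝ)) = (Nat.choose (m + q) n : ℝ) := by
  rw [FqEval]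
  have hfac : ∀ m' ∈ Finset.range n,
      ((((p * m + 1 : ℕ) : ℝ)) - 1) * ((p:ℝ))⁻¹ + ((q : ℝ) - m')
        = ((m + q : ℕ) : ℝ) - (m' : ℝ) := by
    intro m' _
    have hpne : (p : ℝ) ≠ 0 := by exact_mod_cast hp.ne'
    push_cast
    field_simp
    ring
  rw [Finset.prod_congr rfl hfac, prodCast]
  have : (n.factorial : ℝ) ≠ 0 := by exact_mod_cast n.factorial_ne_zero
  field_simp

lemma coeff_comp_C_mul_X (f : Polynomial ℝ) (a : ℝ) (d : ℕ) :
    (f.comp (Polynomial.C a * Polynomial.X)).coeff d = a ^ d * f.coeff d := by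
  induction f using Polynomial.induction_on' with
  | add f g hf hg =>
    simp [Polynomial.add_comp, hf, hg, mul_add]
  | monomial m c =>
    rw [← Polynomial.C_mul_X_pow_eq_monomial]
    rw [Polynomial.mul_comp, Polynomial.C_comp, Polynomial.pow_comp, Polynomial.X_comp, mul_pow,
      ← Polynomial.C_pow, Polynomial.coeff_C_mul, Polynomial.coeff_C_mul,
      Polynomial.coeff_X_pow, Polynomial.coeff_C_mul, Polynomial.coeff_X_pow]
    by_cases h : d = m
    · subst h; simp [mul_comm]
    · simp [h]

lemma FqEvalNeg (p n c b i m : ℕ) (hp : 0 < p) (hn : 1 ≤ n) (hc : 1 ≤ c) (hi : i ≤ n)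
    (hb : b + 1 = p * c) :
    (Fq p n ((n:ℝ) - i)).eval (-(b:ℝ) * ((p * m + 1 : ℕ) : ℝ))
      = (-1:ℝ)^n * (Nat.choose (b * m + (i + (c - 1))) n : ℝ) := by
  have hpne : (p : ℝ) ≠ 0 := by exact_mod_cast hp.ne'
  have hpc : (b : ℝ) + 1 = (p : ℝ) * c := by exact_mod_cast hb
  rw [FqEval]
  have hfac : ∀ m' ∈ Finset.range n,
      (-(b:ℝ) * ((p * m + 1 : ℕ) : ℝ) - 1) * ((p:ℝ))⁻¹ + (((n:ℝ) - i) - m')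
        = -((((b * m + (i + (c-1)) : ℕ)) : ℝ) - (((n - 1 - m' : ℕ)) : ℝ)) := by
    intro m' hm'
    have h1 : m' < n := Finset.mem_range.mp hm'
    have hdiv : (-(b:ℝ) * ((p * m + 1 : ℕ) : ℝ) - 1) * ((p:ℝ))⁻¹ = -(b:ℝ) * m - c := by
      push_cast
      field_simp
      linear_combination -hpc
    rw [hdiv]
    have h2 : ((n - 1 - m' : ℕ) : ℝ) = (n:ℝ) - 1 - m' := by
      rw [show n - 1 - m' = n - (1 + m') from by omega, Nat.cast_sub (by omega)]
      push_cast; ring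
    have h3 : ((c - 1 : ℕ) : ℝ) = (c:ℝ) - 1 := by
      rw [Nat.cast_sub (by omega)]; push_cast; ring
    rw [h2]
    push_cast [h3]
    ring
  rw [Finset.prod_congr rfl hfac]
  have hneg : (∏ m' ∈ Finset.range n,
      -((((b * m + (i + (c-1)) : ℕ)) : ℝ) - (((n - 1 - m' : ℕ)) : ℝ)))
      = (-1:ℝ)^n * ∏ m' ∈ Finset.range n,
          ((((b * m + (i + (c-1)) : ℕ)) : ℝ) - (((n - 1 - m' : ℕ)) : ℝ)) := by
    rw [show ∀ f : ℕ → ℝ, (∏ m' ∈ Finset.range n, -(f m')) =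
        ∏ m' ∈ Finset.range n, ((-1) * f m') from fun f => by simp,
      Finset.prod_mul_distrib, Finset.prod_const]
    simp
  rw [hneg, Finset.prod_range_reflect
    (fun m' => (((b * m + (i + (c-1)) : ℕ)) : ℝ) - ((m' : ℕ) : ℝ)) n, prodCast]
  have : (n.factorial : ℝ) ≠ 0 := by exact_mod_cast n.factorial_ne_zero
  field_simp

lemma Fqcoeff0 (n i : ℕ) (hi : i + 1 ≤ n) : (Fq 1 n ((n:ℝ) - i)).coeff 0 = 0 := by
  rw [Polynomial.coeff_zero_eq_eval_zero, FqEval]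
  apply mul_eq_zero_of_right
  apply Finset.prod_eq_zero (Finset.mem_range.mpr (show n - i - 1 < n by omega))
  have h2 : ((n - i - 1 : ℕ) : ℝ) = (n:ℝ) - i - 1 := by
    rw [show n - i - 1 = n - (i + 1) from by omega, Nat.cast_sub (by omega)]
    push_cast; ring
  rw [h2]
  norm_num

lemma seriesInv (n : ℕ) :
    (1 - PowerSeries.X : PowerSeries ℝ) ^ (n + 1)
      * PowerSeries.mk (fun a => (Nat.choose (n + a) n : ℝ)) = 1 := by
  have h1 := (PowerSeries.invOneSubPow ℝ (n+1)).inv_val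
  rw [PowerSeries.invOneSubPow_inv_eq_one_sub_pow] at h1
  rw [← PowerSeries.invOneSubPow_val_succ_eq_mk_add_choose]
  exact h1

lemma FqEvalNat2 (p n i : ℕ) (hp : 0 < p) (hi : i ≤ n) (a : ℕ) :
    (Fq p n ((n:ℝ) - i)).eval (((p * a + 1 : ℕ) : ℝ)) = (Nat.choose (a + n - i) n : ℝ) := by
  rw [FqEval]
  have hpne : (p : ℝ) ≠ 0 := by exact_mod_cast hp.ne'
  have hfac : ∀ m' ∈ Finset.range n,
      ((((p * a + 1 : ℕ) : ℝ)) - 1) * ((p:ℝ))⁻¹ + (((n:ℝ) - i) - m')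
        = ((a + n - i : ℕ) : ℝ) - (m' : ℝ) := by
    intro m' _
    have h2 : ((a + n - i : ℕ) : ℝ) = (a:ℝ) + n - i := by
      rw [Nat.cast_sub (by omega)]; push_cast; ring
    rw [h2]
    push_cast
    field_simp
    ring
  rw [Finset.prod_congr rfl hfac, prodCast]
  have : (n.factorial : ℝ) ≠ 0 := by exact_mod_cast n.factorial_ne_zero
  field_simp

lemma coeffSumEval (p n ℓ i : ℕ) (hp : 1 ≤ p) (hn : 1 ≤ n) (hi : i ≤ ℓ)
    (hℓ : ℓ = if p = 1 then n - 1 else n) (y : ℝ) :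
    (∑ k : Fin (ℓ+1), (Fq p n ((n:ℝ) - i)).coeff (n - (k:ℕ)) * y ^ (n - (k:ℕ)))
      = (Fq p n ((n:ℝ) - i)).eval y := by
  set f := Fq p n ((n:ℝ) - i) with hf
  have hdeg : f.natDegree < n + 1 := lt_of_le_of_lt (FqNatDegree p n _) (lt_add_one n)
  have heval : f.eval y = ∑ d ∈ Finset.range (n+1), f.coeff d * y ^ d :=
    Polynomial.eval_eq_sum_range' hdeg y
  have hrefl : (∑ k ∈ Finset.range (n+1), f.coeff (n - k) * y ^ (n - k))
      = ∑ d ∈ Finset.range (n+1), f.coeff d * y ^ d := by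
    rw [← Finset.sum_range_reflect (fun d => f.coeff d * y ^ d) (n+1)]
    apply Finset.sum_congr rfl
    intro k hk
    have : n + 1 - 1 - k = n - k := by omega
    rw [this]
  rw [Fin.sum_univ_eq_sum_range (fun k => f.coeff (n - k) * y ^ (n - k)) (ℓ+1)]
  by_cases hp1 : p = 1
  · have hℓ' : ℓ = n - 1 := by rw [hℓ, if_pos hp1]
    have hln : ℓ + 1 = n := by omega
    rw [hln]
    have hsplit : (∑ k ∈ Finset.range (n+1), f.coeff (n-k) * y^(n-k))
        = (∑ k ∈ Finset.range n, f.coeff (n-k) * y^(n-k)) + f.coeff 0 * y^0 := by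
      rw [Finset.sum_range_succ, Nat.sub_self]
    have hc0 : f.coeff 0 = 0 := by
      rw [hf, hp1]
      exact Fqcoeff0 n i (by omega)
    rw [heval, ← hrefl, hsplit, hc0]
    ring
  · have hℓ' : ℓ + 1 = n + 1 := by rw [hℓ, if_neg hp1]
    rw [hℓ', hrefl, ← heval]

lemma uEnt_eq (p n i j : ℕ) : uEnt p n i j = (Fq p n ((n:ℝ) - (i:ℝ))).coeff (n - j) := rfl

lemma rowSum (p n ℓ i : ℕ) (hp : 1 ≤ p) (hn : 1 ≤ n) (hi : i ≤ ℓ)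
    (hℓ : ℓ = if p = 1 then n - 1 else n) (hin : i ≤ n) (a : ℕ) :
    (∑ k : Fin (ℓ+1), uEnt p n i k * ((p * a + 1 : ℕ) : ℝ) ^ (n - (k:ℕ)))
      = (Nat.choose (a + n - i) n : ℝ) := by
  have h1 := coeffSumEval p n ℓ i hp hn hi hℓ (((p * a + 1 : ℕ) : ℝ))
  have h2 := FqEvalNat2 p n i (by omega) hin a
  simp only [uEnt_eq]
  rw [h1, h2]

lemma UVentry (p n ℓ : ℕ) (hp : 1 ≤ p) (hn : 1 ≤ n)
    (hℓ : ℓ = if p = 1 then n - 1 else n) (hℓn : ℓ ≤ n) (i j : ℕ) (hi : i ≤ ℓ) :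
    (∑ k : Fin (ℓ+1), uEnt p n i k * vEnt p n (k:ℕ) j) = if i = j then 1 else 0 := by
  simp only [vEnt]
  have hstep : ∀ k : Fin (ℓ+1),
      uEnt p n i k * (PowerSeries.coeff j)
        ((1 - PowerSeries.X) ^ (n + 1)
          * PowerSeries.mk fun a => ((p * a + 1 : ℕ) : ℝ) ^ (n - (k:ℕ)))
      = (PowerSeries.coeff j)
          (uEnt p n i k • ((1 - PowerSeries.X) ^ (n + 1)
            * PowerSeries.mk fun a => ((p * a + 1 : ℕ) : ℝ) ^ (n - (k:ℕ)))) := by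
    intro k
    rw [map_smul, smul_eq_mul]
  rw [Finset.sum_congr rfl fun k _ => hstep k, ← map_sum]
  have hfactor : (∑ k : Fin (ℓ+1),
      uEnt p n i k • ((1 - PowerSeries.X) ^ (n + 1)
        * PowerSeries.mk fun a => ((p * a + 1 : ℕ) : ℝ) ^ (n - (k:ℕ))))
      = (1 - PowerSeries.X) ^ (n + 1) *
        ∑ k : Fin (ℓ+1),
          uEnt p n i k • PowerSeries.mk fun a => ((p * a + 1 : ℕ) : ℝ) ^ (n - (k:ℕ)) := by
    rw [Finset.mul_sum]
    exact Finset.sum_congr rfl fun k _ => (mul_smul_comm _ _ _).symm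
  rw [hfactor]
  have hS : (∑ k : Fin (ℓ+1),
      uEnt p n i k • PowerSeries.mk fun a => ((p * a + 1 : ℕ) : ℝ) ^ (n - (k:ℕ)))
      = PowerSeries.X ^ i * PowerSeries.mk (fun a => (Nat.choose (n + a) n : ℝ)) := by
    apply PowerSeries.ext
    intro a
    rw [map_sum]
    have hL : (∑ k : Fin (ℓ+1), (PowerSeries.coeff a)
        (uEnt p n i k • PowerSeries.mk fun a => ((p * a + 1 : ℕ) : ℝ) ^ (n - (k:ℕ))))
        = (Nat.choose (a + n - i) n : ℝ) := by
      rw [← rowSum p n ℓ i hp hn hi hℓ (le_trans hi hℓn) a]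
      apply Finset.sum_congr rfl
      intro k _
      rw [map_smul, smul_eq_mul, PowerSeries.coeff_mk]
    rw [hL, PowerSeries.coeff_X_pow_mul']
    by_cases hia : i ≤ a
    · rw [if_pos hia, PowerSeries.coeff_mk]
      have harg : n + (a - i) = a + n - i := by omega
      rw [harg]
    · rw [if_neg hia, Nat.choose_eq_zero_of_lt (by omega), Nat.cast_zero]
  rw [hS, mul_left_comm, seriesInv, mul_one, PowerSeries.coeff_X_pow]
  simp [eq_comm]

lemma mainPoly (p c n b ℓ i : ℕ) (hp : 1 ≤ p) (hc : 1 ≤ c) (hn : 1 ≤ n)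
    (hb : b + 1 = p * c) (hb1 : 1 ≤ b) (hℓ : ℓ = if p = 1 then n - 1 else n)
    (hin : i ≤ n) (qv : (Fin n → Fin b) → ℕ)
    (hqv : ∀ X, qv X = (i + (∑ t, (X t : ℕ)) + (c - 1)) / b) :
    (∑ X : Fin n → Fin b, Fq p n ((qv X : ℕ) : ℝ))
      = Polynomial.C ((-1:ℝ)^n)
          * (Fq p n ((n:ℝ) - i)).comp (Polynomial.C (-(b:ℝ)) * Polynomial.X) := by
  have hp0 : 0 < p := hp
  have hb0 : 0 < b := hb1
  set pts : Finset ℝ := (Finset.range (n+1)).image (fun m => ((p * m + 1 : ℕ) : ℝ)) with hpts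
  have hcard : pts.card = n + 1 := by
    rw [hpts, Finset.card_image_of_injOn, Finset.card_range]
    intro a _ b' _ hab
    have : (p * a + 1 : ℕ) = (p * b' + 1 : ℕ) := Nat.cast_injective hab
    have := Nat.eq_of_mul_eq_mul_left hp0 (by omega : p * a = p * b')
    exact this
  have hdegF : ∀ t : ℝ, (Fq p n t).degree < (pts.card : WithBot ℕ) := by
    intro t
    refine lt_of_le_of_lt (Polynomial.degree_le_natDegree) ?_
    rw [hcard]
    exact_mod_cast Nat.lt_succ_of_le (FqNatDegree p n t)
  apply Polynomial.eq_of_degrees_lt_of_eval_finset_eq pts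
  · refine lt_of_le_of_lt (Polynomial.degree_sum_le _ _) ?_
    rw [Finset.sup_lt_iff (by rw [hcard]; exact WithBot.bot_lt_coe _)]
    intro X _
    exact hdegF _
  · refine lt_of_le_of_lt (Polynomial.degree_le_natDegree) ?_
    have h1 : (Polynomial.C ((-1:ℝ)^n)
        * (Fq p n ((n:ℝ) - i)).comp (Polynomial.C (-(b:ℝ)) * Polynomial.X)).natDegree ≤ n := by
      refine le_trans (Polynomial.natDegree_C_mul_le _ _) ?_
      refine le_trans (Polynomial.natDegree_comp_le) ?_
      calc (Fq p n ((n:ℝ) - i)).natDegree * (Polynomial.C (-(b:ℝ)) * Polynomial.X).natDegree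
          ≤ n * 1 := Nat.mul_le_mul (FqNatDegree p n _)
            (le_trans (Polynomial.natDegree_C_mul_le _ _) Polynomial.natDegree_X_le)
      _ = n := by ring
    rw [hcard]
    exact_mod_cast Nat.lt_succ_of_le h1
  · intro x hx
    obtain ⟨m, _, rfl⟩ := Finset.mem_image.mp hx
    have hterm : ∀ X : Fin n → Fin b,
        Nat.choose (m + qv X) n
          = Nat.choose (m + ((i + (c-1)) + ∑ t, (X t : ℕ)) / b) n := by
      intro X
      rw [hqv X, Nat.add_right_comm i (∑ t, (X t : ℕ)) (c-1)]
    rw [Polynomial.eval_finset_sum,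
      Finset.sum_congr rfl (fun X _ => FqEvalNat p n hp0 (qv X) m),
      ← Nat.cast_sum, Finset.sum_congr rfl (fun X _ => hterm X),
      lemB b hb0 n m (i + (c-1))]
    rw [Polynomial.eval_mul, Polynomial.eval_C, Polynomial.eval_comp,
      Polynomial.eval_mul, Polynomial.eval_C, Polynomial.eval_X,
      FqEvalNeg p n c b i m hp0 hn hc hin hb, ← mul_assoc, ← pow_add]
    rw [Even.neg_one_pow ⟨n, rfl⟩, one_mul]

lemma scalarId (x u : ℝ) (hx : x ≠ 0) (k d : ℕ) :
    ((-1:ℝ))^(k+d) * (-x)^d * u / x^(k+d) = u * ((-x)^k)⁻¹ := by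
  have h1 : (-x)^k ≠ 0 := pow_ne_zero _ (neg_ne_zero.mpr hx)
  have h2 : (x:ℝ)^(k+d) ≠ 0 := pow_ne_zero _ hx
  have h3 : ((-1:ℝ))^(k+d) * (-1:ℝ)^(k+d) = 1 := by
    rw [← pow_add]
    exact Even.neg_one_pow ⟨k+d, rfl⟩
  field_simp
  linear_combination (u * x^k * x^d) * h3
/-- **Theorem (spectral decomposition of the `(-b,n,p)`-carries process).**
Let `b = pc - 1 ≥ 1`, `ℓ = n` for `p ≥ 2` and `ℓ = n-1` for `p = 1`, and let `P` be the
transition matrix of the `(-b,n,p)`-carries process: from state `i`, with `X_1,…,X_n` uniform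
on `{0,…,b-1}`, the next state `j` satisfies `i + X_1 + ⋯ + X_n + (b+1)/p - 1 = (n-j)·b + r`,
`0 ≤ r < b`. Then `(P^N)_{ij} = Σ_{k=0}^{ℓ} (-b)^{-kN} u_{ik} v_{kj}` for all `N ≥ 0`;
in particular `P` is diagonalizable with eigenvalues `(-b)^{-k}`, the `k`-th column of `U`
being a right eigenvector and the `k`-th row of `V` a left eigenvector for `(-b)^{-k}`. -/
theorem statement11 (p c n : ℕ) (hp : 1 ≤ p) (hc : 1 ≤ c) (hn : 1 ≤ n)
    (b : ℕ) (hb : b + 1 = p * c) (hb1 : 1 ≤ b)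
    (ℓ : ℕ) (hℓ : ℓ = if p = 1 then n - 1 else n)
    (P : Matrix (Fin (ℓ + 1)) (Fin (ℓ + 1)) ℝ)
    (hP : ∀ i j : Fin (ℓ + 1), P i j =
      ((Finset.univ.filter fun X : Fin n → Fin b =>
          ((i : ℕ) + (∑ t, (X t : ℕ)) + ((b + 1) / p - 1)) / b = n - (j : ℕ)).card : ℝ)
        / (b : ℝ) ^ n) :
    (∀ N : ℕ, ∀ i j : Fin (ℓ + 1),
        (P ^ N) i j = ∑ k : Fin (ℓ + 1),
          ((-(b : ℝ)) ^ ((k : ℕ) * N))⁻¹ * uEnt p n i k * vEnt p n k j)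
      ∧ (∀ k : Fin (ℓ + 1),
          P.mulVec (fun i : Fin (ℓ + 1) => uEnt p n i k)
            = ((-(b : ℝ)) ^ (k : ℕ))⁻¹ • fun i : Fin (ℓ + 1) => uEnt p n i k)
      ∧ (∀ k : Fin (ℓ + 1),
          Matrix.vecMul (fun j : Fin (ℓ + 1) => vEnt p n k j) P
            = ((-(b : ℝ)) ^ (k : ℕ))⁻¹ • fun j : Fin (ℓ + 1) => vEnt p n k j) := by
  have hp0 : 0 < p := hp
  have hb0 : 0 < b := hb1
  have hbne : (b : ℝ) ≠ 0 := (Nat.cast_pos.mpr hb0).ne'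
  have hnbne : (-(b : ℝ)) ≠ 0 := neg_ne_zero.mpr hbne
  have hℓn : ℓ ≤ n := by rw [hℓ]; split <;> omega
  have hbp : (b + 1) / p = c := by rw [hb]; exact Nat.mul_div_cancel_left c hp0
  have hcb : p = 1 ∨ c ≤ b := by
    by_cases h1 : p = 1
    · exact Or.inl h1
    · right
      have h2 : 2 * c ≤ p * c := Nat.mul_le_mul_right c (by omega)
      omega
  set U : Matrix (Fin (ℓ+1)) (Fin (ℓ+1)) ℝ := Matrix.of (fun i k : Fin (ℓ+1) => uEnt p n i k)
    with hU
  set V : Matrix (Fin (ℓ+1)) (Fin (ℓ+1)) ℝ := Matrix.of (fun k j : Fin (ℓ+1) => vEnt p n k j)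
    with hV
  set D : Matrix (Fin (ℓ+1)) (Fin (ℓ+1)) ℝ :=
    Matrix.diagonal (fun k : Fin (ℓ+1) => ((-(b:ℝ)) ^ (k:ℕ))⁻¹) with hD
  -- U * V = 1
  have hUV : U * V = 1 := by
    ext i j
    rw [Matrix.mul_apply, Matrix.one_apply]
    have h := UVentry p n ℓ hp hn hℓ hℓn i j (by omega : (i:ℕ) ≤ ℓ)
    simp only [hU, hV, Matrix.of_apply]
    rw [h]
    simp only [Fin.val_inj]
  -- P * U = U * D
  have hPU : P * U = U * D := by
    ext i k
    set qv : (Fin n → Fin b) → ℕ :=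
      fun X => ((i:ℕ) + (∑ t, (X t : ℕ)) + (c - 1)) / b with hqv
    have hsumX : ∀ X : Fin n → Fin b, (∑ t, (X t : ℕ)) ≤ n * (b - 1) := by
      intro X
      calc (∑ t, (X t : ℕ)) ≤ ∑ _t : Fin n, (b - 1) :=
        Finset.sum_le_sum fun t _ => by omega
      _ = n * (b - 1) := by simp [mul_comm]
    have hmul1 : n * b = n * (b - 1) + n := by
      conv_lhs => rw [show b = (b - 1) + 1 from by omega]
      exact Nat.mul_succ n (b - 1)
    have hmul2 : b * (n + 1) = n * b + b := by ring
    have hqub : ∀ X, qv X ≤ n := by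
      intro X
      have h3 : qv X = ((i:ℕ) + (∑ t, (X t : ℕ)) + (c - 1)) / b := rfl
      have hnum : (i:ℕ) + (∑ t, (X t : ℕ)) + (c - 1) < b * (n + 1) := by
        have hX := hsumX X
        have hiℓ : (i:ℕ) ≤ ℓ := by omega
        rcases hcb with h1 | h1
        · have hcb1 : c = b + 1 := by rw [h1, one_mul] at hb; omega
          have hℓ1 : ℓ = n - 1 := by rw [hℓ, if_pos h1]
          omega
        · omega
      have h4 := Nat.div_lt_of_lt_mul hnum
      omega
    have hqlb : ∀ X, n - ℓ ≤ qv X := by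
      intro X
      by_cases h1 : p = 1
      · have hcb1 : c = b + 1 := by rw [h1, one_mul] at hb; omega
        have hℓ1 : ℓ = n - 1 := by rw [hℓ, if_pos h1]
        have h2 : 1 ≤ qv X := by
          have h3 : qv X = ((i:ℕ) + (∑ t, (X t : ℕ)) + (c - 1)) / b := rfl
          rw [h3, Nat.one_le_div_iff hb0]
          omega
        omega
      · have hℓ1 : ℓ = n := by rw [hℓ, if_neg h1]
        omega
    have hfib : ∀ X, n - qv X < ℓ + 1 := fun X => by have := hqlb X; omega
    set fib : (Fin n → Fin b) → Fin (ℓ+1) := fun X => ⟨n - qv X, hfib X⟩ with hfibdef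
    -- rewrite LHS
    rw [Matrix.mul_apply, Matrix.mul_diagonal]
    have hPij : ∀ j : Fin (ℓ+1), P i j =
        ((Finset.univ.filter fun X : Fin n → Fin b => qv X = n - (j : ℕ)).card : ℝ)
          / (b : ℝ) ^ n := by
      intro j
      rw [hP i j, hbp]
    have key : (∑ j : Fin (ℓ+1),
        ((Finset.univ.filter fun X : Fin n → Fin b => qv X = n - (j : ℕ)).card : ℝ)
          * uEnt p n j k)
        = ∑ X : Fin n → Fin b, (Fq p n ((qv X : ℕ) : ℝ)).coeff (n - (k:ℕ)) := by
      have hfilter : ∀ j : Fin (ℓ+1),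
          (Finset.univ.filter fun X : Fin n → Fin b => qv X = n - (j : ℕ))
            = Finset.univ.filter (fun X => fib X = j) := by
        intro j
        apply Finset.filter_congr
        intro X _
        have hq := hqub X
        have hj : (j : ℕ) ≤ ℓ := by omega
        constructor
        · intro h
          exact Fin.ext (by simp only [hfibdef]; omega)
        · intro h
          have := congrArg Fin.val h
          simp only [hfibdef] at this
          omega
      calc (∑ j : Fin (ℓ+1),
          ((Finset.univ.filter fun X : Fin n → Fin b => qv X = n - (j : ℕ)).card : ℝ)
            * uEnt p n j k)
          = ∑ j : Fin (ℓ+1), ∑ X ∈ Finset.univ.filter (fun X => fib X = j),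
              (Fq p n ((qv X : ℕ) : ℝ)).coeff (n - (k:ℕ)) := by
            apply Finset.sum_congr rfl
            intro j _
            rw [hfilter j, Finset.sum_congr rfl (fun X hX => ?_), Finset.sum_const,
              nsmul_eq_mul]
            have hfj : fib X = j := (Finset.mem_filter.mp hX).2
            have hqn : qv X ≤ n := hqub X
            have hval : (j : ℕ) = n - qv X := by rw [← hfj]
            have hcast : ((n:ℝ) - ((j:ℕ) : ℝ)) = ((qv X : ℕ) : ℝ) := by
              rw [hval, Nat.cast_sub hqn]
              ring
            rw [uEnt_eq, hcast]
        _ = _ := Finset.sum_fiberwise _ _ _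
    have hcoeff : (∑ X : Fin n → Fin b, (Fq p n ((qv X : ℕ) : ℝ)).coeff (n - (k:ℕ)))
        = (-1:ℝ)^n * (-(b:ℝ))^(n - (k:ℕ)) * uEnt p n i k := by
      rw [← Polynomial.finset_sum_coeff,
        mainPoly p c n b ℓ i hp hc hn hb hb1 hℓ (by omega) qv (fun X => rfl),
        Polynomial.coeff_C_mul, coeff_comp_C_mul_X, uEnt_eq, mul_assoc]
    -- combine
    have hLHS : (∑ j : Fin (ℓ+1), P i j * U j k)
        = ((-1:ℝ)^n * (-(b:ℝ))^(n - (k:ℕ)) * uEnt p n i k) / (b:ℝ)^n := by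
      rw [← hcoeff, ← key, Finset.sum_div]
      apply Finset.sum_congr rfl
      intro j _
      rw [hPij j]
      simp only [hU, Matrix.of_apply]
      rw [div_mul_eq_mul_div]
    rw [hLHS]
    simp only [hU, Matrix.of_apply]
    -- scalar identity
    have hkn : (k : ℕ) ≤ n := by omega
    obtain ⟨d, hd⟩ : ∃ d, n = (k:ℕ) + d := ⟨n - (k:ℕ), by omega⟩
    have hnk : n - (k:ℕ) = d := by omega
    rw [hnk, hd]
    exact scalarId (b:ℝ) _ hbne (k:ℕ) d
  -- derived facts
  have hVU : V * U = 1 := mul_eq_one_comm.mp hUV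
  have hPdec : P = U * D * V := by
    calc P = P * (U * V) := by rw [hUV, Matrix.mul_one]
    _ = (P * U) * V := by rw [Matrix.mul_assoc]
    _ = (U * D) * V := by rw [hPU]
  have hVUD : ∀ W : Matrix (Fin (ℓ+1)) (Fin (ℓ+1)) ℝ, V * (U * W) = W := by
    intro W
    rw [← Matrix.mul_assoc, hVU, Matrix.one_mul]
  have hPN : ∀ N : ℕ, P ^ N = U * D ^ N * V := by
    intro N
    induction N with
    | zero => rw [pow_zero, pow_zero, Matrix.mul_one, hUV]
    | succ N ihN =>
      rw [pow_succ, ihN, hPdec]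
      calc U * D ^ N * V * (U * D * V)
          = U * D ^ N * (V * (U * (D * V))) := by simp only [Matrix.mul_assoc]
      _ = U * D ^ N * (D * V) := by rw [hVUD]
      _ = U * D ^ (N+1) * V := by rw [pow_succ]; simp only [Matrix.mul_assoc]
  refine ⟨?_, ?_, ?_⟩
  · intro N i j
    rw [hPN N, hD, Matrix.diagonal_pow, Matrix.mul_apply]
    apply Finset.sum_congr rfl
    intro k _
    rw [Matrix.mul_diagonal]
    simp only [hU, hV, Matrix.of_apply, Pi.pow_apply, ← inv_pow, ← pow_mul]
    ring
  · intro k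
    funext i
    have h1 : P.mulVec (fun i : Fin (ℓ+1) => uEnt p n i k) i = (P * U) i k := by
      simp [Matrix.mulVec, dotProduct, Matrix.mul_apply, hU]
    rw [h1, hPU, Matrix.mul_diagonal]
    simp only [hU, Matrix.of_apply, Pi.smul_apply, smul_eq_mul]
    ring
  · intro k
    funext j
    have hVP : V * P = D * V := by
      rw [hPdec, show U * D * V = U * (D * V) from Matrix.mul_assoc _ _ _, hVUD]
    have h1 : Matrix.vecMul (fun j : Fin (ℓ+1) => vEnt p n k j) P j = (V * P) k j := by
      simp [Matrix.vecMul, dotProduct, Matrix.mul_apply, hV]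
    rw [h1, hVP, Matrix.diagonal_mul]
    simp only [hV, Matrix.of_apply, Pi.smul_apply, smul_eq_mul]
end
end

section
/- Let p ≥ 1, c ≥ 1 be integers and b = pc + 1. Then for every σ ∈ G_{p,n}, the probability that the (b,n,p)-shuffle equals σ is b^{−n} · binom(n + c − d(σ^{−1}), n). -/
open scoped Classical

noncomputable section

/-- The colored permutation group `G_{p,n}`: an element is determined by its permutation
part `σ(·)` and its colors `σ_c(·)`. -/
def GPN (p n : ℕ) : Type := Equiv.Perm (Fin n) × (Fin n → ZMod p)

namespace GPN

variable {p n : ℕ}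

/-- Group law coming from composition of the corresponding bijections of
`{1,…,n} × Z_p`: `(μτ)(i) = μ(τ(i))` and `(μτ)_c(i) = μ_c(τ(i)) + τ_c(i)`. -/
instance : Group (GPN p n) where
  mul a b := (a.1 * b.1, fun i => a.2 (b.1 i) + b.2 i)
  one := (1, fun _ => 0)
  inv a := (a.1⁻¹, fun i => -a.2 (a.1⁻¹ i))
  mul_assoc a b c := Prod.ext (mul_assoc _ _ _) (funext fun i => add_assoc _ _ _)
  one_mul a := Prod.ext (one_mul _) (funext fun i => zero_add _)
  mul_one a := Prod.ext (mul_one _) (funext fun i => add_zero _)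
  inv_mul_cancel a := Prod.ext (inv_mul_cancel _)
    (funext fun i => by
      show -a.2 (a.1⁻¹ (a.1 i)) + a.2 i = 0
      rw [← Equiv.Perm.mul_apply, inv_mul_cancel, Equiv.Perm.one_apply]
      exact neg_add_cancel _)

instance [NeZero p] : Fintype (GPN p n) := by unfold GPN; infer_instance

instance : DecidableEq (GPN p n) := by unfold GPN; infer_instance

end GPN

/-- The pair `(σ(i), σ_c(i)) ∈ {1,…,n} × Z_p`. -/
def gpnPair {p n : ℕ} (σ : GPN p n) (i : Fin n) : ℕ × ZMod p :=
  ((σ.1 i : ℕ) + 1, σ.2 i)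

/-- `σ ∈ G_{p,n}` has a d-descent at position `i+1` (positions are `1,…,n`):
for positions `< n` this means `(σ(i),σ_c(i)) > (σ(i+1),σ_c(i+1))`,
and at position `n` it means `σ_c(n) ≠ 0`. -/
def gpnHasDDescentAt {p n : ℕ} (σ : GPN p n) (i : Fin n) : Prop :=
  if h : (i : ℕ) + 1 < n then
    sigmaLt p (gpnPair σ ⟨(i : ℕ) + 1, h⟩) (gpnPair σ i)
  else σ.2 i ≠ 0

/-- `d(σ)`, the number of d-descents of `σ ∈ G_{p,n}`. -/
def dNum {p n : ℕ} (σ : GPN p n) : ℕ :=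
  (Finset.univ.filter fun i : Fin n => gpnHasDDescentAt σ i).card

/-- The labels `A` produce the element `σ ∈ G_{p,n}` under the `(b,n,p)`-shuffle. -/
def shuffleEq (p : ℕ) {n b : ℕ} (A : Fin n → Fin b) (σ : GPN p n) : Prop :=
  (∀ i, shufflePos A i = (σ.1 i : ℕ) + 1) ∧ (∀ i, shuffleCol p A i = σ.2 i)

/-- The probability that the `(b,n,p)`-shuffle equals `σ ∈ G_{p,n}`. -/
def shuffleProb (p : ℕ) (n b : ℕ) (σ : GPN p n) : ℝ :=
  ((Finset.univ.filter fun A : Fin n → Fin b => shuffleEq p A σ).card : ℝ) / (b : ℝ) ^ n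

theorem Equiv.Perm.inv_apply_self {α : Type*} (f : Equiv.Perm α) (x : α) : f⁻¹ (f x) = x :=
  f.symm_apply_apply x

theorem Equiv.Perm.apply_inv_self {α : Type*} (f : Equiv.Perm α) (x : α) : f (f⁻¹ x) = x :=
  f.apply_symm_apply x


namespace Stmt16Aux

open Finset

variable {p : ℕ} [NeZero p]

lemma hp0 : 0 < p := Nat.pos_of_ne_zero (NeZero.ne p)

lemma rho_lt (r : ZMod p) : rho p r < p := by
  have h2 : 0 < p := hp0
  unfold rho; split
  · exact h2
  · have h1 : 0 < r.val := ZMod.val_pos.2 (by assumption)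
    omega

lemma rho_zero : rho p (0 : ZMod p) = 0 := by
  unfold rho; rw [if_pos rfl]

lemma rho_ne {r : ZMod p} (h : r ≠ 0) : rho p r = p - r.val := by
  unfold rho; rw [if_neg h]

lemma rho_pos {r : ZMod p} (h : r ≠ 0) : 0 < rho p r := by
  rw [rho_ne h]
  have h1 := r.val_lt; omega

lemma rho_neg (r : ZMod p) : rho p (-r) = r.val := by
  unfold rho
  rcases eq_or_ne r 0 with h | h
  · simp [h]
  · rw [if_neg (fun hh => h (neg_eq_zero.mp hh)), ZMod.neg_val, if_neg h]
    have h1 := r.val_lt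
    have h2 : 0 < r.val := ZMod.val_pos.2 h
    omega

lemma cmp_lt {l l' f f' B B' : ℕ} (hf : f < p) (hf' : f' < p)
    (h : B + f = p * l) (h' : B' + f' = p * l') :
    B < B' ↔ (l < l' ∨ (l = l' ∧ f' < f)) := by
  constructor
  · intro hB
    rcases lt_trichotomy l l' with h1 | h1 | h1
    · exact Or.inl h1
    · subst h1; exact Or.inr ⟨rfl, by omega⟩
    · exfalso
      have h2 : p * (l' + 1) ≤ p * l := Nat.mul_le_mul_left p h1
      rw [Nat.mul_add, Nat.mul_one] at h2
      omega
  · rintro (h1 | ⟨rfl, h2⟩)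
    · have h2 : p * (l + 1) ≤ p * l' := Nat.mul_le_mul_left p h1
      rw [Nat.mul_add, Nat.mul_one] at h2
      omega
    · omega

lemma cmp_eq {l l' f f' B B' : ℕ} (hf : f < p) (hf' : f' < p)
    (h : B + f = p * l) (h' : B' + f' = p * l') :
    B = B' ↔ (l = l' ∧ f = f') := by
  have c1 := cmp_lt hf hf' h h'
  have c2 := cmp_lt hf' hf h' h
  constructor
  · intro e
    rcases lt_trichotomy l l' with h1 | h1 | h1
    · exact absurd (c1.2 (Or.inl h1)) (by omega)
    · subst h1; exact ⟨rfl, by omega⟩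
    · exact absurd (c2.2 (Or.inl h1)) (by omega)
  · rintro ⟨rfl, rfl⟩; omega

lemma crux {r1 r2 : ZMod p} {t1 t2 : ℕ} (ht : t1 ≠ t2)
    {l1 l2 B1 B2 : ℕ} (h1 : B1 + rho p r1 = p * l1) (h2 : B2 + rho p r2 = p * l2) :
    (B1 < B2 ∨ (B1 = B2 ∧ t1 < t2)) ↔
      l1 + (if r2 = 0 then 0 else 1) +
        (if (r2.val < r1.val ∨ (r1.val = r2.val ∧ t2 < t1)) then 1 else 0)
      ≤ l2 + (if r1 = 0 then 0 else 1) := by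
  have c1 := cmp_lt (rho_lt r1) (rho_lt r2) h1 h2
  have ceq := cmp_eq (rho_lt r1) (rho_lt r2) h1 h2
  have hvl1 := r1.val_lt
  have hvl2 := r2.val_lt
  have hpp : 0 < p := hp0
  by_cases e1 : r1 = 0 <;> by_cases e2 : r2 = 0
  · have u1 : r1.val = 0 := by rw [e1]; exact ZMod.val_zero
    have u2 : r2.val = 0 := by rw [e2]; exact ZMod.val_zero
    rw [e1, e2, rho_zero] at c1 ceq
    rw [if_pos e1, if_pos e2, u1, u2]
    split_ifs with hD <;> omega
  · have u1 : r1.val = 0 := by rw [e1]; exact ZMod.val_zero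
    have u2 : 0 < r2.val := ZMod.val_pos.2 e2
    rw [e1, rho_zero, rho_ne e2] at c1 ceq
    rw [if_pos e1, if_neg e2, u1]
    split_ifs with hD <;> omega
  · have u1 : 0 < r1.val := ZMod.val_pos.2 e1
    have u2 : r2.val = 0 := by rw [e2]; exact ZMod.val_zero
    rw [e2, rho_zero, rho_ne e1] at c1 ceq
    rw [if_neg e1, if_pos e2, u2]
    split_ifs with hD <;> omega
  · have u1 : 0 < r1.val := ZMod.val_pos.2 e1
    have u2 : 0 < r2.val := ZMod.val_pos.2 e2
    rw [rho_ne e1, rho_ne e2] at c1 ceq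
    rw [if_neg e1, if_neg e2]
    split_ifs with hD <;> omega


section Descents

variable {n : ℕ} (σ : GPN p (n + 1))

/-- residue of the value placed at rank `k`. -/
def res (k : Fin (n + 1)) : ZMod p := σ.2 (σ.1⁻¹ k)

def vv (k : Fin (n + 1)) : ℕ := if res σ k = 0 then 0 else 1

def DI (k : Fin (n + 1)) : ℕ := if gpnHasDDescentAt σ⁻¹ k then 1 else 0

def Dlt (k : Fin (n + 1)) : ℕ :=
  (univ.filter fun j => j < k ∧ gpnHasDDescentAt σ⁻¹ j).card

lemma inv_fst : (σ⁻¹).1 = σ.1⁻¹ := rfl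

lemma inv_snd (k : Fin (n + 1)) : (σ⁻¹).2 k = -σ.2 (σ.1⁻¹ k) := rfl

lemma dsc_castSucc (i : Fin n) :
    gpnHasDDescentAt σ⁻¹ i.castSucc ↔
      ((res σ i.succ).val < (res σ i.castSucc).val ∨
        ((res σ i.castSucc).val = (res σ i.succ).val ∧
          ((σ.1⁻¹ i.succ : ℕ) < (σ.1⁻¹ i.castSucc : ℕ)))) := by
  unfold gpnHasDDescentAt
  have h : ((i.castSucc : Fin (n+1)) : ℕ) + 1 < n + 1 := by
    simp only [Fin.coe_castSucc]; exact Nat.add_lt_add_right i.isLt 1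
  rw [dif_pos h]
  have he : (⟨((i.castSucc : Fin (n+1)) : ℕ) + 1, h⟩ : Fin (n + 1)) = i.succ := rfl
  rw [he]
  unfold sigmaLt gpnPair
  simp only [inv_fst, inv_snd, rho_neg]
  show ((σ.2 (σ.1⁻¹ i.succ)).val < (σ.2 (σ.1⁻¹ i.castSucc)).val ∨ _) ↔ _
  unfold res
  constructor
  · rintro (h1 | ⟨h1, h2⟩)
    · exact Or.inl h1
    · exact Or.inr ⟨h1.symm, by omega⟩
  · rintro (h1 | ⟨h1, h2⟩)
    · exact Or.inl h1
    · exact Or.inr ⟨h1.symm, by omega⟩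

lemma dsc_last :
    gpnHasDDescentAt σ⁻¹ (Fin.last n) ↔ res σ (Fin.last n) ≠ 0 := by
  unfold gpnHasDDescentAt
  rw [dif_neg (by simp)]
  rw [inv_snd]
  unfold res
  simp [neg_eq_zero]

lemma DI_last : DI σ (Fin.last n) = vv σ (Fin.last n) := by
  unfold DI vv
  by_cases h : res σ (Fin.last n) = 0
  · rw [if_pos h, if_neg (fun hd => ((dsc_last σ).1 hd) h)]
  · rw [if_neg h, if_pos ((dsc_last σ).2 h)]

lemma Dlt_zero : Dlt σ 0 = 0 := by
  unfold Dlt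
  rw [card_eq_zero, filter_eq_empty_iff]
  intro j _
  simp [Fin.not_lt_zero]

lemma Dlt_succ (i : Fin n) :
    Dlt σ i.succ = Dlt σ i.castSucc + DI σ i.castSucc := by
  unfold Dlt DI
  have key : ∀ j : Fin (n + 1), j < i.succ ↔ (j < i.castSucc ∨ j = i.castSucc) := by
    intro j
    rw [Fin.lt_def, Fin.lt_def, Fin.ext_iff]
    simp only [Fin.val_succ, Fin.coe_castSucc]
    omega
  have hsplit : (univ.filter fun j => j < i.succ ∧ gpnHasDDescentAt σ⁻¹ j)
      = (univ.filter fun j => j < i.castSucc ∧ gpnHasDDescentAt σ⁻¹ j)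
        ∪ (univ.filter fun j => j = i.castSucc ∧ gpnHasDDescentAt σ⁻¹ j) := by
    ext j
    simp only [mem_filter, mem_union, mem_univ, true_and, key j]
    tauto
  rw [hsplit, card_union_of_disjoint]
  · congr 1
    by_cases hD : gpnHasDDescentAt σ⁻¹ i.castSucc
    · rw [if_pos hD]
      have : (univ.filter fun j => j = i.castSucc ∧ gpnHasDDescentAt σ⁻¹ j)
          = {i.castSucc} := by
        ext j
        simp only [mem_filter, mem_univ, true_and, mem_singleton]
        constructor
        · rintro ⟨rfl, _⟩; rfl
        · rintro rfl; exact ⟨rfl, hD⟩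
      rw [this, card_singleton]
    · rw [if_neg hD]
      rw [card_eq_zero, filter_eq_empty_iff]
      rintro j _ ⟨rfl, hD'⟩
      exact hD hD'
  · rw [disjoint_left]
    rintro j hj1 hj2
    simp only [mem_filter] at hj1 hj2
    exact absurd hj2.2.1 (ne_of_lt hj1.2.1)

lemma dNum_eq : dNum σ⁻¹ = Dlt σ (Fin.last n) + DI σ (Fin.last n) := by
  unfold dNum Dlt DI
  have hsplit : (univ.filter fun j => gpnHasDDescentAt σ⁻¹ j)
      = (univ.filter fun j => j < Fin.last n ∧ gpnHasDDescentAt σ⁻¹ j)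
        ∪ (univ.filter fun j => j = Fin.last n ∧ gpnHasDDescentAt σ⁻¹ j) := by
    ext j
    have hj : j < Fin.last n ∨ j = Fin.last n := lt_or_eq_of_le (Fin.le_last j)
    simp only [mem_filter, mem_union, mem_univ, true_and]
    rcases hj with h | h
    · constructor
      · intro hD; exact Or.inl ⟨h, hD⟩
      · rintro (⟨_, hD⟩ | ⟨_, hD⟩) <;> exact hD
    · constructor
      · intro hD; exact Or.inr ⟨h, hD⟩
      · rintro (⟨_, hD⟩ | ⟨_, hD⟩) <;> exact hD
  rw [hsplit, card_union_of_disjoint]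
  · congr 1
    by_cases hD : gpnHasDDescentAt σ⁻¹ (Fin.last n)
    · rw [if_pos hD]
      have : (univ.filter fun j => j = Fin.last n ∧ gpnHasDDescentAt σ⁻¹ j)
          = {Fin.last n} := by
        ext j
        simp only [mem_filter, mem_univ, true_and, mem_singleton]
        constructor
        · rintro ⟨rfl, _⟩; rfl
        · rintro rfl; exact ⟨rfl, hD⟩
      rw [this, card_singleton]
    · rw [if_neg hD]
      rw [card_eq_zero, filter_eq_empty_iff]
      rintro j _ ⟨rfl, hD'⟩
      exact hD hD'
  · rw [disjoint_left]
    rintro j hj1 hj2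
    simp only [mem_filter] at hj1 hj2
    exact absurd hj2.2.1 (ne_of_lt hj1.2.1)

lemma claim_vd : ∀ k, Dlt σ k + vv σ k ≤ dNum σ⁻¹ := by
  intro k
  induction k using Fin.reverseInduction with
  | last => rw [dNum_eq σ, DI_last σ]
  | cast i ih =>
    have h1 : vv σ i.castSucc ≤ DI σ i.castSucc + vv σ i.succ := by
      unfold vv DI
      by_cases h2 : res σ i.succ = 0
      · by_cases h3 : res σ i.castSucc = 0
        · simp [h2, h3]
        · have hd : gpnHasDDescentAt σ⁻¹ i.castSucc := by
            refine (dsc_castSucc σ i).2 (Or.inl ?_)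
            rw [h2, ZMod.val_zero]
            exact ZMod.val_pos.2 h3
          rw [if_pos hd]
          split_ifs <;> omega
      · rw [if_neg h2]
        split_ifs <;> omega
    have h2 := Dlt_succ σ i
    omega

end Descents


lemma level_spec {B : ℕ} {r : ZMod p} (h : ((B : ℕ) : ZMod p) = r) :
    B + rho p r = p * ((B + rho p r) / p) := by
  have hpp : 0 < p := hp0
  have hm : B % p = r.val := by rw [← h, ZMod.val_natCast]
  have hd : p ∣ B + rho p r := by
    by_cases e : r = 0
    · rw [e, rho_zero, Nat.add_zero]
      apply Nat.dvd_of_mod_eq_zero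
      rw [hm, e, ZMod.val_zero]
    · rw [rho_ne e]
      have h1 : 0 < r.val := ZMod.val_pos.2 e
      have h2 : r.val < p := r.val_lt
      refine ⟨B / p + 1, ?_⟩
      have hq := Nat.div_add_mod B p
      rw [Nat.mul_add, Nat.mul_one]
      omega
  exact (Nat.mul_div_cancel' hd).symm

lemma cast_of_level {l : ℕ} {r : ZMod p} (hl : (if r = 0 then 0 else 1) ≤ l) :
    ((p * l - rho p r : ℕ) : ZMod p) = r := by
  have hpp : 0 < p := hp0
  by_cases e : r = 0
  · rw [e, rho_zero, Nat.sub_zero, Nat.cast_mul, ZMod.natCast_self, zero_mul]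
  · rw [if_neg e] at hl
    have h1 : 0 < r.val := ZMod.val_pos.2 e
    have h2 : r.val < p := r.val_lt
    have hml : p * l = p * (l - 1) + p := by
      rw [← Nat.mul_succ]
      congr 1
      omega
    have hB : p * l - rho p r = p * (l - 1) + r.val := by
      rw [rho_ne e]
      omega
    rw [hB, Nat.cast_add, Nat.cast_mul, ZMod.natCast_self, zero_mul, zero_add,
      ZMod.natCast_zmod_val]

lemma gap {m : ℕ} {g : Fin (m + 1) → ℕ} (hg : StrictMono g) :
    ∀ k k' : Fin (m + 1), (k : ℕ) ≤ (k' : ℕ) → g k + ((k' : ℕ) - (k : ℕ)) ≤ g k' := by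
  have key : ∀ (j : ℕ) (k k' : Fin (m + 1)), (k' : ℕ) = (k : ℕ) + j → g k + j ≤ g k' := by
    intro j
    induction j with
    | zero =>
      intro k k' h
      have he : k' = k := Fin.ext (by omega)
      rw [he]
      omega
    | succ j ih =>
      intro k k' h
      have hk'' : (k : ℕ) + j < m + 1 := by have := k'.isLt; omega
      have h1 := ih k ⟨(k : ℕ) + j, hk''⟩ rfl
      have h2 : (⟨(k : ℕ) + j, hk''⟩ : Fin (m + 1)) < k' := by
        rw [Fin.lt_def]; simp only []; omega
      have h3 := hg h2
      omega
  intro k k' h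
  have := key ((k' : ℕ) - (k : ℕ)) k k' (by omega)
  omega

lemma enc_lt {N x y u v : ℕ} (hu : u < N) (hv : v < N) :
    (x * N + u < y * N + v) ↔ (x < y ∨ (x = y ∧ u < v)) := by
  constructor
  · intro h
    rcases lt_trichotomy x y with h1 | rfl | h1
    · exact Or.inl h1
    · exact Or.inr ⟨rfl, by omega⟩
    · exfalso
      have h2 : (y + 1) * N ≤ x * N := Nat.mul_le_mul_right N h1
      rw [Nat.add_mul, Nat.one_mul] at h2
      omega
  · rintro (h1 | ⟨rfl, h2⟩)
    · have h2 : (x + 1) * N ≤ y * N := Nat.mul_le_mul_right N h1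
      rw [Nat.add_mul, Nat.one_mul] at h2
      omega
    · omega

lemma enc_le {N x y u v : ℕ} (hu : u < N) (hv : v < N) :
    (x * N + u ≤ y * N + v) ↔ (x < y ∨ (x = y ∧ u ≤ v)) := by
  rw [← Nat.not_lt, enc_lt hv hu]
  constructor
  · intro h
    rcases lt_trichotomy x y with h1 | rfl | h1
    · exact Or.inl h1
    · exact Or.inr ⟨rfl, by omega⟩
    · exact absurd (Or.inl h1) h
  · rintro (h1 | ⟨rfl, h2⟩) <;> rintro (h3 | ⟨h3, h4⟩) <;> omega

section PosChar

variable {n b : ℕ} (π : Equiv.Perm (Fin (n + 1))) (A : Fin (n + 1) → Fin b)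

/-- Adjacency condition: value at rank `i` precedes value at rank `i+1`. -/
def Adj (i : Fin n) : Prop :=
  (A (π⁻¹ i.castSucc) : ℕ) < (A (π⁻¹ i.succ) : ℕ) ∨
    ((A (π⁻¹ i.castSucc) : ℕ) = (A (π⁻¹ i.succ) : ℕ) ∧
      ((π⁻¹ i.castSucc : Fin (n+1)) : ℕ) < ((π⁻¹ i.succ : Fin (n+1)) : ℕ))

lemma pos_char :
    (∀ i, shufflePos A i = (π i : ℕ) + 1) ↔ ∀ i : Fin n, Adj π A i := by
  set F : Fin (n + 1) → ℕ := fun j => (A j : ℕ) * (n + 1) + (j : ℕ) with hF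
  have hFle : ∀ i j : Fin (n + 1),
      (F j ≤ F i) ↔ ((A j : ℕ) < (A i : ℕ) ∨ ((A j : ℕ) = (A i : ℕ) ∧ (j : ℕ) ≤ (i : ℕ))) :=
    fun i j => enc_le j.isLt i.isLt
  have hFlt : ∀ i j : Fin (n + 1),
      (F j < F i) ↔ ((A j : ℕ) < (A i : ℕ) ∨ ((A j : ℕ) = (A i : ℕ) ∧ (j : ℕ) < (i : ℕ))) :=
    fun i j => enc_lt j.isLt i.isLt
  have hPos : ∀ i, shufflePos A i = (univ.filter fun j => F j ≤ F i).card := by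
    intro i
    unfold shufflePos
    congr 1
    apply filter_congr
    intro j _
    rw [hFle i j, Fin.lt_def, Fin.le_def, Fin.ext_iff]
  constructor
  · intro hA i
    by_contra hno
    unfold Adj at hno
    push_neg at hno
    have hne : π⁻¹ i.castSucc ≠ π⁻¹ i.succ := by
      intro h
      have := π⁻¹.injective h
      exact absurd this (Fin.castSucc_lt_succ (i := i)).ne
    have hLE : F (π⁻¹ i.succ) ≤ F (π⁻¹ i.castSucc) := by
      rw [hFle]
      rcases lt_or_eq_of_le hno.1 with h1 | h1
      · exact Or.inl h1
      · exact Or.inr ⟨h1, hno.2 h1.symm⟩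
    have hsub : (univ.filter fun j => F j ≤ F (π⁻¹ i.succ))
        ⊆ (univ.filter fun j => F j ≤ F (π⁻¹ i.castSucc)) := by
      intro j hj
      simp only [mem_filter, mem_univ, true_and] at hj ⊢
      exact le_trans hj hLE
    have hcard := card_le_card hsub
    rw [← hPos, ← hPos, hA, hA, Equiv.Perm.apply_inv_self, Equiv.Perm.apply_inv_self] at hcard
    simp only [Fin.val_succ, Fin.coe_castSucc] at hcard
    omega
  · intro hAdj i
    have hG : StrictMono (fun k => F (π⁻¹ k)) := by
      rw [Fin.strictMono_iff_lt_succ]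
      intro i
      rw [hFlt]
      rcases hAdj i with h1 | ⟨h1, h2⟩
      · exact Or.inl h1
      · exact Or.inr ⟨h1, h2⟩
    have hval : ∀ j : Fin (n + 1), F j ≤ F i ↔ π j ≤ π i := by
      intro j
      have h2 := hG.le_iff_le (a := π j) (b := π i)
      simp only [Equiv.Perm.inv_apply_self] at h2
      exact h2
    rw [hPos]
    have : (univ.filter fun j => F j ≤ F i) = (univ.filter fun j => π j ≤ π i) := by
      apply filter_congr
      intro j _
      rw [hval j]
    rw [this]
    have hbij : (univ.filter fun j => π j ≤ π i).card = (Finset.Iic (π i)).card := by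
      apply card_bij (fun j _ => π j)
      · intro j hj
        simp only [mem_filter, mem_univ, true_and] at hj
        exact Finset.mem_Iic.2 hj
      · intro j1 h1 j2 h2 he
        exact π.injective he
      · intro x hx
        refine ⟨π⁻¹ x, ?_, Equiv.Perm.apply_inv_self π x⟩
        simp only [mem_filter, mem_univ, true_and, Equiv.Perm.apply_inv_self]
        exact Finset.mem_Iic.1 hx
    rw [hbij, Fin.card_Iic]

end PosChar


/-- The set of level sequences: monotone, bounded. -/
def Mset (n c d : ℕ) : Finset (Fin (n + 1) → ℕ) :=
  (Fintype.piFinset fun _ => Finset.range (c + 1)).filter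
    (fun m => Monotone m ∧ ∀ k, m k + d ≤ c)

lemma card_Mset (n c d : ℕ) :
    (Mset n c d).card = (n + 1 + c - d).choose (n + 1) := by
  by_cases hdc : d ≤ c
  · have hch : (n + 1 + c - d).choose (n + 1)
        = (Finset.powersetCard (n + 1) (Finset.range (c - d + (n + 1)))).card := by
      rw [Finset.card_powersetCard, Finset.card_range]
      congr 1
      omega
    rw [hch]
    unfold Mset
    refine Finset.card_bij'
      (fun m _ => Finset.image (fun k : Fin (n + 1) => m k + (k : ℕ)) univ)
      (fun s hs => fun k : Fin (n + 1) =>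
        (s.orderEmbOfFin (Finset.mem_powersetCard.1 hs).2 k : ℕ) - (k : ℕ)) ?_ ?_ ?_ ?_
    · intro m hm
      simp only [mem_filter, Fintype.mem_piFinset, Finset.mem_range] at hm
      obtain ⟨hpi, hmono, hbd⟩ := hm
      have hst : StrictMono (fun k : Fin (n + 1) => m k + (k : ℕ)) := by
        intro a b hab
        have h1 := hmono hab.le
        have h2 : (a : ℕ) < (b : ℕ) := hab
        show m a + (a : ℕ) < m b + (b : ℕ)
        omega
      rw [Finset.mem_powersetCard]
      constructor
      · intro x hx
        rw [Finset.mem_image] at hx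
        obtain ⟨k, _, rfl⟩ := hx
        rw [Finset.mem_range]
        have h1 := hbd k
        have h2 := k.isLt
        omega
      · rw [Finset.card_image_of_injective _ hst.injective, card_univ, Fintype.card_fin]
    · intro s hs
      have hcard := (Finset.mem_powersetCard.1 hs).2
      have hsub := (Finset.mem_powersetCard.1 hs).1
      show (fun k : Fin (n + 1) => (s.orderEmbOfFin hcard k : ℕ) - (k : ℕ)) ∈ _
      set E := s.orderEmbOfFin hcard with hE
      have hEst : StrictMono fun k => (E k : ℕ) := (s.orderEmbOfFin hcard).strictMono
      have hmem : ∀ k, (E k : ℕ) < c - d + (n + 1) := by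
        intro k
        have : E k ∈ s := Finset.orderEmbOfFin_mem s hcard k
        have := hsub this
        rwa [Finset.mem_range] at this
      have hge : ∀ k : Fin (n + 1), (k : ℕ) ≤ E k := by
        intro k
        have h := gap hEst 0 k (Nat.zero_le _)
        simp only [Fin.val_zero, Nat.sub_zero] at h
        omega
      have hgap := gap hEst
      have htop : ∀ k : Fin (n + 1), (E k : ℕ) - (k : ℕ) ≤ c - d := by
        intro k
        have h1 := hgap k (Fin.last n) (by simp only [Fin.val_last]; exact Nat.lt_succ_iff.1 k.isLt)
        have h2 := hmem (Fin.last n)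
        have h3 := k.isLt
        simp only [Fin.val_last] at h1
        omega
      simp only [mem_filter, Fintype.mem_piFinset, Finset.mem_range]
      refine ⟨fun k => by have := htop k; omega, ?_, ?_⟩
      · intro a b hab
        have h1 := hgap a b hab
        have h2 : (a : ℕ) ≤ (b : ℕ) := hab
        show (E a : ℕ) - (a : ℕ) ≤ (E b : ℕ) - (b : ℕ)
        omega
      · intro k
        have := htop k
        omega
    · intro m hm
      simp only [mem_filter, Fintype.mem_piFinset, Finset.mem_range] at hm
      obtain ⟨hpi, hmono, hbd⟩ := hm
      have hst : StrictMono (fun k : Fin (n + 1) => m k + (k : ℕ)) := by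
        intro a b hab
        have h1 := hmono hab.le
        have h2 : (a : ℕ) < (b : ℕ) := hab
        show m a + (a : ℕ) < m b + (b : ℕ)
        omega
      have hc : (Finset.image (fun k : Fin (n + 1) => m k + (k : ℕ)) univ).card = n + 1 := by
        rw [Finset.card_image_of_injective _ hst.injective, card_univ, Fintype.card_fin]
      have hun := Finset.orderEmbOfFin_unique
        (s := Finset.image (fun k : Fin (n + 1) => m k + (k : ℕ)) univ)
        (f := fun k : Fin (n + 1) => m k + (k : ℕ)) hc
        (fun x => Finset.mem_image_of_mem _ (mem_univ x)) hst
      funext k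
      show ((Finset.image (fun k : Fin (n + 1) => m k + (k : ℕ)) univ).orderEmbOfFin hc k : ℕ)
          - (k : ℕ) = m k
      rw [← congrFun hun k]
      show m k + (k : ℕ) - (k : ℕ) = m k
      omega
    · intro s hs
      have hcard := (Finset.mem_powersetCard.1 hs).2
      show Finset.image
          (fun k : Fin (n + 1) => ((s.orderEmbOfFin hcard k : ℕ) - (k : ℕ)) + (k : ℕ)) univ = s
      set E := s.orderEmbOfFin hcard with hE
      have hEst : StrictMono fun k => (E k : ℕ) := (s.orderEmbOfFin hcard).strictMono
      have hge : ∀ k : Fin (n + 1), (k : ℕ) ≤ E k := by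
        intro k
        have h := gap hEst 0 k (Nat.zero_le _)
        simp only [Fin.val_zero, Nat.sub_zero] at h
        omega
      ext x
      rw [Finset.mem_image]
      constructor
      · rintro ⟨k, _, rfl⟩
        have h1 := hge k
        have h2 : (E k : ℕ) - (k : ℕ) + (k : ℕ) = E k := by omega
        rw [h2]
        exact Finset.orderEmbOfFin_mem s hcard k
      · intro hx
        have : x ∈ Set.range (s.orderEmbOfFin hcard) := by
          rw [Finset.range_orderEmbOfFin]
          exact hx
        obtain ⟨k, hk⟩ := this
        refine ⟨k, mem_univ k, ?_⟩
        have h1 := hge k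
        have h2 : (E k : ℕ) = x := hk
        omega
  · have h1 : (Mset n c d).card = 0 := by
      rw [Finset.card_eq_zero]
      unfold Mset
      rw [filter_eq_empty_iff]
      intro m _
      rintro ⟨hmono, hbd⟩
      have := hbd 0
      omega
    rw [h1]
    have h2 : n + 1 + c - d < n + 1 ∨ d > n + 1 + c := by omega
    rcases h2 with h2 | h2
    · exact (Nat.choose_eq_zero_of_lt h2).symm
    · exact (Nat.choose_eq_zero_of_lt (by omega)).symm


section Main

variable {n c : ℕ} (σ : GPN p (n + 1))

lemma forward_facts (A : Fin (n + 1) → Fin (p * c + 1)) (hA : shuffleEq p A σ) :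
    (∀ k, (A (σ.1⁻¹ k) : ℕ) + rho p (res σ k)
        = p * (((A (σ.1⁻¹ k) : ℕ) + rho p (res σ k)) / p)) ∧
    (∀ k, vv σ k + Dlt σ k ≤ ((A (σ.1⁻¹ k) : ℕ) + rho p (res σ k)) / p) ∧
    (∀ i : Fin n, (((A (σ.1⁻¹ i.castSucc) : ℕ) + rho p (res σ i.castSucc)) / p)
        + vv σ i.succ + DI σ i.castSucc
        ≤ (((A (σ.1⁻¹ i.succ) : ℕ) + rho p (res σ i.succ)) / p) + vv σ i.castSucc) ∧
    (∀ k, ((A (σ.1⁻¹ k) : ℕ) + rho p (res σ k)) / p ≤ c) := by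
  have hpp : 0 < p := hp0
  set L : Fin (n + 1) → ℕ := fun k => ((A (σ.1⁻¹ k) : ℕ) + rho p (res σ k)) / p with hL
  obtain ⟨hpos, hcol⟩ := hA
  have hres : ∀ k, (((A (σ.1⁻¹ k) : ℕ)) : ZMod p) = res σ k := fun k => hcol (σ.1⁻¹ k)
  have h1 : ∀ k, (A (σ.1⁻¹ k) : ℕ) + rho p (res σ k) = p * L k := fun k => level_spec (hres k)
  have hBub : ∀ k, (A (σ.1⁻¹ k) : ℕ) ≤ p * c := fun k => Nat.lt_succ_iff.1 (A _).isLt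
  have h4 : ∀ k, L k ≤ c := by
    intro k
    by_contra hcon
    have hmul : p * (c + 1) ≤ p * L k := Nat.mul_le_mul_left p (by omega)
    rw [Nat.mul_succ] at hmul
    have e1 := h1 k
    have e2 := rho_lt (res σ k)
    have e3 := hBub k
    omega
  have h3 : ∀ i : Fin n, L i.castSucc + vv σ i.succ + DI σ i.castSucc
      ≤ L i.succ + vv σ i.castSucc := by
    intro i
    have hadj := (pos_char σ.1 A).1 hpos i
    unfold Adj at hadj
    have ht : ((σ.1⁻¹ i.castSucc : Fin (n + 1)) : ℕ) ≠ ((σ.1⁻¹ i.succ : Fin (n + 1)) : ℕ) := by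
      intro h
      exact (Fin.castSucc_lt_succ (i := i)).ne (σ.1⁻¹.injective (Fin.ext h))
    have hcx := (crux ht (h1 i.castSucc) (h1 i.succ)).1 hadj
    have hDI : DI σ i.castSucc =
        (if ((res σ i.succ).val < (res σ i.castSucc).val ∨
            ((res σ i.castSucc).val = (res σ i.succ).val ∧
              ((σ.1⁻¹ i.succ : Fin (n + 1)) : ℕ) < ((σ.1⁻¹ i.castSucc : Fin (n + 1)) : ℕ)))
          then 1 else 0) := by
      unfold DI
      by_cases hd : gpnHasDDescentAt σ⁻¹ i.castSucc
      · rw [if_pos hd, if_pos ((dsc_castSucc σ i).1 hd)]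
      · rw [if_neg hd, if_neg (fun hcond => hd ((dsc_castSucc σ i).2 hcond))]
    unfold vv
    rw [hDI]
    exact hcx
  have h2 : ∀ k, vv σ k + Dlt σ k ≤ L k := by
    intro k
    induction k using Fin.induction with
    | zero =>
      rw [Dlt_zero]
      unfold vv
      by_cases e : res σ 0 = 0
      · rw [if_pos e]
        omega
      · rw [if_neg e]
        have hr := rho_pos e
        have e1 := h1 0
        by_contra hcon
        have hL0 : L 0 = 0 := by omega
        rw [hL0, Nat.mul_zero] at e1
        omega
    | succ i ih =>
      have e1 := h3 i
      have e2 := Dlt_succ σ i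
      omega
  exact ⟨h1, h2, h3, h4⟩

lemma backward_facts (m : Fin (n + 1) → ℕ) (hmono : Monotone m)
    (hbd : ∀ k, m k + dNum σ⁻¹ ≤ c) :
    (∀ k, rho p (res σ k) + (p * (m k + vv σ k + Dlt σ k)
          - rho p (res σ k)) = p * (m k + vv σ k + Dlt σ k)) ∧
    (∀ k, p * (m k + vv σ k + Dlt σ k) - rho p (res σ k) ≤ p * c) ∧
    (∀ k, ((p * (m k + vv σ k + Dlt σ k) - rho p (res σ k) : ℕ) : ZMod p) = res σ k) := by
  have hpp : 0 < p := hp0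
  have hlev : ∀ k, m k + vv σ k + Dlt σ k ≤ c := by
    intro k
    have e1 := claim_vd σ k
    have e2 := hbd k
    omega
  have hvle : ∀ k, (if res σ k = 0 then 0 else 1) ≤ m k + vv σ k + Dlt σ k := by
    intro k
    unfold vv
    split_ifs <;> omega
  have hrle : ∀ k, rho p (res σ k) ≤ p * (m k + vv σ k + Dlt σ k) := by
    intro k
    by_cases e : res σ k = 0
    · rw [e, rho_zero]
      omega
    · have h1 : 1 ≤ m k + vv σ k + Dlt σ k := by
        have := hvle k
        rwa [if_neg e] at this
      have h2 : p * 1 ≤ p * (m k + vv σ k + Dlt σ k) := Nat.mul_le_mul_left p h1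
      rw [Nat.mul_one] at h2
      have h3 := rho_lt (res σ k)
      omega
  refine ⟨fun k => by have := hrle k; omega, ?_, ?_⟩
  · intro k
    have h1 : p * (m k + vv σ k + Dlt σ k) ≤ p * c := Nat.mul_le_mul_left p (hlev k)
    omega
  · intro k
    exact cast_of_level (hvle k)

lemma backward_shuffleEq (m : Fin (n + 1) → ℕ) (hmono : Monotone m)
    (hbd : ∀ k, m k + dNum σ⁻¹ ≤ c) :
    shuffleEq p (fun idx : Fin (n + 1) =>
      (⟨min (p * (m (σ.1 idx) + vv σ (σ.1 idx) + Dlt σ (σ.1 idx))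
          - rho p (res σ (σ.1 idx))) (p * c),
        Nat.lt_succ_of_le (Nat.min_le_right _ _)⟩ : Fin (p * c + 1))) σ := by
  obtain ⟨b1, b2, b3⟩ := backward_facts σ m hmono hbd
  set A : Fin (n + 1) → Fin (p * c + 1) := fun idx =>
    (⟨min (p * (m (σ.1 idx) + vv σ (σ.1 idx) + Dlt σ (σ.1 idx))
        - rho p (res σ (σ.1 idx))) (p * c),
      Nat.lt_succ_of_le (Nat.min_le_right _ _)⟩ : Fin (p * c + 1)) with hA
  have hval : ∀ idx, (A idx : ℕ)
      = p * (m (σ.1 idx) + vv σ (σ.1 idx) + Dlt σ (σ.1 idx)) - rho p (res σ (σ.1 idx)) := by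
    intro idx
    show min (p * (m (σ.1 idx) + vv σ (σ.1 idx) + Dlt σ (σ.1 idx))
        - rho p (res σ (σ.1 idx))) (p * c)
      = p * (m (σ.1 idx) + vv σ (σ.1 idx) + Dlt σ (σ.1 idx)) - rho p (res σ (σ.1 idx))
    exact min_eq_left (b2 (σ.1 idx))
  constructor
  · rw [pos_char]
    intro i
    unfold Adj
    simp only [hval, Equiv.Perm.apply_inv_self]
    have ht : ((σ.1⁻¹ i.castSucc : Fin (n + 1)) : ℕ) ≠ ((σ.1⁻¹ i.succ : Fin (n + 1)) : ℕ) := by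
      intro h
      exact (Fin.castSucc_lt_succ (i := i)).ne (σ.1⁻¹.injective (Fin.ext h))
    have hcx := crux ht
      (by have := b1 i.castSucc; omega :
        (p * (m i.castSucc + vv σ i.castSucc + Dlt σ i.castSucc)
          - rho p (res σ i.castSucc)) + rho p (res σ i.castSucc)
        = p * (m i.castSucc + vv σ i.castSucc + Dlt σ i.castSucc))
      (by have := b1 i.succ; omega :
        (p * (m i.succ + vv σ i.succ + Dlt σ i.succ) - rho p (res σ i.succ))
          + rho p (res σ i.succ) = p * (m i.succ + vv σ i.succ + Dlt σ i.succ))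
    refine hcx.2 ?_
    have hDI : DI σ i.castSucc =
        (if ((res σ i.succ).val < (res σ i.castSucc).val ∨
            ((res σ i.castSucc).val = (res σ i.succ).val ∧
              ((σ.1⁻¹ i.succ : Fin (n + 1)) : ℕ) < ((σ.1⁻¹ i.castSucc : Fin (n + 1)) : ℕ)))
          then 1 else 0) := by
      unfold DI
      by_cases hd : gpnHasDDescentAt σ⁻¹ i.castSucc
      · rw [if_pos hd, if_pos ((dsc_castSucc σ i).1 hd)]
      · rw [if_neg hd, if_neg (fun hcond => hd ((dsc_castSucc σ i).2 hcond))]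
    rw [← hDI]
    have e1 : m i.castSucc ≤ m i.succ := hmono (Fin.castSucc_lt_succ (i := i)).le
    have e2 := Dlt_succ σ i
    show m i.castSucc + vv σ i.castSucc + Dlt σ i.castSucc +
        (if res σ i.succ = 0 then 0 else 1) + DI σ i.castSucc
      ≤ m i.succ + vv σ i.succ + Dlt σ i.succ + (if res σ i.castSucc = 0 then 0 else 1)
    unfold vv at *
    omega
  · intro idx
    show (((A idx : ℕ)) : ZMod p) = σ.2 idx
    rw [hval idx, b3 (σ.1 idx)]
    unfold res
    rw [Equiv.Perm.inv_apply_self]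

lemma card_main :
    (univ.filter fun A : Fin (n + 1) → Fin (p * c + 1) => shuffleEq p A σ).card
      = (Mset n c (dNum σ⁻¹)).card := by
  have hpp : 0 < p := hp0
  refine Finset.card_bij'
    (fun A _ => fun k : Fin (n + 1) =>
      ((A (σ.1⁻¹ k) : ℕ) + rho p (res σ k)) / p - (vv σ k + Dlt σ k))
    (fun m _ => fun idx : Fin (n + 1) =>
      (⟨min (p * (m (σ.1 idx) + vv σ (σ.1 idx) + Dlt σ (σ.1 idx))
          - rho p (res σ (σ.1 idx))) (p * c),
        Nat.lt_succ_of_le (Nat.min_le_right _ _)⟩ : Fin (p * c + 1)))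
    ?_ ?_ ?_ ?_
  -- hi
  · intro A hA
    obtain ⟨h1, h2, h3, h4⟩ := forward_facts σ A (mem_filter.1 hA).2
    have hmono : Monotone (fun k : Fin (n + 1) =>
        ((A (σ.1⁻¹ k) : ℕ) + rho p (res σ k)) / p - (vv σ k + Dlt σ k)) := by
      rw [Fin.monotone_iff_le_succ]
      intro i
      show ((A (σ.1⁻¹ i.castSucc) : ℕ) + rho p (res σ i.castSucc)) / p
          - (vv σ i.castSucc + Dlt σ i.castSucc)
        ≤ ((A (σ.1⁻¹ i.succ) : ℕ) + rho p (res σ i.succ)) / p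
          - (vv σ i.succ + Dlt σ i.succ)
      have e1 := h3 i
      have e2 := Dlt_succ σ i
      have e3 := h2 i.castSucc
      have e4 := h2 i.succ
      omega
    unfold Mset
    rw [mem_filter]
    refine ⟨Fintype.mem_piFinset.2 ?_, hmono, ?_⟩
    · intro k
      show ((A (σ.1⁻¹ k) : ℕ) + rho p (res σ k)) / p - (vv σ k + Dlt σ k) ∈ Finset.range (c + 1)
      rw [Finset.mem_range]
      have := h4 k
      omega
    · intro k
      show ((A (σ.1⁻¹ k) : ℕ) + rho p (res σ k)) / p - (vv σ k + Dlt σ k) + dNum σ⁻¹ ≤ c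
      have e0 := hmono (Fin.le_last k)
      simp only at e0
      have e1 := dNum_eq σ
      have e2 := DI_last σ
      have e3 := h2 (Fin.last n)
      have e4 := h4 (Fin.last n)
      omega
  -- hj
  · intro m hm
    have hmem := mem_filter.1 hm
    obtain ⟨hmono, hbd⟩ := hmem.2
    rw [mem_filter]
    exact ⟨mem_univ _, backward_shuffleEq σ m hmono hbd⟩
  -- left_inv
  · intro A hA
    obtain ⟨h1, h2, h3, h4⟩ := forward_facts σ A (mem_filter.1 hA).2
    funext idx
    apply Fin.ext
    show min (p * ((((A (σ.1⁻¹ (σ.1 idx)) : ℕ) + rho p (res σ (σ.1 idx))) / p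
          - (vv σ (σ.1 idx) + Dlt σ (σ.1 idx))) + vv σ (σ.1 idx) + Dlt σ (σ.1 idx))
        - rho p (res σ (σ.1 idx))) (p * c) = (A idx : ℕ)
    set k := σ.1 idx with hk
    have e1 : (((A (σ.1⁻¹ k) : ℕ) + rho p (res σ k)) / p - (vv σ k + Dlt σ k))
        + vv σ k + Dlt σ k = ((A (σ.1⁻¹ k) : ℕ) + rho p (res σ k)) / p := by
      have := h2 k
      omega
    rw [e1]
    have e2 : p * (((A (σ.1⁻¹ k) : ℕ) + rho p (res σ k)) / p) - rho p (res σ k)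
        = (A (σ.1⁻¹ k) : ℕ) := by
      have := h1 k
      omega
    rw [e2, hk, Equiv.Perm.inv_apply_self]
    exact min_eq_left (Nat.lt_succ_iff.1 (A idx).isLt)
  -- right_inv
  · intro m hm
    have hmem := mem_filter.1 hm
    obtain ⟨hmono, hbd⟩ := hmem.2
    obtain ⟨b1, b2, b3⟩ := backward_facts σ m hmono hbd
    funext k
    show ((min (p * (m (σ.1 (σ.1⁻¹ k)) + vv σ (σ.1 (σ.1⁻¹ k)) + Dlt σ (σ.1 (σ.1⁻¹ k)))
          - rho p (res σ (σ.1 (σ.1⁻¹ k)))) (p * c) : ℕ) + rho p (res σ k)) / p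
        - (vv σ k + Dlt σ k) = m k
    rw [Equiv.Perm.apply_inv_self]
    have hmin : min (p * (m k + vv σ k + Dlt σ k) - rho p (res σ k)) (p * c)
        = p * (m k + vv σ k + Dlt σ k) - rho p (res σ k) := min_eq_left (b2 k)
    rw [hmin]
    have e1 : p * (m k + vv σ k + Dlt σ k) - rho p (res σ k) + rho p (res σ k)
        = p * (m k + vv σ k + Dlt σ k) := by have := b1 k; omega
    rw [e1, Nat.mul_div_cancel_left _ hpp]
    omega

end Main

end Stmt16Aux

/-- **Lemma.** For `b = pc + 1`, the probability that the `(b,n,p)`-shuffle equals a given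
`σ ∈ G_{p,n}` is `b⁻ⁿ · binom(n + c - d(σ⁻¹), n)`. -/
theorem statement16 (p c n : ℕ) [NeZero p] (hc : 1 ≤ c) (hn : 1 ≤ n)
    (b : ℕ) (hb : b = p * c + 1) (σ : GPN p n) :
    shuffleProb p n b σ = ((b : ℝ) ^ n)⁻¹ * ((n + c - dNum σ⁻¹).choose n : ℝ) := by
  subst hb
  obtain ⟨n', rfl⟩ : ∃ n', n = n' + 1 := ⟨n - 1, by omega⟩
  unfold shuffleProb
  rw [Stmt16Aux.card_main σ, Stmt16Aux.card_Mset]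
  rw [div_eq_mul_inv, mul_comm]
end
end
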